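/- arXiv:math/0207106 — 7 statements merged into one kernel-verified Lean document; each statement's English description precedes it below -/
import Mathlib

section
/- For n \ge 1 and any integer i with 0 < i, the identity (i+1) \binom{n-1}{i} Z^{n-i-1} = \sum_{\emptyset \ne I \subsetneq \{1,...,n\}} \binom{|I|-1}{i-1} Z_I^{|I|-i} (Z - Z_I)^{n-|I|-1} holds as an identity of polynomials in z_1, ..., z_n, where Z = z_1 + ... + z_n and Z_I = \sum_{j \in I} z_j, and where negative powers do not occur since \binom{|I|-1}{i-1} = 0 when |I| < i. -/
section helpers
open Finset Polynomial

lemma alt_sum_pow {R : Type*} [CommRing R] {α : Type*} [DecidableEq α] (s : Finset α)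
    (z : α → R) : ∀ k : ℕ, k < s.card → ∀ w : R,
      ∑ I ∈ s.powerset, (-1 : R) ^ I.card * (w + ∑ j ∈ I, z j) ^ k = 0 := by
  induction s using Finset.induction_on with
  | empty => intro k hk; simp at hk
  | @insert a t ha ih =>
    intro k hk w
    rw [Finset.card_insert_of_notMem ha] at hk
    rw [Finset.sum_powerset_insert ha, ← Finset.sum_add_distrib]
    have key : ∀ I ∈ t.powerset,
        (-1:R) ^ I.card * (w + ∑ j ∈ I, z j) ^ k
          + (-1:R) ^ (insert a I).card * (w + ∑ j ∈ insert a I, z j) ^ k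
        = ∑ m ∈ Finset.range k,
            -(((-1:R) ^ I.card * (w + ∑ j ∈ I, z j) ^ m) * (z a ^ (k-m) * (k.choose m : R))) := by
      intro I hI
      have haI : a ∉ I := fun h => ha (Finset.mem_powerset.1 hI h)
      rw [Finset.card_insert_of_notMem haI, Finset.sum_insert haI, Finset.sum_neg_distrib]
      have h1 : w + (z a + ∑ j ∈ I, z j) = (w + ∑ j ∈ I, z j) + z a := by ring
      rw [h1]
      generalize w + ∑ j ∈ I, z j = u
      rw [add_pow, Finset.sum_range_succ, pow_succ]
      simp only [Nat.sub_self, pow_zero, Nat.choose_self, Nat.cast_one, mul_one, one_mul]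
      have hs : ∑ m ∈ Finset.range k, (-1:R) ^ I.card * u ^ m * (z a ^ (k-m) * (k.choose m : R))
          = (-1:R) ^ I.card * ∑ x ∈ Finset.range k, u ^ x * z a ^ (k-x) * (k.choose x : R) := by
        rw [Finset.mul_sum]
        exact Finset.sum_congr rfl fun _ _ => by ring
      rw [hs]
      ring
    rw [Finset.sum_congr rfl key, Finset.sum_comm]
    apply Finset.sum_eq_zero
    intro m hm
    rw [Finset.sum_neg_distrib, neg_eq_zero, ← Finset.sum_mul, ih m (by simp at hm; omega) w,
      zero_mul]

lemma poly_eq_of_deriv_eq {R : Type*} [CommRing R] [Algebra ℚ R] {p q : Polynomial R}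
    (h : derivative p = derivative q) (r : R) (h2 : p.eval r = q.eval r) : p = q := by
  have hd : derivative (p - q) = 0 := by rw [derivative_sub, h, sub_self]
  have hc : p - q = Polynomial.C ((p - q).coeff 0) := by
    ext k
    cases k with
    | zero => simp
    | succ k =>
      have h3 : (derivative (p - q)).coeff k = 0 := by rw [hd]; simp
      rw [Polynomial.coeff_derivative] at h3
      have h4 : ((k : R) + 1) = algebraMap ℚ R ((k : ℚ) + 1) := by push_cast; simp
      rw [Polynomial.coeff_C]
      simp only [Nat.succ_ne_zero, if_neg (Nat.succ_ne_zero k)]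
      have h5 := congrArg (· * algebraMap ℚ R (((k:ℚ)+1)⁻¹)) h3
      simp only [zero_mul, mul_assoc, h4, ← map_mul] at h5
      rw [mul_inv_cancel₀ (by positivity : ((k:ℚ)+1) ≠ 0)] at h5
      simpa using h5
  have hev : (p - q).eval r = 0 := by rw [Polynomial.eval_sub, h2, sub_self]
  rw [hc] at hev
  simp only [Polynomial.eval_C] at hev
  rw [hev, map_zero] at hc
  exact sub_eq_zero.mp hc

lemma sum_sdiff_swap {α M : Type*} [DecidableEq α] [AddCommMonoid M] (s : Finset α)
    (P : Finset (Finset α)) (g : Finset α → M) :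
    ∑ I ∈ P, ∑ _j ∈ s \ I, g I = ∑ j ∈ s, ∑ I ∈ P.filter (fun I => j ∉ I), g I := by
  simp only [sdiff_eq_filter, Finset.sum_filter]
  rw [Finset.sum_comm]

universe u
lemma hurwitz1 {α : Type*} [DecidableEq α] :
    ∀ (n : ℕ) (s : Finset α), s.card = n →
    ∀ (R : Type u) [CommRing R] [Algebra ℚ R], ∀ (z : α → R) (x y : R),
      (y + ∑ j ∈ s, z j) ^ n
        + ∑ I ∈ s.powerset.filter (· ≠ ∅),
            x * (x + ∑ a ∈ I, z a) ^ (I.card - 1) * (y + ∑ a ∈ s \ I, z a) ^ (n - I.card)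
      = (x + y + ∑ j ∈ s, z j) ^ n := by
  intro n
  induction n with
  | zero =>
    intro s hs R _ _ z x y
    rw [Finset.card_eq_zero] at hs
    subst hs
    simp [Finset.filter_singleton]
  | succ n ih =>
    intro s hs R _ _ z x y
    set P := s.powerset.filter (· ≠ ∅) with hPdef
    set F : Polynomial R := (X + C (∑ j ∈ s, z j)) ^ (n+1)
      + ∑ I ∈ P, C (x * (x + ∑ a ∈ I, z a) ^ (I.card - 1))
          * (X + C (∑ a ∈ s \ I, z a)) ^ (n + 1 - I.card) with hF
    set G : Polynomial R := (X + C (x + ∑ j ∈ s, z j)) ^ (n+1) with hG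
    have key : F = G := by
      apply poly_eq_of_deriv_eq (r := -(x + ∑ j ∈ s, z j))
      · -- derivatives agree
        rw [hF, hG]
        rw [derivative_add, derivative_X_add_C_pow, derivative_X_add_C_pow, derivative_sum]
        simp only [derivative_C_mul, derivative_X_add_C_pow]
        have hconst : ∀ p : Polynomial R, C ((n + 1 : ℕ) : R) * p = ∑ _j ∈ s, p := by
          intro p
          rw [Finset.sum_const, hs, map_natCast, nsmul_eq_mul]
        have step : ∀ I ∈ P, C (x * (x + ∑ j ∈ I, z j) ^ (I.card - 1))
            * (C ((n + 1 - I.card : ℕ) : R)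
              * (X + C (∑ j ∈ s \ I, z j)) ^ (n + 1 - I.card - 1))
            = ∑ _j ∈ s \ I, C (x * (x + ∑ a ∈ I, z a) ^ (I.card - 1))
                * (X + C (∑ a ∈ s \ I, z a)) ^ (n - I.card) := by
          intro I hI
          have hsub : I ⊆ s := mem_powerset.1 (mem_filter.1 hI).1
          rw [Finset.sum_const]
          rw [show ((n + 1 - I.card : ℕ) : R) = ((s \ I).card : R) by
            rw [card_sdiff_of_subset hsub, hs]]
          rw [show n + 1 - I.card - 1 = n - I.card from by omega]
          rw [map_natCast, nsmul_eq_mul]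
          ring
        rw [Finset.sum_congr rfl step, sum_sdiff_swap s P]
        simp only [Nat.add_sub_cancel]
        rw [hconst, hconst, ← Finset.sum_add_distrib]
        apply Finset.sum_congr rfl
        intro j hj
        have hPf : P.filter (fun I => j ∉ I) = (s.erase j).powerset.filter (· ≠ ∅) := by
          ext I
          simp only [hPdef, mem_filter, mem_powerset, subset_erase]
          tauto
        rw [hPf]
        have hje : (s.erase j).card = n := by rw [card_erase_of_mem hj, hs]; omega
        have hih := ih (s.erase j) hje (Polynomial R) (fun a => C (z a)) (C x) (X + C (z j))
        simp only [← map_sum, ← C_add, add_assoc] at hih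
        rw [Finset.add_sum_erase s z hj] at hih
        have hterm : ∀ I ∈ (s.erase j).powerset.filter (· ≠ ∅),
            C (x * (x + ∑ a ∈ I, z a) ^ (I.card - 1)) * (X + C (∑ a ∈ s \ I, z a)) ^ (n - I.card)
            = C x * (C (x + ∑ a ∈ I, z a)) ^ (I.card - 1)
                * (X + C (z j + ∑ a ∈ s.erase j \ I, z a)) ^ (n - I.card) := by
          intro I hI
          obtain ⟨hIe, hIne⟩ := mem_filter.1 hI
          obtain ⟨hIs, hjI⟩ := subset_erase.1 (mem_powerset.1 hIe)
          have hj2 : j ∈ s \ I := mem_sdiff.2 ⟨hj, hjI⟩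
          rw [erase_sdiff_comm, Finset.add_sum_erase (s \ I) z hj2, map_mul, map_pow]
        rw [Finset.sum_congr rfl hterm, hih]
        congr 1
        rw [C_add]
        ring
      · -- evaluation at -(x+Z)
        rw [hF, hG]
        simp only [eval_add, eval_pow, eval_mul, eval_X, eval_C, Polynomial.eval_finset_sum]
        rw [show -(x + ∑ j ∈ s, z j) + (x + ∑ j ∈ s, z j) = 0 from by ring,
          zero_pow (Nat.succ_ne_zero n)]
        have hterm : ∀ I ∈ P,
            x * (x + ∑ a ∈ I, z a) ^ (I.card - 1)
              * (-(x + ∑ j ∈ s, z j) + ∑ a ∈ s \ I, z a) ^ (n + 1 - I.card)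
            = ((-1 : R) ^ (n + 1) * x) * ((-1) ^ I.card * (x + ∑ a ∈ I, z a) ^ n) := by
          intro I hI
          obtain ⟨hIp, hIne⟩ := mem_filter.1 hI
          have hsub : I ⊆ s := mem_powerset.1 hIp
          have hle : I.card ≤ n + 1 := hs ▸ card_le_card hsub
          have hpos : 1 ≤ I.card := Finset.card_pos.2 (Finset.nonempty_of_ne_empty hIne)
          rw [show -(x + ∑ j ∈ s, z j) + ∑ a ∈ s \ I, z a = -(x + ∑ a ∈ I, z a) from by
            rw [← Finset.sum_sdiff hsub]; ring]
          rw [neg_pow]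
          have hsplit : ((-1 : R) ^ (n + 1 - I.card)) = (-1) ^ (n + 1) * (-1) ^ I.card := by
            have h2 : ((-1 : R) ^ I.card) * ((-1) ^ I.card) = 1 := by
              rw [← pow_add]
              exact Even.neg_one_pow ⟨I.card, rfl⟩
            calc ((-1 : R) ^ (n + 1 - I.card))
                = ((-1 : R) ^ (n + 1 - I.card)) * (((-1) ^ I.card) * ((-1) ^ I.card)) := by
                  rw [h2, mul_one]
              _ = (((-1 : R) ^ (n + 1 - I.card)) * ((-1) ^ I.card)) * ((-1) ^ I.card) := by ring
              _ = (-1) ^ (n + 1) * (-1) ^ I.card := by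
                  rw [← pow_add, Nat.sub_add_cancel hle]
          rw [hsplit]
          have hexp : (x + ∑ a ∈ I, z a) ^ (I.card - 1) * (x + ∑ a ∈ I, z a) ^ (n + 1 - I.card)
              = (x + ∑ a ∈ I, z a) ^ n := by
            rw [← pow_add]
            congr 1
            omega
          linear_combination ((-1 : R) ^ (n + 1) * (-1) ^ I.card * x) * hexp
        rw [Finset.sum_congr rfl hterm, ← Finset.mul_sum]
        have hins : s.powerset = insert ∅ P := by
          ext I
          simp only [hPdef, mem_insert, mem_powerset, mem_filter]
          constructor
          · intro h
            by_cases hI : I = ∅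
            · exact Or.inl hI
            · exact Or.inr ⟨h, hI⟩
          · rintro (rfl | ⟨h, _⟩)
            · exact Finset.empty_subset s
            · exact h
        have hres := alt_sum_pow s z n (by omega) x
        rw [hins, Finset.sum_insert (by simp [hPdef])] at hres
        simp only [Finset.sum_empty, add_zero, Finset.card_empty, pow_zero, one_mul] at hres
        rw [show -(x + ∑ j ∈ s, z j) + ∑ j ∈ s, z j = -x from by ring, neg_pow]
        linear_combination ((-1 : R) ^ (n + 1) * x) * hres
    have hev := congrArg (Polynomial.eval y) key
    rw [hF, hG] at hev
    simp only [eval_add, eval_pow, eval_mul, eval_X, eval_C, Polynomial.eval_finset_sum] at hev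
    rw [show y + (x + ∑ j ∈ s, z j) = x + y + ∑ j ∈ s, z j by ring] at hev
    exact hev

lemma hurwitz2 {α : Type*} [DecidableEq α] (s : Finset α) (hs : s.Nonempty)
    (R : Type u) [CommRing R] [Algebra ℚ R] (z : α → R) (x y : R) :
    x * (x + ∑ j ∈ s, z j) ^ (s.card - 1) + y * (y + ∑ j ∈ s, z j) ^ (s.card - 1)
      + ∑ I ∈ s.powerset.filter (fun I => I ≠ ∅ ∧ I ≠ s),
          x * y * (x + ∑ a ∈ I, z a) ^ (I.card - 1)
            * (y + ∑ a ∈ s \ I, z a) ^ (s.card - I.card - 1)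
    = (x + y) * (x + y + ∑ j ∈ s, z j) ^ (s.card - 1) := by
  obtain ⟨j, hj⟩ := hs
  have h1 : 1 ≤ s.card := Finset.card_pos.2 ⟨j, hj⟩
  obtain ⟨m, hm⟩ : ∃ m, s.card = m + 1 := ⟨s.card - 1, by omega⟩
  rw [hm]
  simp only [Nat.add_sub_cancel]
  set Q := s.powerset.filter (fun I => I ≠ ∅ ∧ I ≠ s) with hQdef
  rw [← Finset.sum_filter_add_sum_filter_not Q (fun I => j ∉ I)]
  have hs' : (s.erase j).card = m := by rw [card_erase_of_mem hj]; omega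
  have hpart1 : y * (y + ∑ a ∈ s, z a) ^ m
      + ∑ I ∈ Q.filter (fun I => j ∉ I),
          x * y * (x + ∑ a ∈ I, z a) ^ (I.card - 1)
            * (y + ∑ a ∈ s \ I, z a) ^ (m + 1 - I.card - 1)
      = y * (x + y + ∑ a ∈ s, z a) ^ m := by
    have hh := hurwitz1 m (s.erase j) hs' R z x (y + z j)
    simp only [add_assoc] at hh
    rw [Finset.add_sum_erase s z hj] at hh
    have hQf : Q.filter (fun I => j ∉ I) = (s.erase j).powerset.filter (· ≠ ∅) := by
      ext I
      simp only [hQdef, mem_filter, mem_powerset, subset_erase]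
      constructor
      · rintro ⟨⟨hIs, hIne, _⟩, hjI⟩
        exact ⟨⟨hIs, hjI⟩, hIne⟩
      · rintro ⟨⟨hIs, hjI⟩, hIne⟩
        exact ⟨⟨hIs, hIne, fun h => hjI (h ▸ hj)⟩, hjI⟩
    rw [hQf]
    have hterm : ∀ I ∈ (s.erase j).powerset.filter (· ≠ ∅),
        x * y * (x + ∑ a ∈ I, z a) ^ (I.card - 1)
            * (y + ∑ a ∈ s \ I, z a) ^ (m + 1 - I.card - 1)
        = y * (x * (x + ∑ a ∈ I, z a) ^ (I.card - 1)
            * (y + (z j + ∑ a ∈ s.erase j \ I, z a)) ^ (m - I.card)) := by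
      intro I hI
      obtain ⟨hIe, hIne⟩ := mem_filter.1 hI
      obtain ⟨hIs, hjI⟩ := subset_erase.1 (mem_powerset.1 hIe)
      have hj2 : j ∈ s \ I := mem_sdiff.2 ⟨hj, hjI⟩
      have hcard : I.card ≤ m := hs' ▸ card_le_card (subset_erase.2 ⟨hIs, hjI⟩)
      rw [erase_sdiff_comm, Finset.add_sum_erase (s \ I) z hj2,
        show m + 1 - I.card - 1 = m - I.card from by omega]
      ring
    rw [Finset.sum_congr rfl hterm, ← Finset.mul_sum, ← mul_add, hh]
    ring_nf
  have hpart2 : x * (x + ∑ a ∈ s, z a) ^ m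
      + ∑ I ∈ Q.filter (fun I => ¬ j ∉ I),
          x * y * (x + ∑ a ∈ I, z a) ^ (I.card - 1)
            * (y + ∑ a ∈ s \ I, z a) ^ (m + 1 - I.card - 1)
      = x * (x + y + ∑ a ∈ s, z a) ^ m := by
    have hh := hurwitz1 m (s.erase j) hs' R z y (x + z j)
    simp only [add_assoc] at hh
    rw [Finset.add_sum_erase s z hj] at hh
    -- reindex the sum by K = s \ I
    have hre : ∑ I ∈ Q.filter (fun I => ¬ j ∉ I),
        x * y * (x + ∑ a ∈ I, z a) ^ (I.card - 1)
          * (y + ∑ a ∈ s \ I, z a) ^ (m + 1 - I.card - 1)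
        = ∑ K ∈ (s.erase j).powerset.filter (· ≠ ∅),
            x * (y * (y + ∑ a ∈ K, z a) ^ (K.card - 1)
              * ((x + (z j + ∑ a ∈ s.erase j \ K, z a)) ^ (m - K.card))) := by
      apply Finset.sum_nbij' (i := fun I => s \ I) (j := fun K => s \ K)
      · intro I hI
        simp only [hQdef, mem_filter, mem_powerset, not_not] at hI
        obtain ⟨⟨hIs, hIne, hInes⟩, hjI⟩ := hI
        simp only [mem_filter, mem_powerset, subset_erase]
        refine ⟨⟨sdiff_subset, fun h => (mem_sdiff.1 h).2 hjI⟩, ?_⟩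
        intro h
        exact hInes (Finset.Subset.antisymm hIs (sdiff_eq_empty_iff_subset.1 h))
      · intro K hK
        simp only [mem_filter, mem_powerset, subset_erase] at hK
        obtain ⟨⟨hKs, hjK⟩, hKne⟩ := hK
        have hKsub : K ⊆ s := hKs
        simp only [hQdef, mem_filter, mem_powerset, not_not]
        obtain ⟨k, hk⟩ := Finset.nonempty_of_ne_empty hKne
        refine ⟨⟨sdiff_subset, ?_, ?_⟩, mem_sdiff.2 ⟨hj, hjK⟩⟩
        · intro h
          have hjm : j ∈ s \ K := mem_sdiff.2 ⟨hj, hjK⟩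
          rw [h] at hjm
          simp at hjm
        · intro h
          have hkm : k ∉ s \ K := fun hc => (mem_sdiff.1 hc).2 hk
          rw [h] at hkm
          exact hkm (hKsub hk)
      · intro I hI
        simp only [hQdef, mem_filter, mem_powerset, not_not] at hI
        exact Finset.sdiff_sdiff_eq_self hI.1.1
      · intro K hK
        simp only [mem_filter, mem_powerset, subset_erase] at hK
        exact Finset.sdiff_sdiff_eq_self hK.1.1
      · intro I hI
        simp only [hQdef, mem_filter, mem_powerset, not_not] at hI
        obtain ⟨⟨hIs, hIne, hInes⟩, hjI⟩ := hI
        have hc1 : 1 ≤ I.card := Finset.card_pos.2 (Finset.nonempty_of_ne_empty hIne)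
        have hc2 : I.card ≤ m + 1 := by rw [← hm]; exact card_le_card hIs
        have hcs : (s \ I).card = m + 1 - I.card := by rw [card_sdiff_of_subset hIs, hm]
        have hIne2 : I.card ≤ m → True := fun _ => trivial
        have he1 : s.erase j \ (s \ I) = I.erase j := by
          rw [erase_sdiff_comm, sdiff_sdiff_self_left, Finset.inter_eq_right.2 hIs]
        have he2 : z j + ∑ a ∈ I.erase j, z a = ∑ a ∈ I, z a :=
          Finset.add_sum_erase I z hjI
        rw [hcs, he1, he2,
          show m + 1 - I.card - 1 = m + 1 - I.card - 1 from rfl]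
        have hclt : I.card < m + 1 := by
          rcases Nat.lt_or_ge I.card (m+1) with h | h
          · exact h
          · exfalso
            exact hInes (Finset.eq_of_subset_of_card_le hIs (by omega))
        rw [show m + 1 - I.card - 1 = m - I.card from by omega,
          show m - (m + 1 - I.card) = I.card - 1 from by omega]
        ring
    rw [hre, ← Finset.mul_sum, ← mul_add, hh]
    ring_nf
  linear_combination hpart1 + hpart2

lemma coeff_one_X_mul {R : Type*} [Semiring R] (q : Polynomial R) :
    (Polynomial.X * q).coeff 1 = q.coeff 0 := by
  simpa using Polynomial.coeff_X_mul q 0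

end helpers

open Finset MvPolynomial

/-- Equation (lqpp) of Getzler–Okounkov–Pandharipande: for `n ≥ 1` and `i ≥ 1`,
`(i+1) C(n-1,i) Z^{n-i-1} = ∑_{∅ ≠ I ⊊ {1,…,n}} C(|I|-1,i-1) Z_I^{|I|-i} (Z-Z_I)^{n-|I|-1}`
as polynomials in `z_1, …, z_n` over `ℚ`. -/
theorem lqpp_identity (n : ℕ) (hn : 1 ≤ n) (i : ℕ) (hi : 0 < i) :
    (((i + 1) * Nat.choose (n - 1) i : ℕ) : MvPolynomial (Fin n) ℚ) *
        (∑ j, X j) ^ (n - i - 1) =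
      ∑ I ∈ Finset.univ.powerset.filter (fun I : Finset (Fin n) => I ≠ ∅ ∧ I ≠ Finset.univ),
        ((Nat.choose (I.card - 1) (i - 1) : ℕ) : MvPolynomial (Fin n) ℚ) *
          (∑ j ∈ I, X j) ^ (I.card - i) *
          ((∑ j, X j) - ∑ j ∈ I, X j) ^ (n - I.card - 1) := by
  obtain ⟨i', rfl⟩ : ∃ i', i = i' + 1 := ⟨i - 1, by omega⟩
  rcases Nat.lt_or_ge n 2 with h2 | h2
  · -- n = 1
    have hn1 : n = 1 := by omega
    subst hn1
    have hQe : (Finset.univ.powerset.filter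
        (fun I : Finset (Fin 1) => I ≠ ∅ ∧ I ≠ Finset.univ)) = ∅ := by decide
    rw [hQe, Finset.sum_empty, Nat.choose_eq_zero_of_lt (by omega)]
    simp
  · -- n ≥ 2
    have hne : (Finset.univ : Finset (Fin n)).Nonempty := ⟨⟨0, by omega⟩, Finset.mem_univ _⟩
    have h := hurwitz2 (Finset.univ : Finset (Fin n)) hne
      (Polynomial (Polynomial (MvPolynomial (Fin n) ℚ)))
      (fun j => Polynomial.C (Polynomial.C (MvPolynomial.X j)))
      (Polynomial.C Polynomial.X) Polynomial.X
    simp only [Finset.card_univ, Fintype.card_fin] at h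
    simp only [← map_sum] at h
    simp only [← Polynomial.C_add, ← Polynomial.C_pow, ← Polynomial.C_mul] at h
    have hmid : ∀ I ∈ Finset.univ.powerset.filter
        (fun I : Finset (Fin n) => I ≠ ∅ ∧ I ≠ Finset.univ),
        Polynomial.C Polynomial.X * Polynomial.X *
            Polynomial.C ((Polynomial.X + Polynomial.C ((∑ a ∈ I, MvPolynomial.X a : MvPolynomial (Fin n) ℚ))) ^ (I.card - 1)) *
          (Polynomial.X + Polynomial.C (Polynomial.C ((∑ a ∈ Finset.univ \ I, MvPolynomial.X a : MvPolynomial (Fin n) ℚ))))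
            ^ (n - I.card - 1)
        = Polynomial.C (Polynomial.X
              * (Polynomial.X + Polynomial.C ((∑ a ∈ I, MvPolynomial.X a : MvPolynomial (Fin n) ℚ))) ^ (I.card - 1))
            * (Polynomial.X * (Polynomial.X
              + Polynomial.C (Polynomial.C ((∑ a ∈ Finset.univ \ I, MvPolynomial.X a : MvPolynomial (Fin n) ℚ))))
                ^ (n - I.card - 1)) := by
      intro I _
      rw [Polynomial.C_mul]
      ring
    rw [Finset.sum_congr rfl hmid] at h
    rw [show Polynomial.C Polynomial.X + Polynomial.X
          + Polynomial.C (Polynomial.C (∑ x : Fin n, MvPolynomial.X x))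
        = Polynomial.X + Polynomial.C (Polynomial.X
            + Polynomial.C (∑ x : Fin n, MvPolynomial.X x)) from by
      rw [Polynomial.C_add]; ring] at h
    rw [add_mul] at h
    have h1 := congrArg (fun p => p.coeff 1) h
    simp only [Polynomial.coeff_add, Polynomial.finset_sum_coeff, Polynomial.coeff_C_mul,
      Polynomial.coeff_C, coeff_one_X_mul, one_ne_zero, if_false, Polynomial.coeff_X_add_C_pow,
      Nat.choose_zero_right, Nat.cast_one, mul_one, Nat.sub_zero, zero_add] at h1
    rw [← mul_assoc, ← Polynomial.C_eq_natCast] at h1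
    simp only [← Polynomial.C_pow] at h1
    have hcoe := congrArg (fun p => p.coeff (i' + 1)) h1
    simp only [Polynomial.coeff_add, Polynomial.finset_sum_coeff, Polynomial.coeff_mul_C,
      Polynomial.coeff_X_mul, Polynomial.coeff_C, Nat.succ_ne_zero, if_false,
      Polynomial.coeff_X_add_C_pow, zero_add] at hcoe
    have hnat : (n - 1 - 1).choose i' * ((n - 1).choose 1) + (n - 1).choose (i' + 1)
        = (i' + 1 + 1) * ((n - 1).choose (i' + 1)) := by
      obtain ⟨N, hN⟩ : ∃ N, n = N + 2 := ⟨n - 2, by omega⟩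
      subst hN
      simp only [show N + 2 - 1 - 1 = N from by omega, show N + 2 - 1 = N + 1 from by omega,
        Nat.choose_one_right]
      calc N.choose i' * (N + 1) + (N + 1).choose (i' + 1)
          = (N + 1) * N.choose i' + (N + 1).choose (i' + 1) := by ring
        _ = (N + 1).choose (i' + 1) * (i' + 1) + (N + 1).choose (i' + 1) := by
            rw [Nat.add_one_mul_choose_eq]
        _ = (i' + 1 + 1) * (N + 1).choose (i' + 1) := by ring
    have hfin : ∀ I ∈ Finset.univ.powerset.filter
        (fun I : Finset (Fin n) => I ≠ ∅ ∧ I ≠ Finset.univ),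
        ((Nat.choose (I.card - 1) (i' + 1 - 1) : ℕ) : MvPolynomial (Fin n) ℚ) *
          (∑ j ∈ I, MvPolynomial.X j) ^ (I.card - (i' + 1)) *
          ((∑ j, MvPolynomial.X j) - ∑ j ∈ I, MvPolynomial.X j) ^ (n - I.card - 1)
        = (∑ j ∈ I, MvPolynomial.X j) ^ (I.card - 1 - i')
            * ((Nat.choose (I.card - 1) i' : ℕ) : MvPolynomial (Fin n) ℚ)
            * (∑ j ∈ Finset.univ \ I, MvPolynomial.X j) ^ (n - I.card - 1) := by
      intro I hI
      rw [Finset.sum_sdiff_eq_sub (Finset.subset_univ I),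
        show I.card - 1 - i' = I.card - (i' + 1) from by omega,
        show i' + 1 - 1 = i' from by omega]
      ring
    rw [Finset.sum_congr rfl hfin, hcoe,
      show n - 1 - 1 - i' = n - (i' + 1) - 1 from by omega,
      show n - 1 - (i' + 1) = n - (i' + 1) - 1 from by omega]
    have hq : ((((n - 1 - 1).choose i' * ((n - 1).choose 1) + (n - 1).choose (i' + 1)) : ℕ)
          : MvPolynomial (Fin n) ℚ)
        = (((i' + 1 + 1) * ((n - 1).choose (i' + 1)) : ℕ) : MvPolynomial (Fin n) ℚ) :=
      congrArg _ hnat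
    push_cast at hq ⊢
    linear_combination (-((∑ j : Fin n, MvPolynomial.X j) ^ (n - (i' + 1) - 1))) * hq
end

section
/- For n \ge 1 and integer i \ge 1, and for each fixed k \in \{1,...,n\}, the identity i \binom{n-1}{i} Z^{n-i-1} = \sum_{\substack{I: k \in I, I \ne \{1,...,n\}}} \binom{|I|-1}{i-1} Z_I^{|I|-i} (Z-Z_I)^{n-|I|-1} holds as an identity of polynomials in z_1,...,z_n, where the sum is over proper subsets I of \{1,...,n\} containing k. -/
open Finset MvPolynomial

set_option linter.unusedSectionVars false

variable {σ : Type*} [DecidableEq σ]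

private lemma nat1 (a s : ℕ) : (s + 1) * Nat.choose a (s + 1) = a * Nat.choose (a - 1) s := by
  cases a with
  | zero => simp
  | succ a =>
      have := Nat.add_one_mul_choose_eq a s
      rw [Nat.succ_sub_one]
      rw [mul_comm (s+1), this, mul_comm]

private lemma nat2 (a s : ℕ) : Nat.choose a s * (a - s) = (s + 1) * Nat.choose a (s + 1) := by
  rw [mul_comm (s+1), Nat.choose_succ_right_eq]

private lemma pderiv_Zs (k : σ) (S : Finset σ) (hk : k ∈ S) :
    pderiv k (∑ j ∈ S, X j : MvPolynomial σ ℚ) = 1 := by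
  rw [map_sum, Finset.sum_eq_single k (fun j _ hkj => pderiv_X_of_ne hkj)
    (fun h => absurd hk h)]
  exact pderiv_X_self k

private lemma pderiv_natcast (k : σ) (c : ℕ) :
    pderiv k ((c : MvPolynomial σ ℚ)) = 0 := by
  rw [← MvPolynomial.C_eq_coe_nat]; exact pderiv_C

private lemma swap_sum (S : Finset σ) (F : Finset (Finset σ))
    (hF : ∀ I ∈ F, I ⊆ S) (f : σ → Finset σ → MvPolynomial σ ℚ) :
    ∑ I ∈ F, ∑ k ∈ I, f k I = ∑ k ∈ S, ∑ I ∈ F.filter (fun I => k ∈ I), f k I := by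
  have h1 : ∀ I ∈ F, ∑ k ∈ I, f k I = ∑ k ∈ S, if k ∈ I then f k I else 0 := by
    intro I hI
    rw [Finset.sum_ite_mem, Finset.inter_eq_right.mpr (hF I hI)]
  rw [Finset.sum_congr rfl h1, Finset.sum_comm]
  exact Finset.sum_congr rfl fun k _ => by rw [Finset.sum_filter]
set_option maxHeartbeats 1000000

variable {σ : Type*} [DecidableEq σ]

private def B1eq (S : Finset σ) (k : σ) (s : ℕ) : Prop :=
  ∑ I ∈ S.powerset.filter (fun I => k ∈ I ∧ I ≠ S),
      ((Nat.choose (I.card - 1) s : ℕ) : MvPolynomial σ ℚ) *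
        (∑ j ∈ I, X j) ^ (I.card - 1 - s) *
        ((∑ j ∈ S, X j) - ∑ j ∈ I, X j) ^ (S.card - I.card - 1)
    = (((s + 1) * Nat.choose (S.card - 1) (s + 1) : ℕ) : MvPolynomial σ ℚ) *
        (∑ j ∈ S, X j) ^ (S.card - s - 2)

private def B0eq (S : Finset σ) (s : ℕ) : Prop :=
  ∑ I ∈ S.powerset.filter (fun I => I ≠ S),
      ((Nat.choose I.card s : ℕ) : MvPolynomial σ ℚ) *
        (∑ j ∈ I, X j) ^ (I.card - s) *
        ((∑ j ∈ S, X j) - ∑ j ∈ I, X j) ^ (S.card - I.card - 1)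
    = (((s + 1) * Nat.choose S.card (s + 1) : ℕ) : MvPolynomial σ ℚ) *
        (∑ j ∈ S, X j) ^ (S.card - s - 1)
private lemma pderiv_term {S I : Finset σ} {k : σ} (hk : k ∈ S) (hkI : k ∈ I)
    (c p q : ℕ) :
    pderiv k (((c : ℕ) : MvPolynomial σ ℚ) * (∑ j ∈ I, X j) ^ p *
        ((∑ j ∈ S, X j) - ∑ j ∈ I, X j) ^ q)
      = ((c * p : ℕ) : MvPolynomial σ ℚ) * (∑ j ∈ I, X j) ^ (p - 1) *
        ((∑ j ∈ S, X j) - ∑ j ∈ I, X j) ^ q := by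
  rw [pderiv_mul, pderiv_mul, pderiv_pow, pderiv_pow, map_sub,
    pderiv_Zs k I hkI, pderiv_Zs k S hk, pderiv_natcast]
  push_cast
  ring

private lemma B1_succ {S : Finset σ} {k : σ} (hk : k ∈ S) {s : ℕ}
    (h : B1eq S k s) : B1eq S k (s + 1) := by
  unfold B1eq at h ⊢
  have hc : ((s + 1 : ℕ) : MvPolynomial σ ℚ) ≠ 0 :=
    Nat.cast_ne_zero.mpr (Nat.succ_ne_zero s)
  apply mul_left_cancel₀ hc
  have H := congrArg (pderiv k) h
  rw [map_sum] at H
  calc ((s + 1 : ℕ) : MvPolynomial σ ℚ) *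
        ∑ I ∈ S.powerset.filter (fun I => k ∈ I ∧ I ≠ S),
          ((Nat.choose (I.card - 1) (s + 1) : ℕ) : MvPolynomial σ ℚ) *
            (∑ j ∈ I, X j) ^ (I.card - 1 - (s + 1)) *
            ((∑ j ∈ S, X j) - ∑ j ∈ I, X j) ^ (S.card - I.card - 1)
      = ∑ I ∈ S.powerset.filter (fun I => k ∈ I ∧ I ≠ S),
          pderiv k (((Nat.choose (I.card - 1) s : ℕ) : MvPolynomial σ ℚ) *
            (∑ j ∈ I, X j) ^ (I.card - 1 - s) *
            ((∑ j ∈ S, X j) - ∑ j ∈ I, X j) ^ (S.card - I.card - 1)) := by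
        rw [Finset.mul_sum]
        refine Finset.sum_congr rfl fun I hI => ?_
        obtain ⟨hIS, hkI, hne⟩ : I ⊆ S ∧ k ∈ I ∧ I ≠ S := by
          simpa [Finset.mem_filter, Finset.mem_powerset] using hI
        rw [pderiv_term hk hkI, ← mul_assoc, ← mul_assoc, ← Nat.cast_mul]
        congr 2
        exact Nat.cast_inj.mpr (nat2 (I.card - 1) s).symm
    _ = pderiv k ((((s + 1) * Nat.choose (S.card - 1) (s + 1) : ℕ) : MvPolynomial σ ℚ) *
          (∑ j ∈ S, X j) ^ (S.card - s - 2)) := H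
    _ = ((s + 1 : ℕ) : MvPolynomial σ ℚ) *
          ((((s + 1 + 1) * Nat.choose (S.card - 1) (s + 1 + 1) : ℕ) : MvPolynomial σ ℚ) *
            (∑ j ∈ S, X j) ^ (S.card - (s + 1) - 2)) := by
        rw [pderiv_mul, pderiv_pow, pderiv_Zs k S hk, pderiv_natcast]
        simp only [zero_mul, zero_add, mul_one]
        rw [show S.card - s - 2 - 1 = S.card - (s + 1) - 2 from by omega,
          ← mul_assoc, ← mul_assoc, ← Nat.cast_mul, ← Nat.cast_mul]
        congr 1
        refine Nat.cast_inj.mpr ?_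
        rw [mul_assoc (s+1), show S.card - s - 2 = S.card - 1 - (s + 1) from by omega,
          nat2 (S.card - 1) (s + 1)]
private lemma B0_of_B1 (S : Finset σ) (h : ∀ k ∈ S, ∀ s, B1eq S k s) (s : ℕ) :
    B0eq S s := by
  unfold B0eq
  cases s with
  | zero =>
      rcases S.eq_empty_or_nonempty with rfl | hS
      · simp [Finset.filter_singleton]
      · have hm : 1 ≤ S.card := Finset.card_pos.mpr hS
        have hmem : (∅ : Finset σ) ∈ S.powerset.filter (fun I => I ≠ S) := by
          simp only [Finset.mem_filter, Finset.mem_powerset]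
          exact ⟨Finset.empty_subset S, fun hcon => hS.ne_empty hcon.symm⟩
        rw [← Finset.add_sum_erase _ _ hmem]
        have t0 : ((Nat.choose (∅ : Finset σ).card 0 : ℕ) : MvPolynomial σ ℚ) *
            (∑ j ∈ (∅ : Finset σ), X j) ^ ((∅ : Finset σ).card - 0) *
            ((∑ j ∈ S, X j) - ∑ j ∈ (∅ : Finset σ), X j) ^ (S.card - (∅ : Finset σ).card - 1)
            = (∑ j ∈ S, X j) ^ (S.card - 1) := by simp
        rw [t0]
        have step : ∀ I ∈ (S.powerset.filter (fun I => I ≠ S)).erase ∅,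
            ((Nat.choose I.card 0 : ℕ) : MvPolynomial σ ℚ) * (∑ j ∈ I, X j) ^ (I.card - 0) *
              ((∑ j ∈ S, X j) - ∑ j ∈ I, X j) ^ (S.card - I.card - 1)
            = ∑ k ∈ I, X k * (((Nat.choose (I.card - 1) 0 : ℕ) : MvPolynomial σ ℚ) *
                (∑ j ∈ I, X j) ^ (I.card - 1 - 0) *
                ((∑ j ∈ S, X j) - ∑ j ∈ I, X j) ^ (S.card - I.card - 1)) := by
          intro I hI
          have hIne : I ≠ ∅ := (Finset.mem_erase.mp hI).1
          have hc1 : 1 ≤ I.card := Finset.card_pos.mpr (Finset.nonempty_of_ne_empty hIne)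
          rw [← Finset.sum_mul]
          simp only [Nat.choose_zero_right, Nat.cast_one, one_mul, Nat.sub_zero]
          rw [← mul_assoc, ← pow_succ', Nat.sub_add_cancel hc1]
        rw [Finset.sum_congr rfl step]
        rw [swap_sum S _ (fun I hI =>
          Finset.mem_powerset.mp (Finset.mem_filter.mp ((Finset.mem_erase.mp hI).2)).1)]
        have inner : ∀ k ∈ S,
            ∑ I ∈ ((S.powerset.filter (fun I => I ≠ S)).erase ∅).filter (fun I => k ∈ I),
              X k * (((Nat.choose (I.card - 1) 0 : ℕ) : MvPolynomial σ ℚ) *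
                (∑ j ∈ I, X j) ^ (I.card - 1 - 0) *
                ((∑ j ∈ S, X j) - ∑ j ∈ I, X j) ^ (S.card - I.card - 1))
            = X k * ((((0 + 1) * Nat.choose (S.card - 1) (0 + 1) : ℕ) : MvPolynomial σ ℚ) *
                (∑ j ∈ S, X j) ^ (S.card - 0 - 2)) := by
          intro k hk
          rw [← Finset.mul_sum]
          congr 1
          have hfil : ((S.powerset.filter (fun I => I ≠ S)).erase ∅).filter (fun I => k ∈ I)
              = S.powerset.filter (fun I => k ∈ I ∧ I ≠ S) := by
            ext I
            simp only [Finset.mem_filter, Finset.mem_erase, Finset.mem_powerset]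
            constructor
            · rintro ⟨⟨_, hsub, hIS⟩, hkI⟩; exact ⟨hsub, hkI, hIS⟩
            · rintro ⟨hsub, hkI, hIS⟩
              exact ⟨⟨Finset.ne_empty_of_mem hkI, hsub, hIS⟩, hkI⟩
          rw [hfil]
          exact h k hk 0
        rw [Finset.sum_congr rfl inner, ← Finset.sum_mul]
        simp only [Nat.choose_one_right, one_mul, Nat.sub_zero, zero_add]
        have key : (∑ j ∈ S, X j) * (((S.card - 1 : ℕ) : MvPolynomial σ ℚ) *
              (∑ j ∈ S, X j) ^ (S.card - 2))
            = ((S.card - 1 : ℕ) : MvPolynomial σ ℚ) * (∑ j ∈ S, X j) ^ (S.card - 1) := by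
          rcases Nat.lt_or_ge S.card 2 with h2 | h2
          · have h1 : S.card = 1 := by omega
            rw [h1]; simp
          · rw [show S.card - 1 = (S.card - 2) + 1 from by omega, pow_succ]; ring
        rw [key]
        have hcast : ((S.card : ℕ) : MvPolynomial σ ℚ)
            = 1 + ((S.card - 1 : ℕ) : MvPolynomial σ ℚ) := by
          rw [← Nat.cast_one, ← Nat.cast_add]
          exact Nat.cast_inj.mpr (by omega)
        rw [hcast]; ring
  | succ s =>
      have hc : ((s + 1 : ℕ) : MvPolynomial σ ℚ) ≠ 0 :=
        Nat.cast_ne_zero.mpr (Nat.succ_ne_zero s)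
      apply mul_left_cancel₀ hc
      rw [Finset.mul_sum]
      calc ∑ I ∈ S.powerset.filter (fun I => I ≠ S),
            ((s + 1 : ℕ) : MvPolynomial σ ℚ) *
              (((Nat.choose I.card (s + 1) : ℕ) : MvPolynomial σ ℚ) *
                (∑ j ∈ I, X j) ^ (I.card - (s + 1)) *
                ((∑ j ∈ S, X j) - ∑ j ∈ I, X j) ^ (S.card - I.card - 1))
          = ∑ I ∈ S.powerset.filter (fun I => I ≠ S),
              ∑ k ∈ I, (((Nat.choose (I.card - 1) s : ℕ) : MvPolynomial σ ℚ) *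
                (∑ j ∈ I, X j) ^ (I.card - 1 - s) *
                ((∑ j ∈ S, X j) - ∑ j ∈ I, X j) ^ (S.card - I.card - 1)) := by
            refine Finset.sum_congr rfl fun I hI => ?_
            rw [Finset.sum_const, nsmul_eq_mul]
            have hn : (((s + 1) * Nat.choose I.card (s + 1) : ℕ) : MvPolynomial σ ℚ)
                = ((I.card * Nat.choose (I.card - 1) s : ℕ) : MvPolynomial σ ℚ) :=
              Nat.cast_inj.mpr (nat1 I.card s)
            rw [show I.card - (s + 1) = I.card - 1 - s from by omega]
            push_cast at hn ⊢
            linear_combination ((∑ j ∈ I, X j) ^ (I.card - 1 - s) *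
              ((∑ j ∈ S, X j) - ∑ j ∈ I, X j) ^ (S.card - I.card - 1)) * hn
        _ = ∑ k ∈ S, ∑ I ∈ (S.powerset.filter (fun I => I ≠ S)).filter (fun I => k ∈ I),
              (((Nat.choose (I.card - 1) s : ℕ) : MvPolynomial σ ℚ) *
                (∑ j ∈ I, X j) ^ (I.card - 1 - s) *
                ((∑ j ∈ S, X j) - ∑ j ∈ I, X j) ^ (S.card - I.card - 1)) := by
            exact swap_sum S _ (fun I hI =>
              Finset.mem_powerset.mp (Finset.mem_filter.mp hI).1) _
        _ = ∑ k ∈ S, (((s + 1) * Nat.choose (S.card - 1) (s + 1) : ℕ) : MvPolynomial σ ℚ) *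
              (∑ j ∈ S, X j) ^ (S.card - s - 2) := by
            refine Finset.sum_congr rfl fun k hk => ?_
            have hfil : (S.powerset.filter (fun I => I ≠ S)).filter (fun I => k ∈ I)
                = S.powerset.filter (fun I => k ∈ I ∧ I ≠ S) := by
              ext I
              simp only [Finset.mem_filter, Finset.mem_powerset]
              tauto
            rw [hfil]
            exact h k hk s
        _ = (((s + 1) : ℕ) : MvPolynomial σ ℚ) *
              ((((s + 1 + 1) * Nat.choose S.card (s + 1 + 1) : ℕ) : MvPolynomial σ ℚ) *
                (∑ j ∈ S, X j) ^ (S.card - (s + 1) - 1)) := by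
            rw [Finset.sum_const, nsmul_eq_mul]
            have hn : ((S.card * ((s + 1) * Nat.choose (S.card - 1) (s + 1)) : ℕ) :
                  MvPolynomial σ ℚ)
                = (((s + 1) * ((s + 1 + 1) * Nat.choose S.card (s + 1 + 1)) : ℕ) :
                  MvPolynomial σ ℚ) :=
              Nat.cast_inj.mpr (by rw [nat1 S.card (s + 1)]; ring)
            rw [show S.card - s - 2 = S.card - (s + 1) - 1 from by omega]
            push_cast at hn ⊢
            linear_combination ((∑ j ∈ S, X j) ^ (S.card - (s + 1) - 1)) * hn
private lemma B1_zero_of_B0 {S : Finset σ} {k : σ} (hk : k ∈ S)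
    (h0 : ∀ s, B0eq (S.erase k) s) : B1eq S k 0 := by
  unfold B1eq
  rcases Nat.lt_or_ge S.card 2 with h2 | h2
  · have h1 : S.card = 1 := by
      have := Finset.card_pos.mpr ⟨k, hk⟩; omega
    have hS : S = {k} := by
      obtain ⟨a, ha⟩ := Finset.card_eq_one.mp h1
      subst ha
      rw [Finset.mem_singleton] at hk
      rw [hk]
    have hemp : S.powerset.filter (fun I => k ∈ I ∧ I ≠ S) = ∅ := by
      rw [Finset.filter_eq_empty_iff]
      intro I hI
      rw [Finset.mem_powerset, hS] at hI
      rintro ⟨hkI, hne⟩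
      apply hne
      rw [hS]
      exact Finset.Subset.antisymm hI (Finset.singleton_subset_iff.mpr hkI)
    rw [hemp, h1]
    simp
  · have hTc : (S.erase k).card = S.card - 1 := Finset.card_erase_of_mem hk
    have hZ : (∑ j ∈ S, X j : MvPolynomial σ ℚ) = X k + ∑ j ∈ S.erase k, X j :=
      (Finset.add_sum_erase S X hk).symm
    calc ∑ I ∈ S.powerset.filter (fun I => k ∈ I ∧ I ≠ S),
          ((Nat.choose (I.card - 1) 0 : ℕ) : MvPolynomial σ ℚ) *
            (∑ j ∈ I, X j) ^ (I.card - 1 - 0) *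
            ((∑ j ∈ S, X j) - ∑ j ∈ I, X j) ^ (S.card - I.card - 1)
        = ∑ I' ∈ (S.erase k).powerset.filter (fun I' => I' ≠ S.erase k),
            (X k + ∑ j ∈ I', X j) ^ I'.card *
            ((∑ j ∈ S.erase k, X j) - ∑ j ∈ I', X j) ^ ((S.erase k).card - I'.card - 1) := by
          refine Finset.sum_nbij' (fun I => I.erase k) (fun I' => insert k I') ?_ ?_ ?_ ?_ ?_
          · intro I hI
            simp only [Finset.mem_filter, Finset.mem_powerset] at hI ⊢
            obtain ⟨hsub, hkI, hne⟩ := hI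
            constructor
            · exact fun x hx => by
                rw [Finset.mem_erase] at hx ⊢
                exact ⟨hx.1, hsub hx.2⟩
            · intro hcon
              apply hne
              apply Finset.Subset.antisymm hsub
              intro x hx
              by_cases hxk : x = k
              · subst hxk; exact hkI
              · have : x ∈ I.erase k := hcon ▸ Finset.mem_erase.mpr ⟨hxk, hx⟩
                exact (Finset.mem_erase.mp this).2
          · intro I' hI'
            simp only [Finset.mem_filter, Finset.mem_powerset] at hI' ⊢
            obtain ⟨hsub, hne⟩ := hI'
            have hkI' : k ∉ I' := fun hcon => (Finset.mem_erase.mp (hsub hcon)).1 rfl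
            refine ⟨?_, Finset.mem_insert_self k I', ?_⟩
            · intro x hx
              rcases Finset.mem_insert.mp hx with rfl | hx'
              · exact hk
              · exact Finset.mem_of_mem_erase (hsub hx')
            · intro hcon
              apply hne
              apply Finset.Subset.antisymm hsub
              intro x hx
              have hxS : x ∈ S := Finset.mem_of_mem_erase hx
              have hxk : x ≠ k := (Finset.mem_erase.mp hx).1
              have : x ∈ insert k I' := hcon ▸ hxS
              rcases Finset.mem_insert.mp this with rfl | h'
              · exact absurd rfl hxk
              · exact h'
          · intro I hI
            simp only [Finset.mem_filter] at hI
            exact Finset.insert_erase hI.2.1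
          · intro I' hI'
            simp only [Finset.mem_filter, Finset.mem_powerset] at hI'
            have hkI' : k ∉ I' := fun hcon => (Finset.mem_erase.mp (hI'.1 hcon)).1 rfl
            exact Finset.erase_insert hkI'
          · intro I hI
            simp only [Finset.mem_filter, Finset.mem_powerset] at hI
            obtain ⟨hsub, hkI, hne⟩ := hI
            have hcard : (I.erase k).card = I.card - 1 := Finset.card_erase_of_mem hkI
            have hc1 : 1 ≤ I.card := Finset.card_pos.mpr ⟨k, hkI⟩
            have hZI : (∑ j ∈ I, X j : MvPolynomial σ ℚ) = X k + ∑ j ∈ I.erase k, X j :=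
              (Finset.add_sum_erase I X hkI).symm
            rw [Nat.choose_zero_right, Nat.cast_one, one_mul, Nat.sub_zero, hcard, hZI, hZ]
            have hsum : (X k + ∑ j ∈ S.erase k, X j) - (X k + ∑ j ∈ I.erase k, X j)
                = (∑ j ∈ S.erase k, X j) - (∑ j ∈ I.erase k, X j : MvPolynomial σ ℚ) := by
              ring
            rw [hsum]
            beta_reduce
            have hlt : I.card < S.card := Finset.card_lt_card (lt_of_le_of_ne hsub hne)
            rw [hTc, show S.card - 1 - (I.card - 1) - 1 = S.card - I.card - 1 from by omega]
      _ = ∑ I' ∈ (S.erase k).powerset.filter (fun I' => I' ≠ S.erase k),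
            ∑ s ∈ Finset.range (S.erase k).card,
              X k ^ s * (((Nat.choose I'.card s : ℕ) : MvPolynomial σ ℚ) *
                (∑ j ∈ I', X j) ^ (I'.card - s) *
                ((∑ j ∈ S.erase k, X j) - ∑ j ∈ I', X j) ^ ((S.erase k).card - I'.card - 1)) := by
          refine Finset.sum_congr rfl fun I' hI' => ?_
          simp only [Finset.mem_filter, Finset.mem_powerset] at hI'
          have hlt : I'.card < (S.erase k).card :=
            Finset.card_lt_card (lt_of_le_of_ne hI'.1 hI'.2)
          rw [add_pow, Finset.sum_mul]
          rw [← Finset.sum_subset (Finset.range_subset_range.mpr (by omega : I'.card + 1 ≤ (S.erase k).card))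
            (fun s hs hns => ?_)]
          · refine Finset.sum_congr rfl fun s hs => ?_
            ring
          · have hlt2 : I'.card < s := by
              simp only [Finset.mem_range] at hs hns
              omega
            simp [Nat.choose_eq_zero_of_lt hlt2]
      _ = ∑ s ∈ Finset.range (S.erase k).card,
            X k ^ s * ((((s + 1) * Nat.choose (S.erase k).card (s + 1) : ℕ) : MvPolynomial σ ℚ) *
              (∑ j ∈ S.erase k, X j) ^ ((S.erase k).card - s - 1)) := by
          rw [Finset.sum_comm]
          refine Finset.sum_congr rfl fun s hs => ?_
          rw [← Finset.mul_sum]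
          congr 1
          exact h0 s
      _ = (((0 + 1) * Nat.choose (S.card - 1) (0 + 1) : ℕ) : MvPolynomial σ ℚ) *
            (∑ j ∈ S, X j) ^ (S.card - 0 - 2) := by
          rw [hZ, add_pow]
          rw [show S.card - 0 - 2 + 1 = (S.erase k).card from by omega]
          rw [Finset.mul_sum]
          refine Finset.sum_congr rfl fun s hs => ?_
          have hn : (((s + 1) * Nat.choose (S.card - 1) (s + 1) : ℕ) : MvPolynomial σ ℚ)
              = ((((0 + 1) * Nat.choose (S.card - 1) (0 + 1)) *
                  Nat.choose (S.card - 0 - 2) s : ℕ) : MvPolynomial σ ℚ) := by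
            refine Nat.cast_inj.mpr ?_
            rw [nat1 (S.card - 1) s]
            simp only [zero_add, one_mul, Nat.choose_one_right]
            rw [show S.card - 1 - 1 = S.card - 0 - 2 from by omega]
          rw [hTc] at *
          rw [show S.card - 1 - s - 1 = S.card - 0 - 2 - s from by omega]
          push_cast at hn ⊢
          linear_combination (X k ^ s * (∑ j ∈ S.erase k, X j) ^ (S.card - 0 - 2 - s)) * hn
private lemma B1all : ∀ (N : ℕ) (S : Finset σ), S.card ≤ N → ∀ k ∈ S, ∀ s, B1eq S k s := by
  intro N
  induction N with
  | zero =>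
      intro S hS k hk s
      have hS0 : S = ∅ := Finset.card_eq_zero.mp (Nat.le_zero.mp hS)
      subst hS0
      exact absurd hk (Finset.notMem_empty k)
  | succ N ih =>
      intro S hS k hk s
      induction s with
      | zero =>
          apply B1_zero_of_B0 hk
          intro s'
          apply B0_of_B1
          intro k' hk' s''
          apply ih
          · have hce : (S.erase k).card = S.card - 1 := Finset.card_erase_of_mem hk
            have h1 : 1 ≤ S.card := Finset.card_pos.mpr ⟨k, hk⟩
            omega
          · exact hk'
      | succ s ihs => exact B1_succ hk ihs

/-- Equation (lqppp) of Getzler–Okounkov–Pandharipande, coefficient of `dz_k`: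
for `n ≥ 1`, `i ≥ 1` and each `k ∈ {1,…,n}`,
`i C(n-1,i) Z^{n-i-1} = ∑_{I ∋ k, I ⊊ {1,…,n}} C(|I|-1,i-1) Z_I^{|I|-i} (Z-Z_I)^{n-|I|-1}`
as polynomials in `z_1, …, z_n` over `ℚ`. -/
theorem lqppp_identity (n : ℕ) (hn : 1 ≤ n) (i : ℕ) (hi : 1 ≤ i) (k : Fin n) :
    ((i * Nat.choose (n - 1) i : ℕ) : MvPolynomial (Fin n) ℚ) *
        (∑ j, X j) ^ (n - i - 1) =
      ∑ I ∈ Finset.univ.powerset.filter (fun I : Finset (Fin n) => k ∈ I ∧ I ≠ Finset.univ),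
        ((Nat.choose (I.card - 1) (i - 1) : ℕ) : MvPolynomial (Fin n) ℚ) *
          (∑ j ∈ I, X j) ^ (I.card - i) *
          ((∑ j, X j) - ∑ j ∈ I, X j) ^ (n - I.card - 1) := by
  have H := B1all (Finset.univ : Finset (Fin n)).card (Finset.univ : Finset (Fin n)) le_rfl
    k (Finset.mem_univ k) (i - 1)
  unfold B1eq at H
  have hcard : (Finset.univ : Finset (Fin n)).card = n := by
    rw [Finset.card_univ, Fintype.card_fin]
  rw [hcard] at H
  have hterm : ∀ I : Finset (Fin n), I.card - 1 - (i - 1) = I.card - i := fun I => by omega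
  simp only [hterm] at H
  rw [show i - 1 + 1 = i from by omega] at H
  rw [show n - (i - 1) - 2 = n - i - 1 from by omega] at H
  exact H.symm
end

section
/- The Cayley-type tree identity: for n \ge 2 and indeterminates z_1, ..., z_n, one has Z^{n-2} = \sum_{T} \prod_{i=1}^n z_i^{d(T,i)-1}, where the sum is over all trees T on the vertex set \{1,...,n\}, d(T,i) denotes the degree (valence) of vertex i in T, and Z = z_1 + ... + z_n. -/
open Finset MvPolynomial

/-- A tree on the vertex set `{1,…,n}` (here `Fin n`), presented as its edge set: a set of
`n-1` unordered pairs of distinct vertices whose associated graph is connected. -/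
def IsTreeEdgeSet (n : ℕ) (T : Finset (Sym2 (Fin n))) : Prop :=
  T.card = n - 1 ∧ (∀ e ∈ T, ¬ e.IsDiag) ∧ (SimpleGraph.fromEdgeSet (↑T : Set (Sym2 (Fin n)))).Connected

/-- The degree (valence) `d(T,i)` of the vertex `i` in the tree `T`. -/
def treeDegree {n : ℕ} (T : Finset (Sym2 (Fin n))) (i : Fin n) : ℕ :=
  (T.filter (fun e => i ∈ e)).card

section Helpers
variable {V W : Type*}

lemma fromEdgeSet_map_eq (f : V ↪ W) (S : Set (Sym2 V)) :
    SimpleGraph.fromEdgeSet (Sym2.map f '' S) = (SimpleGraph.fromEdgeSet S).map f := by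
  ext a b
  simp only [SimpleGraph.fromEdgeSet_adj, SimpleGraph.map_adj, Set.mem_image]
  constructor
  · rintro ⟨⟨e, heS, hme⟩, hab⟩
    induction e with
    | _ x y =>
      rw [Sym2.map_pair_eq, Sym2.eq_iff] at hme
      rcases hme with ⟨ha, hb⟩ | ⟨hb, ha⟩
      · exact ⟨x, y, ⟨heS, by rintro rfl; exact hab (ha ▸ hb ▸ rfl)⟩, ha, hb⟩
      · exact ⟨y, x, ⟨(Sym2.eq_swap ▸ heS), by rintro rfl; exact hab (ha ▸ hb ▸ rfl)⟩, ha, hb⟩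
  · rintro ⟨u, v, ⟨huv, hne⟩, rfl, rfl⟩
    exact ⟨⟨s(u, v), huv, rfl⟩, fun h => hne (f.injective h)⟩

lemma reachable_of_map_walk (f : V ↪ W) (G : SimpleGraph V) {a b : W}
    (w : (G.map f).Walk a b) : ∀ {u v : V}, f u = a → f v = b → G.Reachable u v := by
  induction w with
  | nil =>
    intro u v hu hv
    rw [← hv] at hu
    exact f.injective hu ▸ SimpleGraph.Reachable.refl u
  | @cons a c b h p ih =>
    intro u v hu hv
    obtain ⟨-, x, y, hxy, hx, hy⟩ := h
    rw [← hu] at hx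
    have := f.injective hx
    subst this
    exact (hxy.reachable).trans (ih hy hv)

/-- An interior vertex of a path has two distinct incident edges. -/
lemma two_edges_of_interior {G : SimpleGraph V} {a b x : V} (p : G.Walk a b)
    (hp : p.IsPath) (hx : x ∈ p.support) (hxa : x ≠ a) (hxb : x ≠ b) :
    ∃ e₁ ∈ p.edges, ∃ e₂ ∈ p.edges, e₁ ≠ e₂ ∧ x ∈ e₁ ∧ x ∈ e₂ := by
  induction p with
  | nil => simp at hx; exact absurd hx hxa
  | @cons a c b h q ih =>
    rw [SimpleGraph.Walk.support_cons, List.mem_cons] at hx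
    rcases hx with rfl | hx
    · exact absurd rfl hxa
    rw [SimpleGraph.Walk.cons_isPath_iff] at hp
    by_cases hxc : x = c
    · subst hxc
      cases q with
      | nil => exact absurd rfl hxb
      | @cons _ d _ h' q' =>
        refine ⟨s(a, x), by simp, s(x, d), by simp, ?_, by simp, by simp⟩
        intro hEq
        rw [Sym2.eq_iff] at hEq
        rcases hEq with ⟨rfl, rfl⟩ | ⟨h1, h2⟩
        · exact h.ne rfl
        · subst h1
          exact hp.2 (by simp : a ∈ (SimpleGraph.Walk.cons h' q').support)
    · obtain ⟨e₁, he₁, e₂, he₂, hne, h1, h2⟩ := ih hp.1 hx hxc hxb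
      exact ⟨e₁, by simp [he₁], e₂, by simp [he₂], hne, h1, h2⟩

lemma mem_support_of_mem_edges {G : SimpleGraph V} {a b x : V} (p : G.Walk a b)
    {ed : Sym2 V} (he : ed ∈ p.edges) (hx : x ∈ ed) : x ∈ p.support := by
  induction ed with
  | _ s t =>
    rcases Sym2.mem_iff.mp hx with rfl | rfl
    · exact p.fst_mem_support_of_mem_edges he
    · exact p.snd_mem_support_of_mem_edges he

end Helpers

section Poly
variable {σ : Type*} [DecidableEq σ]

/-- The substitution sending `X i` to `0` and fixing other variables. -/
noncomputable def killVar (i : σ) : MvPolynomial σ ℚ →ₐ[ℚ] MvPolynomial σ ℚ :=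
  aeval (fun j => if j = i then 0 else X j)

lemma killVar_monomial (i : σ) (m : σ →₀ ℕ) (r : ℚ) :
    killVar i (monomial m r) = if m i = 0 then monomial m r else 0 := by
  rw [killVar, aeval_monomial]
  by_cases h : m i = 0
  · rw [if_pos h]
    have : (m.prod fun j k => (if j = i then 0 else X j : MvPolynomial σ ℚ) ^ k)
        = m.prod fun j k => (X j : MvPolynomial σ ℚ) ^ k := by
      apply Finsupp.prod_congr
      intro j hj
      have : j ≠ i := by rintro rfl; exact (Finsupp.mem_support_iff.mp hj) h
      rw [if_neg this]
    rw [this, monomial_eq, algebraMap_eq]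
  · rw [if_neg h]
    have hi : i ∈ m.support := Finsupp.mem_support_iff.mpr h
    have : (m.prod fun j k => (if j = i then 0 else X j : MvPolynomial σ ℚ) ^ k) = 0 := by
      apply Finset.prod_eq_zero hi
      simp only [if_pos rfl]
      exact zero_pow h
    rw [this, mul_zero]

lemma coeff_killVar (i : σ) (p : MvPolynomial σ ℚ) {m : σ →₀ ℕ} (hm : m i = 0) :
    coeff m (killVar i p) = coeff m p := by
  conv_lhs => rw [p.as_sum]
  rw [map_sum]
  have : ∀ m' ∈ p.support, coeff m (killVar i (monomial m' (coeff m' p)))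
      = if m' = m then coeff m' p else 0 := by
    intro m' _
    rw [killVar_monomial]
    by_cases h : m' i = 0
    · rw [if_pos h, coeff_monomial]
    · rw [if_neg h]
      have : m' ≠ m := by rintro rfl; exact h hm
      simp [coeff_zero, if_neg this]
  rw [coeff_sum, Finset.sum_congr rfl this, Finset.sum_ite_eq' p.support m (fun m' => coeff m' p)]
  by_cases h : m ∈ p.support
  · rw [if_pos h]
  · rw [if_neg h, ← notMem_support_iff.mp h]

lemma killVar_rename (e : Equiv.Perm σ) (i : σ) (p : MvPolynomial σ ℚ) :
    killVar (e i) (rename e p) = rename e (killVar i p) := by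
  have : (killVar (e i)).comp (rename (R := ℚ) e) = (rename e).comp (killVar i) := by
    apply algHom_ext
    intro j
    simp only [AlgHom.comp_apply, rename_X, killVar, aeval_X]
    by_cases h : j = i
    · subst h; simp
    · rw [if_neg h, if_neg (fun hh => h (e.injective hh)), rename_X]
  exact congrFun (congrArg DFunLike.coe this) p

end Poly

open scoped Classical

section Deg
variable {n : ℕ}

lemma card_filter_mem_sym2 {e : Sym2 (Fin n)} (he : ¬ e.IsDiag) :
    (univ.filter (fun i : Fin n => i ∈ e)).card = 2 := by
  induction e with
  | _ x y =>
    rw [Sym2.mk_isDiag_iff] at he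
    have : (univ.filter (fun i : Fin n => i ∈ s(x, y))) = {x, y} := by
      ext i; simp [Sym2.mem_iff]
    rw [this, Finset.card_insert_of_notMem (by simpa using he), Finset.card_singleton]

lemma sum_treeDegree {T : Finset (Sym2 (Fin n))} (hT : ∀ e ∈ T, ¬ e.IsDiag) :
    ∑ i, treeDegree T i = 2 * T.card := by
  have h1 : ∀ i : Fin n, treeDegree T i = ∑ e ∈ T, if i ∈ e then 1 else 0 := by
    intro i; rw [treeDegree, Finset.card_filter]
  rw [Finset.sum_congr rfl (fun i _ => h1 i), Finset.sum_comm]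
  have : ∀ e ∈ T, (∑ i : Fin n, if i ∈ e then 1 else 0) = 2 := by
    intro e he
    rw [← Finset.card_filter]
    exact card_filter_mem_sym2 (hT e he)
  rw [Finset.sum_congr rfl this, Finset.sum_const, smul_eq_mul, mul_comm]

lemma one_le_treeDegree {T : Finset (Sym2 (Fin n))} (hT : IsTreeEdgeSet n T)
    (hn : 2 ≤ n) (i : Fin n) : 1 ≤ treeDegree T i := by
  obtain ⟨-, -, hconn⟩ := hT
  have : Nontrivial (Fin n) := Fin.nontrivial_iff_two_le.mpr hn
  obtain ⟨j, hj⟩ := exists_ne i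
  obtain ⟨w⟩ := hconn.preconnected i j
  cases w with
  | nil => exact absurd rfl hj.symm
  | cons h p =>
    rw [SimpleGraph.fromEdgeSet_adj] at h
    rw [treeDegree, Nat.succ_le_iff, Finset.card_pos]
    exact ⟨_, Finset.mem_filter.mpr ⟨h.1, Sym2.mem_mk_left _ _⟩⟩

lemma sum_treeDegree_sub_one {T : Finset (Sym2 (Fin n))} (hT : IsTreeEdgeSet n T)
    (hn : 2 ≤ n) : ∑ i, (treeDegree T i - 1) = n - 2 := by
  have h1 : ∑ i, ((treeDegree T i - 1) + 1) = ∑ i, treeDegree T i := by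
    apply Finset.sum_congr rfl
    intro i _
    have := one_le_treeDegree hT hn i
    omega
  rw [Finset.sum_add_distrib, Finset.sum_const, Finset.card_univ, Fintype.card_fin,
    smul_eq_mul, mul_one] at h1
  have h2 := sum_treeDegree hT.2.1
  rw [hT.1] at h2
  omega

noncomputable def relabel (e : Equiv.Perm (Fin n)) (T : Finset (Sym2 (Fin n))) :
    Finset (Sym2 (Fin n)) :=
  T.map e.toEmbedding.sym2Map

lemma filter_mem_map (f : Fin n ↪ Fin n) (T : Finset (Sym2 (Fin n))) (i : Fin n) :
    ((T.map f.sym2Map).filter (fun e => f i ∈ e)) = (T.filter (fun e => i ∈ e)).map f.sym2Map := by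
  ext a
  simp only [Finset.mem_filter, Finset.mem_map, Function.Embedding.sym2Map_apply]
  constructor
  · rintro ⟨⟨e, he, rfl⟩, hm⟩
    rw [Sym2.mem_map] at hm
    obtain ⟨c, hc, hfc⟩ := hm
    exact ⟨e, ⟨he, f.injective hfc ▸ hc⟩, rfl⟩
  · rintro ⟨e, ⟨he, hi⟩, rfl⟩
    exact ⟨⟨e, he, rfl⟩, Sym2.mem_map.mpr ⟨i, hi, rfl⟩⟩

lemma treeDegree_relabel (e : Equiv.Perm (Fin n)) (T : Finset (Sym2 (Fin n))) (i : Fin n) :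
    treeDegree (relabel e T) (e i) = treeDegree T i := by
  unfold treeDegree relabel
  rw [show ((T.map e.toEmbedding.sym2Map).filter (fun x => e i ∈ x))
      = ((T.map e.toEmbedding.sym2Map).filter (fun x => e.toEmbedding i ∈ x)) from rfl,
    filter_mem_map, Finset.card_map]

lemma relabel_isTree (e : Equiv.Perm (Fin n)) {T : Finset (Sym2 (Fin n))}
    (hT : IsTreeEdgeSet n T) : IsTreeEdgeSet n (relabel e T) := by
  obtain ⟨hcard, hdiag, hconn⟩ := hT
  refine ⟨by rw [relabel, Finset.card_map, hcard], ?_, ?_⟩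
  · intro a ha
    rw [relabel, Finset.mem_map] at ha
    obtain ⟨e', he', rfl⟩ := ha
    simpa [Function.Embedding.sym2Map_apply, Sym2.isDiag_map e.injective] using hdiag e' he'
  · rw [relabel, Finset.coe_map]
    have hc : ⇑(e.toEmbedding.sym2Map) = Sym2.map ⇑e := rfl
    rw [hc, show Sym2.map ⇑e = Sym2.map ⇑e.toEmbedding from rfl, fromEdgeSet_map_eq]
    exact ((SimpleGraph.Iso.map e (SimpleGraph.fromEdgeSet ↑T)).connected_iff).mp hconn

lemma relabel_relabel (e e' : Equiv.Perm (Fin n)) (T : Finset (Sym2 (Fin n))) :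
    relabel e' (relabel e T) = relabel (e.trans e') T := by
  unfold relabel
  rw [Finset.map_map]
  congr 1
  ext z
  simp only [Function.Embedding.trans_apply, Function.Embedding.sym2Map_apply,
    Equiv.coe_toEmbedding, Sym2.map_map]
  rfl

lemma relabel_one (T : Finset (Sym2 (Fin n))) : relabel 1 T = T := by
  unfold relabel
  have : (Equiv.toEmbedding (1 : Equiv.Perm (Fin n))).sym2Map = Function.Embedding.refl _ := by
    apply Function.Embedding.ext
    intro z
    simp only [Function.Embedding.sym2Map_apply, Function.Embedding.refl_apply]
    have h1 : ⇑(Equiv.toEmbedding (1 : Equiv.Perm (Fin n))) = id := rfl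
    rw [h1, Sym2.map_id, id]
  rw [this, Finset.map_refl]

end Deg

section Lift
variable {n : ℕ}

noncomputable def fcs (n : ℕ) : Fin n ↪ Fin (n + 1) := ⟨Fin.castSucc, Fin.castSucc_injective n⟩

noncomputable def liftT (T' : Finset (Sym2 (Fin n))) (b : Fin n) : Finset (Sym2 (Fin (n + 1))) :=
  insert s(Fin.castSucc b, Fin.last n) (T'.map (fcs n).sym2Map)

lemma castSucc_ne_last (i : Fin n) : Fin.castSucc i ≠ Fin.last n := (Fin.castSucc_lt_last i).ne

lemma last_not_mem_map {T' : Finset (Sym2 (Fin n))} {a : Sym2 (Fin (n + 1))}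
    (ha : a ∈ T'.map (fcs n).sym2Map) : Fin.last n ∉ a := by
  obtain ⟨e, _, rfl⟩ := Finset.mem_map.mp ha
  rw [Function.Embedding.sym2Map_apply, Sym2.mem_map]
  rintro ⟨c, -, hc⟩
  exact castSucc_ne_last c hc

lemma e0_not_mem_map {T' : Finset (Sym2 (Fin n))} (b : Fin n) :
    s(Fin.castSucc b, Fin.last n) ∉ T'.map (fcs n).sym2Map := by
  intro h
  exact last_not_mem_map h (Sym2.mem_mk_right _ _)

lemma mem_e0_iff {b i : Fin n} :
    Fin.castSucc i ∈ (s(Fin.castSucc b, Fin.last n) : Sym2 (Fin (n+1))) ↔ i = b := by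
  rw [Sym2.mem_iff]
  constructor
  · rintro (h | h)
    · exact Fin.castSucc_injective n h
    · exact absurd h (castSucc_ne_last i)
  · rintro rfl; exact Or.inl rfl

lemma filter_mem_map' (T' : Finset (Sym2 (Fin n))) (i : Fin n) :
    ((T'.map (fcs n).sym2Map).filter (fun e => Fin.castSucc i ∈ e))
      = (T'.filter (fun e => i ∈ e)).map (fcs n).sym2Map := by
  ext a
  simp only [Finset.mem_filter, Finset.mem_map, Function.Embedding.sym2Map_apply]
  constructor
  · rintro ⟨⟨e, he, rfl⟩, hm⟩
    rw [Sym2.mem_map] at hm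
    obtain ⟨c, hc, hfc⟩ := hm
    have : c = i := (fcs n).injective (by exact hfc)
    exact ⟨e, ⟨he, this ▸ hc⟩, rfl⟩
  · rintro ⟨e, ⟨he, hi⟩, rfl⟩
    exact ⟨⟨e, he, rfl⟩, Sym2.mem_map.mpr ⟨i, hi, rfl⟩⟩

lemma treeDegree_liftT_castSucc (T' : Finset (Sym2 (Fin n))) (b i : Fin n) :
    treeDegree (liftT T' b) (Fin.castSucc i) = treeDegree T' i + (if i = b then 1 else 0) := by
  unfold treeDegree liftT
  rw [Finset.filter_insert]
  by_cases hib : i = b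
  · rw [if_pos (mem_e0_iff.mpr hib), if_pos hib,
      Finset.card_insert_of_notMem (fun h => e0_not_mem_map b (Finset.mem_of_mem_filter _ h)),
      filter_mem_map', Finset.card_map]
  · rw [if_neg (fun h => hib (mem_e0_iff.mp h)), if_neg hib, filter_mem_map',
      Finset.card_map, add_zero]

lemma filter_last_liftT (T' : Finset (Sym2 (Fin n))) (b : Fin n) :
    (liftT T' b).filter (fun e => Fin.last n ∈ e) = {s(Fin.castSucc b, Fin.last n)} := by
  unfold liftT
  rw [Finset.filter_insert, if_pos (Sym2.mem_mk_right _ _)]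
  have : (T'.map (fcs n).sym2Map).filter (fun e => Fin.last n ∈ e) = ∅ := by
    rw [Finset.filter_eq_empty_iff]
    exact fun x hx => last_not_mem_map hx
  rw [this]
  rfl

lemma treeDegree_liftT_last (T' : Finset (Sym2 (Fin n))) (b : Fin n) :
    treeDegree (liftT T' b) (Fin.last n) = 1 := by
  unfold treeDegree
  rw [filter_last_liftT, Finset.card_singleton]

lemma liftT_injective {T' T'' : Finset (Sym2 (Fin n))} {b b' : Fin n}
    (h : liftT T' b = liftT T'' b') : T' = T'' ∧ b = b' := by
  have h1 := (filter_last_liftT T' b).symm.trans (h ▸ filter_last_liftT T'' b')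
  rw [Finset.singleton_inj, Sym2.eq_iff] at h1
  have hb : b = b' := by
    rcases h1 with ⟨h1, -⟩ | ⟨h1, h2⟩
    · exact Fin.castSucc_injective n h1
    · exact absurd h1 (castSucc_ne_last b)
  subst hb
  refine ⟨Finset.map_injective (fcs n).sym2Map ?_, rfl⟩
  have h2 : (liftT T' b).erase s(Fin.castSucc b, Fin.last n)
      = (liftT T'' b).erase s(Fin.castSucc b, Fin.last n) := by rw [h]
  rwa [liftT, liftT, Finset.erase_insert (e0_not_mem_map b),
    Finset.erase_insert (e0_not_mem_map b)] at h2

lemma liftT_isTree {T' : Finset (Sym2 (Fin n))} (hT' : IsTreeEdgeSet n T') (b : Fin n) :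
    IsTreeEdgeSet (n + 1) (liftT T' b) := by
  obtain ⟨hcard, hdiag, hconn⟩ := hT'
  have hn : 1 ≤ n := Fin.pos_iff_nonempty.mpr hconn.nonempty
  refine ⟨?_, ?_, ?_⟩
  · rw [liftT, Finset.card_insert_of_notMem (e0_not_mem_map b), Finset.card_map, hcard]
    omega
  · intro e he
    rw [liftT, Finset.mem_insert] at he
    rcases he with rfl | he
    · rw [Sym2.mk_isDiag_iff]
      exact castSucc_ne_last b
    · obtain ⟨e', he', rfl⟩ := Finset.mem_map.mp he
      rw [Function.Embedding.sym2Map_apply,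
        Sym2.isDiag_map (show Function.Injective ⇑(fcs n) from Fin.castSucc_injective n)]
      exact hdiag e' he'
  · set G' := SimpleGraph.fromEdgeSet (↑T' : Set (Sym2 (Fin n)))
    set Gl := SimpleGraph.fromEdgeSet (↑(liftT T' b) : Set (Sym2 (Fin (n + 1))))
    have hle : G'.map (fcs n) ≤ Gl := by
      rw [← fromEdgeSet_map_eq]
      apply SimpleGraph.fromEdgeSet_mono
      intro x hx
      obtain ⟨e, he, rfl⟩ := hx
      have : Sym2.map (⇑(fcs n)) e ∈ T'.map (fcs n).sym2Map :=
        Finset.mem_map.mpr ⟨e, he, rfl⟩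
      exact Finset.mem_coe.mpr (Finset.mem_insert_of_mem this)
    let hom : G' →g Gl :=
      (SimpleGraph.Hom.ofLE hle).comp
        (SimpleGraph.Embedding.map (fcs n) G').toHom
    have homx : ∀ v : Fin n, hom v = Fin.castSucc v := fun v => rfl
    have hadj : Gl.Adj (Fin.last n) (Fin.castSucc b) := by
      rw [SimpleGraph.fromEdgeSet_adj]
      constructor
      · rw [Sym2.eq_swap]
        exact Finset.mem_coe.mpr (Finset.mem_insert_self _ _)
      · exact (castSucc_ne_last b).symm
    rw [SimpleGraph.connected_iff_exists_forall_reachable]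
    refine ⟨Fin.last n, fun w => ?_⟩
    induction w using Fin.lastCases with
    | last => exact SimpleGraph.Reachable.refl _
    | cast u =>
      refine hadj.reachable.trans ?_
      have := (hconn.preconnected b u).map hom
      rwa [homx, homx] at this

lemma exists_liftT {T : Finset (Sym2 (Fin (n + 1)))} (hn : 2 ≤ n)
    (hT : IsTreeEdgeSet (n + 1) T) (hdeg : treeDegree T (Fin.last n) = 1) :
    ∃ T' b, IsTreeEdgeSet n T' ∧ T = liftT T' b := by
  obtain ⟨hcard, hdiag, hconn⟩ := hT
  obtain ⟨e, hfe⟩ := Finset.card_eq_one.mp hdeg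
  have heT : e ∈ T := by
    have : e ∈ T.filter (fun e => Fin.last n ∈ e) := hfe ▸ Finset.mem_singleton_self e
    exact Finset.mem_of_mem_filter _ this
  have hle : Fin.last n ∈ e := by
    have : e ∈ T.filter (fun e => Fin.last n ∈ e) := hfe ▸ Finset.mem_singleton_self e
    exact (Finset.mem_filter.mp this).2
  set c := Sym2.Mem.other hle with hc
  have hes : s(Fin.last n, c) = e := Sym2.other_spec hle
  have hcne : c ≠ Fin.last n := Sym2.other_ne (hdiag e heT) hle
  set b := c.castPred hcne with hb
  have hcb : Fin.castSucc b = c := Fin.castSucc_castPred c hcne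
  have he0 : e = s(Fin.castSucc b, Fin.last n) := by
    rw [← hes, hcb, Sym2.eq_swap]
  have hlast_avoid : ∀ x ∈ T.erase e, Fin.last n ∉ x := by
    intro x hx hlx
    have : x ∈ T.filter (fun e => Fin.last n ∈ e) :=
      Finset.mem_filter.mpr ⟨Finset.mem_of_mem_erase hx, hlx⟩
    rw [hfe, Finset.mem_singleton] at this
    exact (Finset.mem_erase.mp hx).1 this
  have hrange : ∀ x ∈ T.erase e, ∃ y : Sym2 (Fin n), Sym2.map ⇑(fcs n) y = x := by
    intro x hx
    induction x with
    | _ u v =>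
      have hu : u ≠ Fin.last n := fun h => hlast_avoid _ hx (h ▸ Sym2.mem_mk_left u v)
      have hv : v ≠ Fin.last n := fun h => hlast_avoid _ hx (h ▸ Sym2.mem_mk_right u v)
      exact ⟨s(u.castPred hu, v.castPred hv), by
        rw [Sym2.map_pair_eq]
        show s(Fin.castSucc _, Fin.castSucc _) = _
        rw [Fin.castSucc_castPred, Fin.castSucc_castPred]⟩
  set T' := (T.erase e).preimage (⇑(fcs n).sym2Map)
    (Set.injOn_of_injective (Sym2.map.injective
      (show Function.Injective ⇑(fcs n) from Fin.castSucc_injective n)))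
  have hmapT' : T'.map (fcs n).sym2Map = T.erase e := by
    rw [Finset.map_eq_image]
    refine (Finset.image_preimage _ _ _).trans ?_
    rw [Finset.filter_eq_self]
    intro x hx
    obtain ⟨y, hy⟩ := hrange x hx
    exact ⟨y, by exact hy⟩
  refine ⟨T', b, ⟨?_, ?_, ?_⟩, ?_⟩
  · have : T'.card = (T.erase e).card := by rw [← hmapT', Finset.card_map]
    rw [this, Finset.card_erase_of_mem heT, hcard]
    omega
  · intro x hx
    have : Sym2.map Fin.castSucc x ∈ T.erase e := by
      rw [← hmapT']
      exact Finset.mem_map.mpr ⟨x, hx, rfl⟩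
    have hd := hdiag _ (Finset.mem_of_mem_erase this)
    rw [← Sym2.isDiag_map (show Function.Injective ⇑(fcs n) from Fin.castSucc_injective n)]
    exact fun h => hd (by exact h)
  · have hnonempty : Nonempty (Fin n) := ⟨⟨0, by omega⟩⟩
    rw [SimpleGraph.connected_iff]
    refine ⟨fun u v => ?_, hnonempty⟩
    set G := SimpleGraph.fromEdgeSet (↑T : Set (Sym2 (Fin (n + 1))))
    obtain ⟨w⟩ := hconn.preconnected (Fin.castSucc u) (Fin.castSucc v)
    set p := w.toPath with hpdef
    have hps : Fin.last n ∉ p.1.support := by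
      intro hsup
      obtain ⟨e₁, he₁, e₂, he₂, hne, h1, h2⟩ :=
        two_edges_of_interior p.1 p.2 hsup
          (castSucc_ne_last u).symm (castSucc_ne_last v).symm
      have hT1 : e₁ ∈ T := by
        have := p.1.edges_subset_edgeSet he₁
        rw [SimpleGraph.edgeSet_fromEdgeSet] at this
        exact this.1
      have hT2 : e₂ ∈ T := by
        have := p.1.edges_subset_edgeSet he₂
        rw [SimpleGraph.edgeSet_fromEdgeSet] at this
        exact this.1
      have m1 : e₁ ∈ T.filter (fun e => Fin.last n ∈ e) := Finset.mem_filter.mpr ⟨hT1, h1⟩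
      have m2 : e₂ ∈ T.filter (fun e => Fin.last n ∈ e) := Finset.mem_filter.mpr ⟨hT2, h2⟩
      rw [hfe, Finset.mem_singleton] at m1 m2
      exact hne (m1.trans m2.symm)
    set G2 := SimpleGraph.fromEdgeSet (↑(T.erase e) : Set (Sym2 (Fin (n + 1))))
    have hedges : ∀ ed ∈ p.1.edges, ed ∈ G2.edgeSet := by
      intro ed hed
      have h1 := p.1.edges_subset_edgeSet hed
      rw [SimpleGraph.edgeSet_fromEdgeSet] at h1 ⊢
      refine ⟨Finset.mem_coe.mpr (Finset.mem_erase.mpr ⟨?_, Finset.mem_coe.mp h1.1⟩), h1.2⟩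
      rintro rfl
      exact hps (mem_support_of_mem_edges _ hed (he0 ▸ Sym2.mem_mk_right _ _))
    have w2 := p.1.transfer G2 hedges
    have hG2 : G2 = (SimpleGraph.fromEdgeSet (↑T' : Set (Sym2 (Fin n)))).map (fcs n) := by
      have hcoe : (↑(T.erase e) : Set (Sym2 (Fin (n + 1)))) = Sym2.map ⇑(fcs n) '' ↑T' := by
        rw [← hmapT', Finset.coe_map]; rfl
      show SimpleGraph.fromEdgeSet (↑(T.erase e) : Set (Sym2 (Fin (n + 1)))) = _
      rw [hcoe, fromEdgeSet_map_eq]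
    rw [hG2] at w2
    exact reachable_of_map_walk _ _ w2 rfl rfl
  · rw [liftT, hmapT', ← he0, Finset.insert_erase heT]

end Lift


section Base

lemma trees_two :
    (univ.filter (fun T : Finset (Sym2 (Fin 2)) => IsTreeEdgeSet 2 T))
      = {({s((0 : Fin 2), (1 : Fin 2))} : Finset (Sym2 (Fin 2)))} := by
  ext T
  simp only [Finset.mem_filter, Finset.mem_univ, true_and, Finset.mem_singleton]
  constructor
  · rintro ⟨hcard, hdiag, -⟩
    obtain ⟨e, rfl⟩ := Finset.card_eq_one.mp hcard
    have hd := hdiag e (Finset.mem_singleton_self e)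
    have h2 : ∀ e : Sym2 (Fin 2), ¬ e.IsDiag → e = s(0, 1) := by decide
    rw [h2 e hd]
  · rintro rfl
    refine ⟨rfl, by decide, ?_⟩
    rw [SimpleGraph.connected_iff]
    refine ⟨fun u v => ?_, ⟨0⟩⟩
    rcases eq_or_ne u v with rfl | huv
    · exact SimpleGraph.Reachable.refl _
    · refine SimpleGraph.Adj.reachable ?_
      rw [SimpleGraph.fromEdgeSet_adj]
      have h3 : ∀ u v : Fin 2, u ≠ v → s(u, v) = s(0, 1) := by decide
      exact ⟨by rw [h3 u v huv]; simp, huv⟩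

lemma cayley_two :
    (∑ i, (X i : MvPolynomial (Fin 2) ℚ)) ^ (2 - 2) =
      ∑ T ∈ Finset.univ.filter (fun T : Finset (Sym2 (Fin 2)) => IsTreeEdgeSet 2 T),
        ∏ i, (X i : MvPolynomial (Fin 2) ℚ) ^ (treeDegree T i - 1) := by
  rw [trees_two, Finset.sum_singleton]
  have hdeg : ∀ i : Fin 2,
      treeDegree ({s((0 : Fin 2), (1 : Fin 2))} : Finset (Sym2 (Fin 2))) i = 1 := by decide
  rw [Nat.sub_self, pow_zero]
  exact (Finset.prod_eq_one (fun i _ => by rw [hdeg i, Nat.sub_self, pow_zero])).symm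

end Base

section Sym

variable {n : ℕ}

lemma rename_LHS (e : Equiv.Perm (Fin n)) (k : ℕ) :
    rename ⇑e ((∑ i, (X i : MvPolynomial (Fin n) ℚ)) ^ k)
      = (∑ i, (X i : MvPolynomial (Fin n) ℚ)) ^ k := by
  rw [map_pow, map_sum]
  simp only [rename_X]
  rw [Equiv.sum_comp e (fun i => (X i : MvPolynomial (Fin n) ℚ))]

lemma rename_RHS (e : Equiv.Perm (Fin n)) :
    rename ⇑e (∑ T ∈ univ.filter (fun T : Finset (Sym2 (Fin n)) => IsTreeEdgeSet n T),
        ∏ i, (X i : MvPolynomial (Fin n) ℚ) ^ (treeDegree T i - 1))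
      = ∑ T ∈ univ.filter (fun T : Finset (Sym2 (Fin n)) => IsTreeEdgeSet n T),
        ∏ i, (X i : MvPolynomial (Fin n) ℚ) ^ (treeDegree T i - 1) := by
  rw [map_sum]
  have key : ∀ T ∈ univ.filter (fun T : Finset (Sym2 (Fin n)) => IsTreeEdgeSet n T),
      rename ⇑e (∏ i, (X i : MvPolynomial (Fin n) ℚ) ^ (treeDegree T i - 1))
        = ∏ i, (X i : MvPolynomial (Fin n) ℚ) ^ (treeDegree (relabel e T) i - 1) := by
    intro T _
    rw [map_prod]
    simp only [map_pow, rename_X]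
    exact Fintype.prod_equiv e _ _ (fun i => by rw [treeDegree_relabel e T i])
  rw [Finset.sum_congr rfl key]
  have htrans : e.trans e⁻¹ = 1 := by
    ext x; simp
  refine Finset.sum_nbij' (fun T => relabel e T) (fun T => relabel e⁻¹ T) ?_ ?_ ?_ ?_ ?_
  · intro T hT
    exact Finset.mem_filter.mpr ⟨Finset.mem_univ _, relabel_isTree e (Finset.mem_filter.mp hT).2⟩
  · intro T hT
    exact Finset.mem_filter.mpr ⟨Finset.mem_univ _, relabel_isTree e⁻¹ (Finset.mem_filter.mp hT).2⟩
  · intro T _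
    show relabel e⁻¹ (relabel e T) = T
    rw [relabel_relabel, htrans, relabel_one]
  · intro T _
    show relabel e (relabel e⁻¹ T) = T
    rw [relabel_relabel]
    have : e⁻¹.trans e = 1 := by ext x; simp
    rw [this, relabel_one]
  · intro T _
    rfl

end Sym

section Step

variable {n : ℕ}

lemma step_eval (hn : 2 ≤ n)
    (IH : (∑ i, (X i : MvPolynomial (Fin n) ℚ)) ^ (n - 2) =
      ∑ T ∈ univ.filter (fun T : Finset (Sym2 (Fin n)) => IsTreeEdgeSet n T),
        ∏ i, (X i : MvPolynomial (Fin n) ℚ) ^ (treeDegree T i - 1)) :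
    (aeval (Fin.lastCases 0 X : Fin (n + 1) → MvPolynomial (Fin n) ℚ))
        ((∑ i, (X i : MvPolynomial (Fin (n + 1)) ℚ)) ^ (n + 1 - 2)) =
      (aeval (Fin.lastCases 0 X : Fin (n + 1) → MvPolynomial (Fin n) ℚ))
        (∑ T ∈ univ.filter (fun T : Finset (Sym2 (Fin (n + 1))) => IsTreeEdgeSet (n + 1) T),
          ∏ i, (X i : MvPolynomial (Fin (n + 1)) ℚ) ^ (treeDegree T i - 1)) := by
  have hLHS : (aeval (Fin.lastCases 0 X : Fin (n + 1) → MvPolynomial (Fin n) ℚ))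
      ((∑ i, (X i : MvPolynomial (Fin (n + 1)) ℚ)) ^ (n + 1 - 2))
      = (∑ i, (X i : MvPolynomial (Fin n) ℚ)) ^ (n - 1) := by
    rw [map_pow, map_sum]
    simp only [aeval_X]
    rw [Fin.sum_univ_castSucc (f := fun i => (Fin.lastCases 0 X i : MvPolynomial (Fin n) ℚ))]
    simp only [Fin.lastCases_castSucc, Fin.lastCases_last, add_zero]
    congr 1
  rw [hLHS, map_sum]
  have hterm : ∀ T ∈ univ.filter (fun T : Finset (Sym2 (Fin (n + 1))) => IsTreeEdgeSet (n + 1) T),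
      (aeval (Fin.lastCases 0 X : Fin (n + 1) → MvPolynomial (Fin n) ℚ))
          (∏ i, (X i : MvPolynomial (Fin (n + 1)) ℚ) ^ (treeDegree T i - 1))
        = if treeDegree T (Fin.last n) = 1 then
            ∏ i : Fin n, (X i : MvPolynomial (Fin n) ℚ) ^ (treeDegree T (Fin.castSucc i) - 1)
          else 0 := by
    intro T hT
    have htree := (Finset.mem_filter.mp hT).2
    rw [map_prod]
    simp only [map_pow, aeval_X]
    rw [Fin.prod_univ_castSucc
      (f := fun i => (Fin.lastCases 0 X i : MvPolynomial (Fin n) ℚ) ^ (treeDegree T i - 1))]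
    simp only [Fin.lastCases_castSucc, Fin.lastCases_last]
    have hone := one_le_treeDegree htree (by omega) (Fin.last n)
    by_cases hd : treeDegree T (Fin.last n) = 1
    · rw [if_pos hd, hd, Nat.sub_self, pow_zero, mul_one]
    · rw [if_neg hd, zero_pow (by omega), mul_zero]
  rw [Finset.sum_congr rfl hterm, ← Finset.sum_filter]
  have hbij :
      ∑ T ∈ (univ.filter (fun T : Finset (Sym2 (Fin (n + 1))) => IsTreeEdgeSet (n + 1) T)).filter
          (fun T => treeDegree T (Fin.last n) = 1),
        ∏ i : Fin n, (X i : MvPolynomial (Fin n) ℚ) ^ (treeDegree T (Fin.castSucc i) - 1)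
      = ∑ p ∈ (univ.filter (fun T' : Finset (Sym2 (Fin n)) => IsTreeEdgeSet n T')) ×ˢ
          (univ : Finset (Fin n)),
        (X p.2 : MvPolynomial (Fin n) ℚ) * ∏ i, X i ^ (treeDegree p.1 i - 1) := by
    refine (Finset.sum_bij (fun p _ => liftT p.1 p.2) ?_ ?_ ?_ ?_).symm
    · rintro ⟨T', b⟩ hp
      have hT' := (Finset.mem_filter.mp (Finset.mem_product.mp hp).1).2
      exact Finset.mem_filter.mpr ⟨Finset.mem_filter.mpr ⟨Finset.mem_univ _, liftT_isTree hT' b⟩,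
        treeDegree_liftT_last T' b⟩
    · rintro ⟨T1, b1⟩ h1 ⟨T2, b2⟩ h2 heq
      obtain ⟨hT, hb⟩ := liftT_injective heq
      exact Prod.ext hT hb
    · intro T hT
      have h1 := (Finset.mem_filter.mp (Finset.mem_filter.mp hT).1).2
      have h2 := (Finset.mem_filter.mp hT).2
      obtain ⟨T', b, hT', rfl⟩ := exists_liftT hn h1 h2
      exact ⟨⟨T', b⟩, Finset.mem_product.mpr
        ⟨Finset.mem_filter.mpr ⟨Finset.mem_univ _, hT'⟩, Finset.mem_univ _⟩, rfl⟩
    · rintro ⟨T', b⟩ hp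
      have hT' := (Finset.mem_filter.mp (Finset.mem_product.mp hp).1).2
      have hdeg1 : ∀ i : Fin n, 1 ≤ treeDegree T' i := one_le_treeDegree hT' hn
      have hexp : ∀ i : Fin n,
          treeDegree (liftT T' b) (Fin.castSucc i) - 1
            = (treeDegree T' i - 1) + (if i = b then 1 else 0) := by
        intro i
        rw [treeDegree_liftT_castSucc]
        have := hdeg1 i
        by_cases hib : i = b
        · subst hib; simp; omega
        · simp [hib]
      have : (∏ i : Fin n, (X i : MvPolynomial (Fin n) ℚ)
            ^ (treeDegree (liftT T' b) (Fin.castSucc i) - 1))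
          = (∏ i, (X i : MvPolynomial (Fin n) ℚ) ^ (treeDegree T' i - 1))
            * ∏ i, (X i : MvPolynomial (Fin n) ℚ) ^ (if i = b then 1 else 0) := by
        rw [← Finset.prod_mul_distrib]
        apply Finset.prod_congr rfl
        intro i _
        rw [hexp i, pow_add]
      rw [this]
      have hXb : (∏ i, (X i : MvPolynomial (Fin n) ℚ) ^ (if i = b then 1 else 0)) = X b := by
        have : ∀ i : Fin n, (X i : MvPolynomial (Fin n) ℚ) ^ (if i = b then 1 else 0)
            = if i = b then X i else 1 := by
          intro i
          by_cases hib : i = b <;> simp [hib]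
        rw [Finset.prod_congr rfl (fun i _ => this i), Finset.prod_ite_eq' univ b
          (fun i => (X i : MvPolynomial (Fin n) ℚ)), if_pos (Finset.mem_univ b)]
      rw [hXb, mul_comm]
  rw [hbij, Finset.sum_product]
  have : ∀ T' ∈ univ.filter (fun T' : Finset (Sym2 (Fin n)) => IsTreeEdgeSet n T'),
      (∑ b : Fin n, (X b : MvPolynomial (Fin n) ℚ) * ∏ i, X i ^ (treeDegree T' i - 1))
        = (∑ b : Fin n, (X b : MvPolynomial (Fin n) ℚ)) * ∏ i, X i ^ (treeDegree T' i - 1) := by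
    intro T' _
    rw [Finset.sum_mul]
  rw [Finset.sum_congr rfl this, ← Finset.mul_sum, ← IH, ← pow_succ']
  congr 1
  omega

end Step

open scoped Classical in
/-- The weighted Cayley formula: for `n ≥ 2`,
`Z^{n-2} = ∑_T ∏_i z_i^{d(T,i)-1}`, the sum being over all trees `T` on `{1,…,n}`,
as polynomials in `z_1, …, z_n` over `ℚ`, where `Z = z_1 + ⋯ + z_n`. -/
theorem weighted_cayley (n : ℕ) (hn : 2 ≤ n) :
    (∑ i, (X i : MvPolynomial (Fin n) ℚ)) ^ (n - 2) =
      ∑ T ∈ Finset.univ.filter (fun T : Finset (Sym2 (Fin n)) => IsTreeEdgeSet n T),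
        ∏ i, (X i : MvPolynomial (Fin n) ℚ) ^ (treeDegree T i - 1) := by
  induction n, hn using Nat.le_induction with
  | base => exact cayley_two
  | succ n hn IH =>
    set Lp := (∑ i, (X i : MvPolynomial (Fin (n + 1)) ℚ)) ^ (n + 1 - 2) with hLp
    set Rp := ∑ T ∈ Finset.univ.filter (fun T : Finset (Sym2 (Fin (n + 1))) =>
        IsTreeEdgeSet (n + 1) T),
      ∏ i, (X i : MvPolynomial (Fin (n + 1)) ℚ) ^ (treeDegree T i - 1) with hRp
    have hφ : (aeval (Fin.lastCases 0 X : Fin (n + 1) → MvPolynomial (Fin n) ℚ)) Lp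
        = (aeval (Fin.lastCases 0 X : Fin (n + 1) → MvPolynomial (Fin n) ℚ)) Rp :=
      step_eval hn IH
    have hcomp : (killVar (Fin.last n) : MvPolynomial (Fin (n + 1)) ℚ →ₐ[ℚ] _)
        = (rename (Fin.castSucc : Fin n → Fin (n + 1))).comp
            (aeval (Fin.lastCases 0 X : Fin (n + 1) → MvPolynomial (Fin n) ℚ)) := by
      apply algHom_ext
      intro j
      induction j using Fin.lastCases with
      | last =>
        rw [AlgHom.comp_apply, aeval_X, Fin.lastCases_last, killVar, aeval_X, if_pos rfl,
          map_zero]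
      | cast i =>
        rw [AlgHom.comp_apply, aeval_X, Fin.lastCases_castSucc, killVar, aeval_X,
          if_neg (castSucc_ne_last i), rename_X]
    have hkill_last : killVar (Fin.last n) (Lp - Rp) = 0 := by
      rw [hcomp, AlgHom.comp_apply, map_sub, hφ, sub_self, map_zero]
    have hsym : ∀ e : Equiv.Perm (Fin (n + 1)), rename ⇑e (Lp - Rp) = Lp - Rp := by
      intro e
      rw [map_sub, hLp, hRp, rename_LHS, rename_RHS]
    have hkill : ∀ i : Fin (n + 1), killVar i (Lp - Rp) = 0 := by
      intro i
      have hs := hsym (Equiv.swap i (Fin.last n))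
      have h1 : killVar i (Lp - Rp)
          = killVar ((Equiv.swap i (Fin.last n)) (Fin.last n))
              (rename ⇑(Equiv.swap i (Fin.last n)) (Lp - Rp)) := by
        rw [hs, Equiv.swap_apply_right]
      rw [h1, killVar_rename, hkill_last, map_zero]
    have hLh : Lp.IsHomogeneous (n + 1 - 2) := by
      have h0 : (∑ i, (X i : MvPolynomial (Fin (n + 1)) ℚ)).IsHomogeneous 1 :=
        IsHomogeneous.sum univ (fun i => X i) 1 (fun i _ => isHomogeneous_X ℚ i)
      have := h0.pow (n + 1 - 2)
      rwa [one_mul] at this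
    have hRh : Rp.IsHomogeneous (n + 1 - 2) := by
      apply IsHomogeneous.sum
      intro T hT
      have htree := (Finset.mem_filter.mp hT).2
      have hprod := IsHomogeneous.prod univ
        (fun i => (X i : MvPolynomial (Fin (n + 1)) ℚ) ^ (treeDegree T i - 1))
        (fun i => treeDegree T i - 1) (fun i _ => isHomogeneous_X_pow i _)
      rwa [sum_treeDegree_sub_one htree (by omega)] at hprod
    have hzero : Lp - Rp = 0 := by
      by_contra hne
      obtain ⟨m, hm⟩ := Finset.nonempty_iff_ne_empty.mpr
        (fun h => hne (support_eq_empty.mp h))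
      have hmne : ∀ i, m i ≠ 0 := by
        intro i h
        have hc := coeff_killVar i (Lp - Rp) h
        rw [hkill i, coeff_zero] at hc
        exact (mem_support_iff.mp hm) hc.symm
      have hdeg : m.degree = n + 1 - 2 := by
        by_contra hd
        exact (mem_support_iff.mp hm) ((hLh.sub hRh).coeff_eq_zero hd)
      have hsupp : m.support = univ :=
        Finset.eq_univ_of_forall (fun i => Finsupp.mem_support_iff.mpr (hmne i))
      have hge : n + 1 ≤ m.degree := by
        rw [Finsupp.degree_apply, hsupp]
        calc n + 1 = ∑ _i : Fin (n + 1), 1 := by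
              rw [Finset.sum_const, Finset.card_univ, Fintype.card_fin, smul_eq_mul, mul_one]
          _ ≤ ∑ i, m i := Finset.sum_le_sum (fun i _ => Nat.one_le_iff_ne_zero.mpr (hmne i))
      omega
    exact sub_eq_zero.mp hzero
end

section
/- For variables x, y, z_1, ..., z_n and each fixed k \in \{1,...,n\}, the identity (x+y+Z)^{n-1} = y \sum_{I \subseteq \{1,...,n\}, k \in I} (x+Z_I)^{|I|-1} (y+Z-Z_I)^{n-|I|-1} holds as a polynomial identity (the only term with a potentially negative exponent is I = \{1,...,n\}, where the factor y(y+Z-Z_I)^{-1} = y \cdot y^{-1} = 1, so the identity reads: (x+Z)^{n-1} + y \sum_{k \in I \subsetneq \{1,...,n\}} (x+Z_I)^{|I|-1}(y+Z-Z_I)^{n-|I|-1} = (x+y+Z)^{n-1}). -/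
open Finset MvPolynomial

namespace HurwitzGOP

variable {ι : Type*} [DecidableEq ι] {R S : Type*} [CommRing R] [CommRing S]

/-- `E(s;P,Q) = ∑_{t ⊆ s} (P+Z_t)^{|t|} (Q+Z_{s\t})^{|s\t|}`. -/
def Esum (ζ : ι → R) (s : Finset ι) (P Q : R) : R :=
  ∑ t ∈ s.powerset, (P + ∑ i ∈ t, ζ i) ^ t.card * (Q + ∑ i ∈ s \ t, ζ i) ^ (s \ t).card

lemma map_Esum (φ : R →+* S) (ζ : ι → R) (s : Finset ι) (P Q : R) :
    φ (Esum ζ s P Q) = Esum (fun i => φ (ζ i)) s (φ P) (φ Q) := by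
  simp [Esum, map_sum, map_mul, map_pow, map_add]

lemma Esum_comm (ζ : ι → R) (s : Finset ι) (P Q : R) :
    Esum ζ s P Q = Esum ζ s Q P := by
  unfold Esum
  refine Finset.sum_nbij' (fun t => s \ t) (fun t => s \ t) ?_ ?_ ?_ ?_ ?_
  · intro t ht; simp
  · intro t ht; simp
  · intro t ht; exact Finset.sdiff_sdiff_eq_self (Finset.mem_powerset.1 ht)
  · intro t ht; exact Finset.sdiff_sdiff_eq_self (Finset.mem_powerset.1 ht)
  · intro t ht
    rw [Finset.sdiff_sdiff_eq_self (Finset.mem_powerset.1 ht), mul_comm]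

lemma sum_card_nsmul {M : Type*} [AddCommMonoid M] (s : Finset ι) (f : Finset ι → M) :
    ∑ t ∈ s.powerset, t.card • f t =
      ∑ k ∈ s, ∑ u ∈ (s.erase k).powerset, f (insert k u) := by
  have h1 : ∀ t ∈ s.powerset, t.card • f t = ∑ k ∈ s, if k ∈ t then f t else 0 := by
    intro t ht
    rw [Finset.sum_ite_mem, Finset.inter_eq_right.2 (Finset.mem_powerset.1 ht),
      Finset.sum_const]
  rw [Finset.sum_congr rfl h1, Finset.sum_comm]
  refine Finset.sum_congr rfl fun k hk => ?_
  rw [← Finset.sum_filter]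
  refine Finset.sum_nbij' (fun t => t.erase k) (fun u => insert k u) ?_ ?_ ?_ ?_ ?_
  · intro t ht
    simp only [Finset.mem_filter, Finset.mem_powerset] at ht ⊢
    exact Finset.erase_subset_erase _ ht.1
  · intro u hu
    simp only [Finset.mem_powerset] at hu
    simp only [Finset.mem_filter, Finset.mem_powerset]
    constructor
    · exact Finset.insert_subset hk (hu.trans (Finset.erase_subset _ _))
    · exact Finset.mem_insert_self _ _
  · intro t ht
    simp only [Finset.mem_filter] at ht
    exact Finset.insert_erase ht.2
  · intro u hu
    simp only [Finset.mem_powerset] at hu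
    exact Finset.erase_insert fun hku => (Finset.notMem_erase k s) (hu hku)
  · intro t ht
    simp only [Finset.mem_filter] at ht
    rw [Finset.insert_erase ht.2]

lemma sdiff_insert_eq (s u : Finset ι) (k : ι) : s \ insert k u = (s.erase k) \ u := by
  ext i
  simp only [Finset.mem_sdiff, Finset.mem_insert, Finset.mem_erase]
  tauto

lemma derivative_Esum (ζ : ι → R) (s : Finset ι) (P Q : R) :
    Polynomial.derivative
        (Esum (fun i => Polynomial.C (ζ i)) s (Polynomial.C P + Polynomial.X) (Polynomial.C Q)) =
      ∑ k ∈ s, Esum (fun i => Polynomial.C (ζ i)) (s.erase k)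
        (Polynomial.C (P + ζ k) + Polynomial.X) (Polynomial.C Q) := by
  have hder : Polynomial.derivative
      (Esum (fun i => Polynomial.C (ζ i)) s (Polynomial.C P + Polynomial.X) (Polynomial.C Q)) =
      ∑ t ∈ s.powerset,
        t.card • ((Polynomial.C P + Polynomial.X + ∑ i ∈ t, Polynomial.C (ζ i)) ^ (t.card - 1) *
          (Polynomial.C Q + ∑ i ∈ s \ t, Polynomial.C (ζ i)) ^ (s \ t).card) := by
    unfold Esum
    rw [Polynomial.derivative_sum]
    refine Finset.sum_congr rfl fun t ht => ?_
    simp only [Polynomial.derivative_mul, Polynomial.derivative_pow, Polynomial.derivative_add,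
      Polynomial.derivative_C, Polynomial.derivative_X, Polynomial.derivative_sum, zero_add,
      add_zero, mul_one, mul_zero, zero_mul, Finset.sum_const_zero, nsmul_eq_mul]
    rw [Polynomial.C_eq_natCast, mul_assoc]
  rw [hder, sum_card_nsmul]
  refine Finset.sum_congr rfl fun k hk => ?_
  unfold Esum
  refine Finset.sum_congr rfl fun u hu => ?_
  have hku : k ∉ u := fun h => Finset.notMem_erase k s ((Finset.mem_powerset.1 hu) h)
  rw [Finset.card_insert_of_notMem hku, Nat.add_sub_cancel, Finset.sum_insert hku,
    sdiff_insert_eq, Polynomial.C_add]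
  ring

lemma Funiv (s : Finset ι) :
    Esum (fun i => Polynomial.C (X (Sum.inr i) : MvPolynomial (Fin 2 ⊕ ι) ℚ)) s
        (Polynomial.C (X (Sum.inl 0)) + Polynomial.X) (Polynomial.C (X (Sum.inl 1))) =
      Esum (fun i => Polynomial.C (X (Sum.inr i) : MvPolynomial (Fin 2 ⊕ ι) ℚ)) s
        (Polynomial.C (X (Sum.inl 0))) (Polynomial.C (X (Sum.inl 1)) + Polynomial.X) := by
  induction s using Finset.strongInduction with
  | _ s ih =>
    set x : MvPolynomial (Fin 2 ⊕ ι) ℚ := X (Sum.inl 0) with hx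
    set y : MvPolynomial (Fin 2 ⊕ ι) ℚ := X (Sum.inl 1) with hy
    set z : ι → MvPolynomial (Fin 2 ⊕ ι) ℚ := fun i => X (Sum.inr i) with hz
    haveI hnz : NoZeroSMulDivisors ℚ (MvPolynomial (Fin 2 ⊕ ι) ℚ) :=
      inferInstance
    haveI : NoZeroSMulDivisors ℕ (MvPolynomial (Fin 2 ⊕ ι) ℚ) :=
      inferInstance
    set L := Esum (fun i => Polynomial.C (z i)) s (Polynomial.C x + Polynomial.X)
      (Polynomial.C y) with hL
    set Rp := Esum (fun i => Polynomial.C (z i)) s (Polynomial.C x)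
      (Polynomial.C y + Polynomial.X) with hR
    have hd : Polynomial.derivative L = Polynomial.derivative Rp := by
      rw [hL, hR, Esum_comm _ _ (Polynomial.C x), derivative_Esum, derivative_Esum]
      refine Finset.sum_congr rfl fun k hk => ?_
      have hIH := ih (s.erase k) (Finset.erase_ssubset hk)
      have happ := congrArg
        (⇑((Polynomial.aeval (Polynomial.X + Polynomial.C (z k)) :
            Polynomial (MvPolynomial (Fin 2 ⊕ ι) ℚ) →ₐ[MvPolynomial (Fin 2 ⊕ ι) ℚ]
              Polynomial (MvPolynomial (Fin 2 ⊕ ι) ℚ)).toRingHom)) hIH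
      rw [map_Esum, map_Esum] at happ
      simp only [AlgHom.toRingHom_eq_coe, RingHom.coe_coe, map_add, Polynomial.aeval_C,
        Polynomial.aeval_X, Polynomial.algebraMap_eq] at happ
      have e1 : Polynomial.C x + (Polynomial.X + Polynomial.C (z k)) =
          Polynomial.C (x + z k) + Polynomial.X := by rw [Polynomial.C_add]; ring
      have e2 : Polynomial.C y + (Polynomial.X + Polynomial.C (z k)) =
          Polynomial.C (y + z k) + Polynomial.X := by rw [Polynomial.C_add]; ring
      rw [e1, e2] at happ
      rw [happ]
      exact Esum_comm _ _ _ _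
    have hc : Polynomial.eval 0 L = Polynomial.eval 0 Rp := by
      have h1 := map_Esum (Polynomial.evalRingHom (0 : MvPolynomial (Fin 2 ⊕ ι) ℚ))
        (fun i => Polynomial.C (z i)) s (Polynomial.C x + Polynomial.X) (Polynomial.C y)
      have h2 := map_Esum (Polynomial.evalRingHom (0 : MvPolynomial (Fin 2 ⊕ ι) ℚ))
        (fun i => Polynomial.C (z i)) s (Polynomial.C x) (Polynomial.C y + Polynomial.X)
      simp only [Polynomial.coe_evalRingHom, Polynomial.eval_add, Polynomial.eval_C,
        Polynomial.eval_X, add_zero] at h1 h2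
      rw [hL, hR, h1, h2]
    have hsub : Polynomial.derivative (L - Rp) = 0 := by
      rw [Polynomial.derivative_sub, hd, sub_self]
    have hC := Polynomial.eq_C_of_derivative_eq_zero hsub
    have hc0 : (L - Rp).coeff 0 = 0 := by
      rw [Polynomial.coeff_sub, Polynomial.coeff_zero_eq_eval_zero,
        Polynomial.coeff_zero_eq_eval_zero, hc, sub_self]
    rw [hc0, map_zero] at hC
    exact sub_eq_zero.1 hC

lemma Esum_shift {U : Type*} [CommRing U] [Algebra ℚ U] (ζ : ι → U) (s : Finset ι)
    (x y w : U) : Esum ζ s (x + w) y = Esum ζ s x (y + w) := by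
  have h := Funiv (ι := ι) s
  have happ := congrArg
    (⇑(Polynomial.eval₂RingHom
        ((MvPolynomial.aeval (Sum.elim ![x, y] ζ) : MvPolynomial (Fin 2 ⊕ ι) ℚ →ₐ[ℚ] U).toRingHom)
        w)) h
  rw [map_Esum, map_Esum] at happ
  simpa [Polynomial.coe_eval₂RingHom, Polynomial.eval₂_add, Polynomial.eval₂_C,
    Polynomial.eval₂_X, MvPolynomial.aeval_X] using happ

/-- The multivariate Abel–Hurwitz identity (full-powerset form). -/
lemma hurA {U : Type*} [CommRing U] [Algebra ℚ U] (ζ : ι → U) (s : Finset ι) :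
    ∀ x y : U,
      (1 - x) * (y + ∑ i ∈ s, ζ i) ^ s.card +
          x * ∑ t ∈ s.powerset,
            (x + ∑ i ∈ t, ζ i) ^ (t.card - 1) * (y + ∑ i ∈ s \ t, ζ i) ^ (s \ t).card =
        (x + y + ∑ i ∈ s, ζ i) ^ s.card := by
  induction s using Finset.induction_on with
  | empty => intro x y; simp
  | @insert a s hae ih =>
    intro x y
    rw [Finset.sum_powerset_insert hae, Finset.sum_insert hae,
      Finset.card_insert_of_notMem hae]
    have hstep : ∀ t ∈ s.powerset,
        (x + ∑ i ∈ t, ζ i) ^ (t.card - 1) *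
            (y + ∑ i ∈ insert a s \ t, ζ i) ^ (insert a s \ t).card
          = ((x + ∑ i ∈ t, ζ i) ^ (t.card - 1) *
              ((y + ζ a) + ∑ i ∈ s \ t, ζ i) ^ (s \ t).card) *
            ((x + (y + ζ a) + ∑ i ∈ s, ζ i) - (x + ∑ i ∈ t, ζ i)) := by
      intro t ht
      have hat : a ∉ t := fun h => hae (Finset.mem_powerset.1 ht h)
      have h1 : insert a s \ t = insert a (s \ t) := by
        ext i
        simp only [Finset.mem_sdiff, Finset.mem_insert]
        constructor
        · rintro ⟨h | h, h2⟩
          · exact Or.inl h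
          · exact Or.inr ⟨h, h2⟩
        · rintro (h | ⟨h, h2⟩)
          · exact ⟨Or.inl h, by rwa [h]⟩
          · exact ⟨Or.inr h, h2⟩
      have h2 : a ∉ s \ t := fun h => hae (Finset.mem_sdiff.1 h).1
      have h3 : ∑ i ∈ s \ t, ζ i + ∑ i ∈ t, ζ i = ∑ i ∈ s, ζ i :=
        Finset.sum_sdiff (Finset.mem_powerset.1 ht)
      rw [h1, Finset.card_insert_of_notMem h2, Finset.sum_insert h2, pow_succ]
      linear_combination ((x + ∑ i ∈ t, ζ i) ^ (t.card - 1) *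
        ((y + ζ a) + ∑ i ∈ s \ t, ζ i) ^ (s \ t).card) * h3
    rw [Finset.sum_congr rfl hstep]
    have hsplit : ∑ t ∈ s.powerset,
        ((x + ∑ i ∈ t, ζ i) ^ (t.card - 1) *
            ((y + ζ a) + ∑ i ∈ s \ t, ζ i) ^ (s \ t).card) *
          ((x + (y + ζ a) + ∑ i ∈ s, ζ i) - (x + ∑ i ∈ t, ζ i))
        = (x + (y + ζ a) + ∑ i ∈ s, ζ i) *
            (∑ t ∈ s.powerset,
              (x + ∑ i ∈ t, ζ i) ^ (t.card - 1) *
                ((y + ζ a) + ∑ i ∈ s \ t, ζ i) ^ (s \ t).card) -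
          ∑ t ∈ s.powerset,
            ((x + ∑ i ∈ t, ζ i) ^ (t.card - 1) *
              ((y + ζ a) + ∑ i ∈ s \ t, ζ i) ^ (s \ t).card) * (x + ∑ i ∈ t, ζ i) := by
      rw [Finset.mul_sum, ← Finset.sum_sub_distrib]
      refine Finset.sum_congr rfl fun t ht => ?_
      ring
    rw [hsplit]
    have hIII : ∑ t ∈ s.powerset,
        ((x + ∑ i ∈ t, ζ i) ^ (t.card - 1) *
          ((y + ζ a) + ∑ i ∈ s \ t, ζ i) ^ (s \ t).card) * (x + ∑ i ∈ t, ζ i)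
        = Esum ζ s x (y + ζ a) + (x - 1) * ((y + ζ a) + ∑ i ∈ s, ζ i) ^ s.card := by
      have hmem : (∅ : Finset ι) ∈ s.powerset := Finset.mem_powerset.2 (Finset.empty_subset s)
      rw [← Finset.sum_erase_add _ _ hmem]
      have hterm : ∀ t ∈ s.powerset.erase ∅,
          ((x + ∑ i ∈ t, ζ i) ^ (t.card - 1) *
            ((y + ζ a) + ∑ i ∈ s \ t, ζ i) ^ (s \ t).card) * (x + ∑ i ∈ t, ζ i)
          = (x + ∑ i ∈ t, ζ i) ^ t.card *
              ((y + ζ a) + ∑ i ∈ s \ t, ζ i) ^ (s \ t).card := by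
        intro t ht
        have hne : t ≠ ∅ := (Finset.mem_erase.1 ht).1
        have hc : 1 ≤ t.card :=
          Finset.card_pos.2 (Finset.nonempty_iff_ne_empty.2 hne)
        rw [mul_right_comm, ← pow_succ, Nat.sub_add_cancel hc]
      rw [Finset.sum_congr rfl hterm]
      have hEsum : Esum ζ s x (y + ζ a) =
          (∑ t ∈ s.powerset.erase ∅,
            (x + ∑ i ∈ t, ζ i) ^ t.card *
              ((y + ζ a) + ∑ i ∈ s \ t, ζ i) ^ (s \ t).card) +
            ((y + ζ a) + ∑ i ∈ s, ζ i) ^ s.card := by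
        unfold Esum
        rw [← Finset.sum_erase_add _ _ hmem]
        simp
      rw [hEsum]
      simp only [Finset.card_empty, Finset.sum_empty, Finset.sdiff_empty, add_zero,
        Nat.zero_sub, pow_zero, one_mul]
      ring
    rw [hIII]
    have hI : ∑ u ∈ s.powerset,
        (x + ∑ i ∈ insert a u, ζ i) ^ ((insert a u).card - 1) *
          (y + ∑ i ∈ insert a s \ insert a u, ζ i) ^ (insert a s \ insert a u).card
        = Esum ζ s (x + ζ a) y := by
      unfold Esum
      refine Finset.sum_congr rfl fun u hu => ?_
      have hau : a ∉ u := fun h => hae (Finset.mem_powerset.1 hu h)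
      rw [sdiff_insert_eq, Finset.erase_insert hae, Finset.card_insert_of_notMem hau,
        Nat.add_sub_cancel, Finset.sum_insert hau]
      ring
    rw [hI]
    have hE : Esum ζ s (x + ζ a) y = Esum ζ s x (y + ζ a) := Esum_shift ζ s x y (ζ a)
    have hIH := ih x (y + ζ a)
    rw [hE]
    linear_combination (x + (y + ζ a) + ∑ i ∈ s, ζ i) * hIH

/-- Hurwitz identity, mirrored and filtered form. -/
lemma hurT {U : Type*} [CommRing U] [Algebra ℚ U] (ζ : ι → U) (s : Finset ι) (x y : U) :
    (x + ∑ i ∈ s, ζ i) ^ s.card +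
      y * ∑ t ∈ s.powerset.filter (· ≠ s),
        (x + ∑ i ∈ t, ζ i) ^ t.card * (y + ∑ i ∈ s \ t, ζ i) ^ ((s \ t).card - 1) =
    (x + y + ∑ i ∈ s, ζ i) ^ s.card := by
  have h := hurA ζ s y x
  have hmem : (∅ : Finset ι) ∈ s.powerset := Finset.mem_powerset.2 (Finset.empty_subset s)
  rw [← Finset.sum_erase_add _ _ hmem] at h
  have hre : ∑ t ∈ s.powerset.erase ∅,
      (y + ∑ i ∈ t, ζ i) ^ (t.card - 1) * (x + ∑ i ∈ s \ t, ζ i) ^ (s \ t).card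
      = ∑ t ∈ s.powerset.filter (· ≠ s),
        (x + ∑ i ∈ t, ζ i) ^ t.card * (y + ∑ i ∈ s \ t, ζ i) ^ ((s \ t).card - 1) := by
    refine Finset.sum_nbij' (fun t => s \ t) (fun t => s \ t) ?_ ?_ ?_ ?_ ?_
    · intro t ht
      rw [Finset.mem_erase, Finset.mem_powerset] at ht
      rw [Finset.mem_filter, Finset.mem_powerset]
      refine ⟨Finset.sdiff_subset, fun hcon => ?_⟩
      have := Finset.sdiff_eq_self_iff_disjoint.1 hcon
      exact ht.1 (Finset.eq_empty_of_forall_notMem fun i hi =>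
        (Finset.disjoint_right.1 this) hi (ht.2 hi))
    · intro t ht
      rw [Finset.mem_filter, Finset.mem_powerset] at ht
      rw [Finset.mem_erase, Finset.mem_powerset]
      refine ⟨fun hcon => ht.2 ?_, Finset.sdiff_subset⟩
      have : s ⊆ t := by
        intro i hi
        by_contra hit
        exact (Finset.notMem_empty i) (hcon ▸ Finset.mem_sdiff.2 ⟨hi, hit⟩)
      exact le_antisymm ht.1 this
    · intro t ht
      rw [Finset.mem_erase, Finset.mem_powerset] at ht
      exact Finset.sdiff_sdiff_eq_self ht.2
    · intro t ht
      rw [Finset.mem_filter, Finset.mem_powerset] at ht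
      exact Finset.sdiff_sdiff_eq_self ht.1
    · intro t ht
      rw [Finset.mem_erase, Finset.mem_powerset] at ht
      rw [Finset.sdiff_sdiff_eq_self ht.2, mul_comm]
  rw [hre] at h
  have hempty : (y + ∑ i ∈ (∅ : Finset ι), ζ i) ^ ((∅ : Finset ι).card - 1) *
      (x + ∑ i ∈ s \ ∅, ζ i) ^ (s \ (∅ : Finset ι)).card = (x + ∑ i ∈ s, ζ i) ^ s.card := by
    simp
  rw [hempty] at h
  linear_combination h

end HurwitzGOP

open HurwitzGOP in
/-- The second identity of Lemma 4.2 of Getzler–Okounkov–Pandharipande (the coefficient of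
`dz_k`): for `n ≥ 1`, each `k ∈ {1,…,n}`, and indeterminates `x, y, z_1, …, z_n`,
`(x+Z)^{n-1} + y ∑_{k ∈ I ⊊ {1,…,n}} (x+Z_I)^{|I|-1}(y+Z-Z_I)^{n-|I|-1} = (x+y+Z)^{n-1}`,
as polynomials over `ℚ`. Here `x = X (.inl 0)`, `y = X (.inl 1)`, `z_i = X (.inr i)`. -/
theorem hurwitz_companion (n : ℕ) (hn : 1 ≤ n) (k : Fin n) :
    ((X (.inl 0) : MvPolynomial (Fin 2 ⊕ Fin n) ℚ) + ∑ i, X (.inr i)) ^ (n - 1) +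
      X (.inl 1) *
        ∑ I ∈ Finset.univ.powerset.filter (fun I : Finset (Fin n) => k ∈ I ∧ I ≠ Finset.univ),
          ((X (.inl 0) : MvPolynomial (Fin 2 ⊕ Fin n) ℚ) + ∑ i ∈ I, X (.inr i)) ^ (I.card - 1) *
            ((X (.inl 1) : MvPolynomial (Fin 2 ⊕ Fin n) ℚ) + (∑ i, X (.inr i)) -
              ∑ i ∈ I, X (.inr i)) ^ (n - I.card - 1) =
      ((X (.inl 0) : MvPolynomial (Fin 2 ⊕ Fin n) ℚ) + X (.inl 1) + ∑ i, X (.inr i)) ^ (n - 1) := by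
  classical
  set U := MvPolynomial (Fin 2 ⊕ Fin n) ℚ
  set x : U := X (Sum.inl 0) with hxdef
  set y : U := X (Sum.inl 1) with hydef
  set ζ : Fin n → U := fun i => X (Sum.inr i) with hzdef
  have key := hurT ζ (Finset.univ.erase k) (x + ζ k) y
  have hcard : (Finset.univ.erase k).card = n - 1 := by
    rw [Finset.card_erase_of_mem (Finset.mem_univ k), Finset.card_univ, Fintype.card_fin]
  have hzsum : ζ k + ∑ i ∈ Finset.univ.erase k, ζ i = ∑ i, ζ i :=
    Finset.add_sum_erase _ _ (Finset.mem_univ k)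
  have hre : ∑ t ∈ (Finset.univ.erase k).powerset.filter (· ≠ Finset.univ.erase k),
      ((x + ζ k) + ∑ i ∈ t, ζ i) ^ t.card *
        (y + ∑ i ∈ Finset.univ.erase k \ t, ζ i) ^ ((Finset.univ.erase k \ t).card - 1)
      = ∑ I ∈ Finset.univ.powerset.filter (fun I : Finset (Fin n) => k ∈ I ∧ I ≠ Finset.univ),
          (x + ∑ i ∈ I, ζ i) ^ (I.card - 1) *
            (y + (∑ i, ζ i) - ∑ i ∈ I, ζ i) ^ (n - I.card - 1) := by
    refine Finset.sum_nbij' (fun t => insert k t) (fun I => I.erase k) ?_ ?_ ?_ ?_ ?_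
    · intro t ht
      rw [Finset.mem_filter, Finset.mem_powerset] at ht
      have hkt : k ∉ t := fun h => Finset.notMem_erase k _ (ht.1 h)
      rw [Finset.mem_filter, Finset.mem_powerset]
      refine ⟨Finset.subset_univ _, Finset.mem_insert_self _ _, fun hcon => ?_⟩
      apply ht.2
      have hcon' : insert k t = Finset.univ := hcon
      rw [← Finset.erase_insert hkt, hcon']
    · intro I hI
      rw [Finset.mem_filter, Finset.mem_powerset] at hI
      rw [Finset.mem_filter, Finset.mem_powerset]
      refine ⟨Finset.erase_subset_erase _ (Finset.subset_univ _), fun hcon => ?_⟩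
      apply hI.2.2
      have hcon' : I.erase k = Finset.univ.erase k := hcon
      rw [← Finset.insert_erase hI.2.1, hcon', Finset.insert_erase (Finset.mem_univ k)]
    · intro t ht
      rw [Finset.mem_filter, Finset.mem_powerset] at ht
      have hkt : k ∉ t := fun h => Finset.notMem_erase k _ (ht.1 h)
      exact Finset.erase_insert hkt
    · intro I hI
      rw [Finset.mem_filter] at hI
      exact Finset.insert_erase hI.2.1
    · intro t ht
      rw [Finset.mem_filter, Finset.mem_powerset] at ht
      have hkt : k ∉ t := fun h => Finset.notMem_erase k _ (ht.1 h)
      have hc1 : (insert k t).card - 1 = t.card := by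
        rw [Finset.card_insert_of_notMem hkt, Nat.add_sub_cancel]
      have hsd : Finset.univ.erase k \ t = Finset.univ \ insert k t := by
        rw [sdiff_insert_eq]
      have hzsub : y + (∑ i, ζ i) - ∑ i ∈ insert k t, ζ i
          = y + ∑ i ∈ Finset.univ \ insert k t, ζ i := by
        have := Finset.sum_sdiff (Finset.subset_univ (insert k t)) (f := ζ)
        linear_combination -this
      have hexp : (Finset.univ \ insert k t).card - 1 = n - (insert k t).card - 1 := by
        rw [Finset.card_sdiff_of_subset (Finset.subset_univ _), Finset.card_univ, Fintype.card_fin]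
      show (x + ζ k + ∑ i ∈ t, ζ i) ^ t.card *
          (y + ∑ i ∈ Finset.univ.erase k \ t, ζ i) ^ ((Finset.univ.erase k \ t).card - 1)
        = (x + ∑ i ∈ insert k t, ζ i) ^ ((insert k t).card - 1) *
            (y + (∑ i, ζ i) - ∑ i ∈ insert k t, ζ i) ^ (n - (insert k t).card - 1)
      rw [hc1, hsd, hzsub, hexp, Finset.sum_insert hkt]
      ring
  rw [hre, hcard] at key
  have hbase1 : x + ζ k + ∑ i ∈ Finset.univ.erase k, ζ i = x + ∑ i, ζ i := by
    rw [add_assoc, hzsum]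
  have hbase2 : x + ζ k + y + ∑ i ∈ Finset.univ.erase k, ζ i = x + y + ∑ i, ζ i := by
    linear_combination hzsum
  rw [hbase1, hbase2] at key
  exact key
end

section
/- Setting all z_i equal to 1 in the Hurwitz identity gives: for n \ge 1 and indeterminates x, y, (x+y)(x+y+n)^{n-1} = x(x+n)^{n-1} + y(y+n)^{n-1} + xy \sum_{j=1}^{n-1} \binom{n}{j} (x+j)^{j-1} (y+n-j)^{n-j-1}, as an identity of polynomials in x and y over \mathbb{Q}. -/
open Finset

lemma fd_pow_zero : ∀ m n : ℕ, m < n → ∀ c : ℚ,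
    (fwdDiff (1:ℚ))^[n] (fun t : ℚ => (c + t) ^ m) = 0 := by
  intro m
  induction m using Nat.strong_induction_on with
  | _ m IH =>
    intro n hn c
    obtain ⟨n', rfl⟩ : ∃ n', n = n' + 1 := ⟨n - 1, by omega⟩
    rw [Function.iterate_succ_apply]
    have hstep : fwdDiff (1:ℚ) (fun t : ℚ => (c + t) ^ m)
        = ∑ i ∈ range m, (m.choose i : ℚ) • (fun t : ℚ => (c + t) ^ i) := by
      funext t
      simp only [fwdDiff, Finset.sum_apply, Pi.smul_apply, smul_eq_mul]
      have : (c + (t + 1)) ^ m = ∑ i ∈ range (m + 1), (c + t) ^ i * (m.choose i : ℚ) := by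
        rw [show c + (t + 1) = (c + t) + 1 by ring, add_pow]
        simp
      rw [this, Finset.sum_range_succ]
      simp [mul_comm]
    rw [hstep, fwdDiff_iter_finset_sum]
    funext t
    simp only [Finset.sum_apply, Pi.zero_apply]
    apply Finset.sum_eq_zero
    intro i hi
    have him := mem_range.mp hi
    have := IH i him n' (by omega) c
    rw [fwdDiff_iter_const_smul, this]
    simp

lemma fd_sum_zero (n m : ℕ) (hm : m < n) (c : ℚ) :
    ∑ j ∈ range (n + 1), (-1 : ℚ) ^ j * (n.choose j : ℚ) * (c + j) ^ m = 0 := by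
  have h0 := congrFun (fd_pow_zero m n hm c) 0
  rw [fwdDiff_iter_eq_sum_shift] at h0
  simp only [Pi.zero_apply, zsmul_eq_mul, Int.cast_mul, Int.cast_pow, Int.cast_neg, Int.cast_one,
    Int.cast_natCast, smul_eq_mul, nsmul_eq_mul, mul_one, zero_add] at h0
  have := congrArg (fun z => (-1 : ℚ) ^ n * z) h0
  simp only [mul_zero, Finset.mul_sum] at this
  rw [← this]
  apply Finset.sum_congr rfl
  intro j hj
  have hjn : j ≤ n := by simpa using Nat.lt_succ_iff.mp (mem_range.mp hj)
  have hsign : (-1 : ℚ) ^ n * (-1) ^ (n - j) = (-1) ^ j := by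
    have : n + (n - j) = j + 2 * (n - j) := by omega
    rw [← pow_add, this, pow_add, pow_mul]
    simp
  linear_combination (-(n.choose j : ℚ) * (c + j) ^ m) * hsign

lemma sum_Icc_one {M : Type*} [AddCommMonoid M] (m : ℕ) (f : ℕ → M) :
    ∑ j ∈ Icc 1 m, f j = ∑ i ∈ range m, f (1 + i) := by
  rw [← Finset.Ico_add_one_right_eq_Icc, Finset.sum_Ico_eq_sum_range]
  simp

open Polynomial in
lemma abel_poly : ∀ n : ℕ, ∀ x b : ℚ,
    (Polynomial.X + Polynomial.C (x + n + b) : Polynomial ℚ) ^ n =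
      (Polynomial.X + Polynomial.C ((n : ℚ) + b)) ^ n +
        ∑ j ∈ Icc 1 n, Polynomial.C ((n.choose j : ℚ) * x * (x + j) ^ (j - 1)) *
          (Polynomial.X + Polynomial.C ((n : ℚ) - j + b)) ^ (n - j) := by
  intro n
  induction n with
  | zero => intro x b; simp
  | succ n IH =>
    intro x b
    set L : ℚ[X] := (X + C (x + (n+1 : ℕ) + b)) ^ (n+1) with hL
    set R : ℚ[X] := (X + C (((n+1 : ℕ) : ℚ) + b)) ^ (n+1) +
        ∑ j ∈ Icc 1 (n+1), C (((n+1).choose j : ℚ) * x * (x + j) ^ (j - 1)) *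
          (X + C (((n+1 : ℕ) : ℚ) - j + b)) ^ (n + 1 - j) with hR
    -- derivatives agree
    have hd : derivative L = derivative R := by
      rw [hL, hR, derivative_add, derivative_sum, derivative_pow, derivative_pow]
      simp only [derivative_add, derivative_X, derivative_C, add_zero, mul_one]
      have hterm : ∀ j ∈ Icc 1 (n+1),
          derivative (C (((n+1).choose j : ℚ) * x * (x + j) ^ (j - 1)) *
            (X + C (((n+1 : ℕ) : ℚ) - j + b)) ^ (n + 1 - j))
          = C (((n+1).choose j : ℚ) * x * (x + j) ^ (j - 1)) *
              (C (((n + 1 - j : ℕ) : ℚ)) * (X + C (((n+1 : ℕ) : ℚ) - j + b)) ^ (n - j)) := by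
        intro j hj
        rw [derivative_C_mul, derivative_pow]
        simp only [derivative_add, derivative_X, derivative_C, add_zero, mul_one]
        rw [show n + 1 - j - 1 = n - j from by omega]
      rw [Finset.sum_congr rfl hterm]
      rw [Finset.sum_Icc_succ_top (by omega : 1 ≤ n + 1)]
      have htop : C (((n+1).choose (n+1) : ℚ) * x * (x + ((n+1 : ℕ) : ℚ)) ^ ((n+1) - 1)) *
          (C (((n + 1 - (n+1) : ℕ) : ℚ)) *
            (X + C (((n+1 : ℕ) : ℚ) - ((n+1 : ℕ) : ℚ) + b)) ^ (n - (n+1))) = 0 := by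
        simp
      rw [htop, add_zero]
      have hterm2 : ∀ j ∈ Icc 1 n,
          C (((n+1).choose j : ℚ) * x * (x + j) ^ (j - 1)) *
              (C (((n + 1 - j : ℕ) : ℚ)) * (X + C (((n+1 : ℕ) : ℚ) - j + b)) ^ (n - j))
          = C ((((n+1 : ℕ) : ℚ))) *
              (C ((n.choose j : ℚ) * x * (x + j) ^ (j - 1)) *
                (X + C ((n : ℚ) - j + (b+1))) ^ (n - j)) := by
        intro j hj
        have hjn : j ≤ n := (mem_Icc.mp hj).2
        have hc : ((n+1 : ℕ) : ℚ) - j + b = (n : ℚ) - j + (b+1) := by push_cast; ring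
        have h1 : ((n+1).choose j : ℚ) * ((n + 1 - j : ℕ) : ℚ)
            = ((n+1 : ℕ) : ℚ) * (n.choose j : ℚ) := by
          have h0 : (n+1).choose j * (n + 1 - j) = (n+1) * n.choose j := by
            rw [← Nat.choose_mul_succ_eq]; ring
          exact_mod_cast congrArg (fun t : ℕ => (t : ℚ)) h0
        rw [hc, ← mul_assoc, ← mul_assoc, ← C_mul, ← C_mul]
        congr 1
        rw [Polynomial.C_inj]
        linear_combination (x * (x + (j:ℚ)) ^ (j - 1)) * h1
      rw [Finset.sum_congr rfl hterm2, ← Finset.mul_sum]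
      have IH' := IH x (b+1)
      rw [show (x + ((n+1:ℕ):ℚ) + b) = x + (n:ℚ) + (b+1) from by push_cast; ring,
          show (((n+1:ℕ):ℚ) + b) = (n:ℚ) + (b+1) from by push_cast; ring,
          Nat.add_sub_cancel, IH']
      ring
    -- evaluations at a := -(x + (n+1) + b) agree
    set a : ℚ := -(x + ((n+1 : ℕ) : ℚ) + b) with ha
    have he : eval a L = eval a R := by
      rw [hL, hR]
      simp only [eval_add, eval_pow, eval_mul, eval_X, eval_C, eval_finset_sum]
      rw [show a + (x + ((n+1:ℕ):ℚ) + b) = 0 from by rw [ha]; ring, zero_pow (by omega)]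
      have hFD := fd_sum_zero (n+1) n (by omega) x
      rw [Finset.sum_range_succ'] at hFD
      have := congrArg (fun z => (-1 : ℚ) ^ (n+1) * x * z) hFD
      simp only [mul_zero, mul_add, Finset.mul_sum] at this
      rw [sum_Icc_one]
      have hmatch : ∀ i ∈ range (n+1),
          (((n+1).choose (1+i) : ℚ) * x * (x + (1+i : ℕ)) ^ ((1+i) - 1)) *
            (a + (((n+1:ℕ):ℚ) - (1+i : ℕ) + b)) ^ (n + 1 - (1+i))
          = (-1:ℚ) ^ (n+1) * x * ((-1) ^ (i+1) * ((n+1).choose (i+1) : ℚ) * (x + (i+1 : ℕ)) ^ n) := by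
        intro i hi
        have hin : i ≤ n := by simpa using Nat.lt_succ_iff.mp (mem_range.mp hi)
        have h2 : a + (((n+1:ℕ):ℚ) - (1+i : ℕ) + b) = -(x + ((1+i : ℕ) : ℚ)) := by
          rw [ha]; push_cast; ring
        rw [h2, show (1+i) - 1 = i from by omega, show n + 1 - (1+i) = n - i from by omega]
        rw [neg_pow, show (1+i : ℕ) = (i+1 : ℕ) from by omega]
        have hsplit : (x + ((i+1 : ℕ) : ℚ)) ^ i * (x + ((i+1 : ℕ) : ℚ)) ^ (n - i)
            = (x + ((i+1 : ℕ) : ℚ)) ^ n := by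
          rw [← pow_add, show i + (n - i) = n from by omega]
        have hsign : (-1 : ℚ) ^ (n - i) = (-1) ^ (n+1) * (-1) ^ (i+1) := by
          rw [← pow_add, show (n+1) + (i+1) = (n - i) + 2*(i+1) from by omega, pow_add, pow_mul]
          simp
        rw [hsign]
        linear_combination ((-1:ℚ)^(n+1) * (-1)^(i+1) * (((n+1).choose (i+1)):ℚ) * x) * hsplit
      rw [Finset.sum_congr rfl hmatch]
      rw [show a + (((n+1 : ℕ) : ℚ) + b) = -x from by rw [ha]; ring]
      push_cast [Nat.choose_zero_right] at this ⊢
      linear_combination (-1 : ℚ) * this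
    -- conclude L = R
    have h0 : derivative (L - R) = 0 := by rw [derivative_sub, hd, sub_self]
    have hC := Polynomial.eq_C_of_derivative_eq_zero h0
    have hc0 : (L - R).coeff 0 = 0 := by
      have h2 := congrArg (eval a) hC
      rw [eval_sub, he, sub_self, eval_C] at h2
      exact h2.symm
    rw [hc0, map_zero, sub_eq_zero] at hC
    exact hC

lemma abel_scalar (n : ℕ) (x y : ℚ) :
    (x + y + (n:ℚ)) ^ n = (y + (n:ℚ)) ^ n +
      ∑ j ∈ Icc 1 n, (n.choose j : ℚ) * x * (x + (j:ℚ)) ^ (j - 1)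
        * (y + (n:ℚ) - (j:ℚ)) ^ (n - j) := by
  have h := congrArg (Polynomial.eval y) (abel_poly n x 0)
  simp only [Polynomial.eval_pow, Polynomial.eval_add, Polynomial.eval_mul, Polynomial.eval_X,
    Polynomial.eval_C, Polynomial.eval_finset_sum] at h
  rw [show y + (x + (n:ℚ) + 0) = x + y + n from by ring,
      show y + ((n:ℚ) + 0) = y + n from by ring] at h
  rw [h]
  congr 1
  apply Finset.sum_congr rfl
  intro j hj
  rw [show y + ((n:ℚ) - j + 0) = y + n - j from by ring]

lemma hurwitz_scalar (n : ℕ) (hn : 1 ≤ n) (x y : ℚ) :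
    (x + y) * (x + y + (n:ℚ)) ^ (n-1) =
      x * (x + (n:ℚ)) ^ (n-1) + y * (y + (n:ℚ)) ^ (n-1) +
        x * y * ∑ j ∈ Icc 1 (n-1), (n.choose j : ℚ) * (x + (j:ℚ)) ^ (j - 1)
          * (y + ((n - j : ℕ):ℚ)) ^ (n - j - 1) := by
  obtain ⟨m, rfl⟩ : ∃ m, n = m + 1 := ⟨n-1, by omega⟩
  simp only [Nat.add_sub_cancel]
  have hA := abel_scalar (m+1) x y
  have hB := abel_scalar m x (y+1)
  rw [Finset.sum_Icc_succ_top (by omega : 1 ≤ m+1)] at hA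
  have hsplit : ∀ j ∈ Icc 1 m,
      (((m+1).choose j : ℚ)) * x * (x + (j:ℚ)) ^ (j - 1) * (y + ((m+1:ℕ):ℚ) - (j:ℚ)) ^ (m + 1 - j)
      = y * ((((m+1).choose j : ℚ)) * x * (x + (j:ℚ)) ^ (j-1) * (y + ((m+1:ℕ):ℚ) - (j:ℚ)) ^ (m - j))
        + (((m+1:ℕ):ℚ)) * (((m.choose j : ℚ)) * x * (x + (j:ℚ)) ^ (j-1)
            * ((y+1) + (m:ℚ) - (j:ℚ)) ^ (m - j)) := by
    intro j hj
    have hjm := mem_Icc.mp hj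
    have hpow : (y + ((m+1:ℕ):ℚ) - (j:ℚ)) ^ (m + 1 - j)
        = (y + ((m+1:ℕ):ℚ) - (j:ℚ)) ^ (m - j) * (y + ((m+1:ℕ):ℚ) - (j:ℚ)) := by
      rw [← pow_succ, show m - j + 1 = m + 1 - j from by omega]
    have h1 : ((m+1).choose j : ℚ) * (((m+1:ℕ):ℚ) - (j:ℚ)) = ((m+1:ℕ):ℚ) * (m.choose j : ℚ) := by
      have h0 : (m+1).choose j * (m + 1 - j) = (m+1) * m.choose j := by
        rw [← Nat.choose_mul_succ_eq]; ring
      have h2 : (((m+1) - j : ℕ) : ℚ) = ((m+1:ℕ):ℚ) - (j:ℚ) := by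
        push_cast [Nat.cast_sub (by omega : j ≤ m+1)]; ring
      rw [← h2]
      exact_mod_cast congrArg (fun t : ℕ => (t:ℚ)) h0
    have hbase : (y + ((m+1:ℕ):ℚ) - (j:ℚ)) = ((y+1) + (m:ℚ) - (j:ℚ)) := by push_cast; ring
    rw [hpow, hbase]
    push_cast at h1 ⊢
    linear_combination (x * (x + (j:ℚ))^(j-1) * ((y+1) + (m:ℚ) - (j:ℚ))^(m-j)) * h1
  rw [Finset.sum_congr rfl hsplit, Finset.sum_add_distrib, ← Finset.mul_sum, ← Finset.mul_sum] at hA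
  simp only [Nat.choose_self, Nat.cast_one, one_mul, Nat.add_sub_cancel, Nat.sub_self,
    sub_self, pow_zero, mul_one, add_sub_cancel_right] at hA
  have hxy : x * y * (∑ j ∈ Icc 1 m, ((m+1).choose j : ℚ) * (x + (j:ℚ)) ^ (j - 1)
        * (y + ((m + 1 - j : ℕ):ℚ)) ^ (m + 1 - j - 1))
      = y * ∑ j ∈ Icc 1 m, (((m+1).choose j : ℚ)) * x * (x + (j:ℚ)) ^ (j-1)
          * (y + ((m+1:ℕ):ℚ) - (j:ℚ)) ^ (m - j) := by
    rw [Finset.mul_sum, Finset.mul_sum]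
    apply Finset.sum_congr rfl
    intro j hj
    have hjm := mem_Icc.mp hj
    rw [show (((m+1) - j : ℕ) : ℚ) = ((m+1:ℕ):ℚ) - (j:ℚ) from by
          push_cast [Nat.cast_sub (by omega : j ≤ m+1)]; ring,
        show m + 1 - j - 1 = m - j from by omega]
    ring
  rw [hxy]
  push_cast at hA hB ⊢
  linear_combination hA - ((m:ℚ)+1) * hB

open Finset MvPolynomial

/-- The classical Abel–Hurwitz binomial identity, obtained from Hurwitz's identity by setting
`z_1 = ⋯ = z_n = 1`: for `n ≥ 1`, as polynomials in `x = X 0` and `y = X 1` over `ℚ`,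
`(x+y)(x+y+n)^{n-1} = x(x+n)^{n-1} + y(y+n)^{n-1}
   + xy ∑_{j=1}^{n-1} C(n,j)(x+j)^{j-1}(y+n-j)^{n-j-1}`. -/
theorem abel_hurwitz (n : ℕ) (hn : 1 ≤ n) :
    ((X 0 : MvPolynomial (Fin 2) ℚ) + X 1) * (X 0 + X 1 + (n : MvPolynomial (Fin 2) ℚ)) ^ (n - 1) =
      X 0 * (X 0 + (n : MvPolynomial (Fin 2) ℚ)) ^ (n - 1) +
        X 1 * (X 1 + (n : MvPolynomial (Fin 2) ℚ)) ^ (n - 1) +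
        X 0 * X 1 *
          ∑ j ∈ Finset.Icc 1 (n - 1),
            ((Nat.choose n j : ℕ) : MvPolynomial (Fin 2) ℚ) *
              (X 0 + (j : MvPolynomial (Fin 2) ℚ)) ^ (j - 1) *
              (X 1 + ((n - j : ℕ) : MvPolynomial (Fin 2) ℚ)) ^ (n - j - 1) := by
  apply MvPolynomial.funext
  intro v
  simp only [map_add, map_mul, map_pow, eval_X, map_natCast, map_sum]
  exact hurwitz_scalar n hn (v 0) (v 1)
end

section
/- For any n \ge 1, \sum_{I \subseteq \{1,...,n\}, 0 < |I| < n} Z_I^{|I|-1}(Z - Z_I)^{n-|I|-1} = 2(n-1) Z^{n-2} as polynomials in z_1,...,z_n, where Z = z_1 + ... + z_n and Z_I = \sum_{i \in I} z_i. -/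
section lqppAux
open Finset Polynomial


private lemma hasse_top {R : Type*} [CommRing R] (p : R[X]) :
    hasseDeriv p.natDegree p = C (p.coeff p.natDegree) := by
  ext n
  cases n with
  | zero => simp [hasseDeriv_coeff]
  | succ m =>
    rw [hasseDeriv_coeff]
    rw [coeff_eq_zero_of_natDegree_lt (by omega), coeff_C]
    simp

private lemma lc_taylor {R : Type*} [CommRing R] (p : R[X]) (r : R) :
    (taylor r p).leadingCoeff = p.leadingCoeff := by
  unfold Polynomial.leadingCoeff
  rw [natDegree_taylor, taylor_coeff, hasse_top, eval_C]

private lemma alt_sum {R : Type*} [CommRing R] {α : Type*} [DecidableEq α] (z : α → R) :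
    ∀ (s : Finset α) (P : R[X]), P.natDegree < s.card →
      ∑ I ∈ s.powerset, (-1 : R) ^ I.card * P.eval (∑ i ∈ I, z i) = 0 := by
  intro s
  induction s using Finset.cons_induction with
  | empty => intro P hP; simp at hP
  | cons a t ha ih =>
    intro P hP
    rw [Finset.cons_eq_insert, Finset.sum_powerset_insert ha]
    set Q : R[X] := P - taylor (z a) P with hQdef
    have key : ∀ I ∈ t.powerset,
        (-1:R)^(insert a I).card * P.eval (∑ i ∈ insert a I, z i)
        = (-1:R)^I.card * Q.eval (∑ i ∈ I, z i)
          - (-1:R)^I.card * P.eval (∑ i ∈ I, z i) := by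
      intro I hI
      have haI : a ∉ I := fun h => ha (Finset.mem_powerset.mp hI h)
      rw [Finset.card_insert_of_notMem haI, Finset.sum_insert haI, pow_succ, hQdef,
        eval_sub, taylor_eval, add_comm (z a)]
      ring
    rw [Finset.sum_congr rfl key, Finset.sum_sub_distrib]
    have hsum : ∑ I ∈ t.powerset, (-1:R)^I.card * Q.eval (∑ i ∈ I, z i) = 0 := by
      by_cases hQ : Q = 0
      · simp [hQ]
      · apply ih
        have hP0 : P ≠ 0 := by rintro rfl; simp [hQdef] at hQ
        have hT0 : taylor (z a) P ≠ 0 := by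
          intro h
          exact hP0 (taylor_injective (z a) (by simpa using h))
        have hdeg : Q.natDegree < P.natDegree := by
          apply natDegree_lt_natDegree hQ
          exact degree_sub_lt (by rw [degree_eq_natDegree hP0, degree_eq_natDegree hT0,
            natDegree_taylor]) hP0 (lc_taylor P (z a)).symm
        rw [Finset.card_cons] at hP
        omega
    rw [hsum]
    ring

private lemma hurwitz {R : Type*} [CommRing R] [IsDomain R] [CharZero R]
    {α : Type*} [DecidableEq α] (z : α → R) (s : Finset α) :
    ∀ x : R,
      (X + C (x + ∑ i ∈ s, z i)) ^ s.card
        = (X + C (∑ i ∈ s, z i)) ^ s.card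
          + ∑ I ∈ s.powerset.filter (· ≠ ∅),
              C (x * (x + ∑ i ∈ I, z i) ^ (I.card - 1)) *
                (X + C (∑ i ∈ s \ I, z i)) ^ (s.card - I.card) := by
  induction s using Finset.strongInduction with
  | _ s ih =>
  intro x
  rcases Finset.eq_empty_or_nonempty s with rfl | hs
  · simp [Finset.filter_singleton]
  have hn : 1 ≤ s.card := Finset.Nonempty.card_pos hs
  -- Step 1 : the inner sum identity, from the induction hypothesis
  have hkey : ∀ a ∈ s,
      ∑ I ∈ ((s.erase a).powerset.filter (· ≠ ∅)),
        C (x * (x + ∑ i ∈ I, z i) ^ (I.card - 1)) *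
          (X + C (∑ i ∈ s \ I, z i)) ^ (s.card - I.card - 1)
      = (X + C (x + ∑ i ∈ s, z i)) ^ (s.card - 1)
          - (X + C (∑ i ∈ s, z i)) ^ (s.card - 1) := by
    intro a ha
    have hta := ih (s.erase a) (Finset.erase_ssubset ha) x
    have happ := congrArg (fun f => f.comp (X + C (z a))) hta
    simp only [Polynomial.add_comp, Polynomial.pow_comp, Polynomial.sum_comp,
      Polynomial.mul_comp, Polynomial.X_comp, Polynomial.C_comp] at happ
    have hca : s.card - 1 = (s.erase a).card := by
      rw [Finset.card_erase_of_mem ha]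
    have h1 : X + C (z a) + C (x + ∑ i ∈ s.erase a, z i) = X + C (x + ∑ i ∈ s, z i) := by
      rw [add_assoc, ← C_add, ← Finset.add_sum_erase s z ha]; ring_nf
    have h2 : X + C (z a) + C (∑ i ∈ s.erase a, z i) = X + C (∑ i ∈ s, z i) := by
      rw [add_assoc, ← C_add, ← Finset.add_sum_erase s z ha]
    rw [h1, h2, Finset.card_erase_of_mem ha] at happ
    have hSeq : ∑ I ∈ ((s.erase a).powerset.filter (· ≠ ∅)),
        C (x * (x + ∑ i ∈ I, z i) ^ (I.card - 1)) *
          (X + C (∑ i ∈ s \ I, z i)) ^ (s.card - I.card - 1)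
        = ∑ I ∈ ((s.erase a).powerset.filter (· ≠ ∅)),
        C (x * (x + ∑ i ∈ I, z i) ^ (I.card - 1)) *
          (X + C (z a) + C (∑ i ∈ (s.erase a) \ I, z i)) ^ (s.card - 1 - I.card) := by
      refine Finset.sum_congr rfl fun I hI => ?_
      rw [Finset.mem_filter, Finset.mem_powerset] at hI
      have haI : a ∉ I := fun h => (Finset.notMem_erase a s) (hI.1 h)
      have haSI : a ∈ s \ I := Finset.mem_sdiff.mpr ⟨ha, haI⟩
      have h3 : X + C (z a) + C (∑ i ∈ (s.erase a) \ I, z i)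
          = X + C (∑ i ∈ s \ I, z i) := by
        rw [add_assoc, ← C_add, Finset.erase_sdiff_comm, ← Finset.add_sum_erase _ z haSI]
      have h4 : s.card - I.card - 1 = s.card - 1 - I.card := by omega
      rw [h3, h4]
    rw [hSeq]
    linear_combination -happ
  set F := s.powerset.filter (· ≠ ∅) with hF
  set Zs := ∑ i ∈ s, z i with hZs
  set q := (X + C Zs) ^ s.card
      + ∑ I ∈ F, C (x * (x + ∑ i ∈ I, z i) ^ (I.card - 1)) *
          (X + C (∑ i ∈ s \ I, z i)) ^ (s.card - I.card) with hq
  -- derivative equality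
  have hder : derivative ((X + C (x + Zs)) ^ s.card) = derivative q := by
    rw [hq, derivative_add, derivative_pow, derivative_pow, derivative_X_add_C,
      derivative_X_add_C, mul_one, mul_one, derivative_sum]
    have hterm : ∀ I ∈ F,
        derivative (C (x * (x + ∑ i ∈ I, z i) ^ (I.card - 1)) *
            (X + C (∑ i ∈ s \ I, z i)) ^ (s.card - I.card))
        = ∑ a ∈ s \ I, C (x * (x + ∑ i ∈ I, z i) ^ (I.card - 1)) *
            (X + C (∑ i ∈ s \ I, z i)) ^ (s.card - I.card - 1) := by
      intro I hI
      rw [hF, Finset.mem_filter, Finset.mem_powerset] at hI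
      rw [derivative_C_mul, derivative_pow, derivative_X_add_C, mul_one,
        Finset.sum_const, Finset.card_sdiff_of_subset hI.1, nsmul_eq_mul, ← C_eq_natCast]
      ring
    rw [Finset.sum_congr rfl hterm]
    have hcond : ∀ (I : Finset α) (a : α), I ∈ F ∧ a ∈ s \ I
        ↔ I ∈ (s.erase a).powerset.filter (· ≠ ∅) ∧ a ∈ s := by
      intro I a
      simp only [hF, Finset.mem_filter, Finset.mem_powerset, Finset.mem_sdiff,
        Finset.subset_erase]
      tauto
    rw [Finset.sum_comm' hcond]
    rw [Finset.sum_congr rfl hkey, Finset.sum_const, nsmul_eq_mul, ← C_eq_natCast]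
    ring
  -- evaluation at y₀ = -(x + Zs)
  have heval : Polynomial.eval (-(x + Zs)) ((X + C (x + Zs)) ^ s.card)
      = Polynomial.eval (-(x + Zs)) q := by
    have hP : (C x * (X + C x) ^ (s.card - 1)).natDegree < s.card := by
      have h1 : (C x * (X + C x) ^ (s.card - 1)).natDegree
          ≤ (C x).natDegree + ((X + C x) ^ (s.card - 1)).natDegree := natDegree_mul_le
      have h2 : ((X + C x) ^ (s.card - 1)).natDegree ≤ (s.card - 1) * (X + C x).natDegree :=
        natDegree_pow_le
      have h3 : (X + C x).natDegree = 1 := natDegree_X_add_C x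
      rw [natDegree_C] at h1
      rw [h3, mul_one] at h2
      omega
    have halt := alt_sum z s (C x * (X + C x) ^ (s.card - 1)) hP
    have hsplit : ∑ I ∈ s.powerset,
          (-1:R) ^ I.card * Polynomial.eval (∑ i ∈ I, z i) (C x * (X + C x) ^ (s.card - 1))
        = Polynomial.eval (∑ i ∈ (∅ : Finset α), z i) (C x * (X + C x) ^ (s.card - 1))
          + ∑ I ∈ F,
            (-1:R) ^ I.card * Polynomial.eval (∑ i ∈ I, z i) (C x * (X + C x) ^ (s.card - 1)) := by
      rw [hF, Finset.filter_ne',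
        ← Finset.add_sum_erase _ _ (Finset.empty_mem_powerset s)]
      simp
    rw [hsplit] at halt
    simp only [Finset.sum_empty, eval_mul, eval_C, eval_pow, eval_add, eval_X, zero_add] at halt
    have hterm2 : ∀ I ∈ F,
        x * (x + ∑ i ∈ I, z i) ^ (I.card - 1) * (-(x + Zs) + ∑ i ∈ s \ I, z i) ^ (s.card - I.card)
        = (-1:R)^s.card * ((-1:R) ^ I.card *
            (x * ((∑ i ∈ I, z i) + x) ^ (s.card - 1))) := by
      intro I hI
      rw [hF, Finset.mem_filter, Finset.mem_powerset] at hI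
      have hcard : I.card ≤ s.card := Finset.card_le_card hI.1
      have h1 : 1 ≤ I.card := Finset.card_pos.mpr (Finset.nonempty_iff_ne_empty.mpr hI.2)
      have hzz : -(x + Zs) + ∑ i ∈ s \ I, z i = -(x + ∑ i ∈ I, z i) := by
        have hss := Finset.sum_sdiff (f := z) hI.1
        rw [hZs, ← hss]; ring
      rw [hzz, neg_pow]
      have hpp : (x + ∑ i ∈ I, z i) ^ (I.card - 1) * (x + ∑ i ∈ I, z i) ^ (s.card - I.card)
          = (x + ∑ i ∈ I, z i) ^ (s.card - 1) := by
        rw [← pow_add]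
        congr 1
        omega
      have hsign : (-1:R) ^ (s.card - I.card) = (-1:R) ^ s.card * (-1:R) ^ I.card := by
        rw [← pow_add, neg_one_pow_eq_pow_mod_two,
          neg_one_pow_eq_pow_mod_two (n := s.card + I.card)]
        congr 1
        omega
      rw [hsign]
      linear_combination ((-1:R) ^ s.card * (-1:R) ^ I.card * x) * hpp
    rw [hq]
    simp only [eval_add, eval_pow, eval_X, eval_C, eval_finset_sum, eval_mul]
    rw [Finset.sum_congr rfl hterm2, ← Finset.mul_sum]
    have hsF : ∑ I ∈ F, ((-1:R) ^ I.card * (x * ((∑ i ∈ I, z i) + x) ^ (s.card - 1)))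
        = -(x * x ^ (s.card - 1)) := by
      linear_combination halt
    rw [hsF]
    have hxx : x * x ^ (s.card - 1) = x ^ s.card := by
      rw [← pow_succ']
      congr 1
      omega
    have hzero : -(x + Zs) + (x + Zs) = 0 := by ring
    have hmx : -(x + Zs) + Zs = -x := by ring
    rw [hzero, zero_pow (by omega : s.card ≠ 0), hmx, neg_pow, hxx]
    ring
  -- conclude
  have hsub : derivative ((X + C (x + Zs)) ^ s.card - q) = 0 := by
    rw [derivative_sub, hder, sub_self]
  have heq := eq_C_of_derivative_eq_zero hsub
  have h0 : Polynomial.eval (-(x + Zs)) ((X + C (x + Zs)) ^ s.card - q) = 0 := by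
    rw [eval_sub, heval, sub_self]
  rw [heq, eval_C] at h0
  have : (X + C (x + Zs)) ^ s.card - q = 0 := by rw [heq, h0, map_zero]
  exact sub_eq_zero.mp this

private lemma c1 {S : Type*} [CommSemiring S] (a : S) (m : ℕ) :
    ((Polynomial.X + Polynomial.C a) ^ m).coeff 1 = (m : S) * a ^ (m - 1) := by
  rw [Polynomial.coeff_X_add_C_pow, Nat.choose_one_right]
  ring

private lemma cnat {S : Type*} [CommSemiring S] (m : ℕ) (p : Polynomial S) (k : ℕ) :
    ((m : Polynomial S) * p).coeff k = (m : S) * p.coeff k := by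
  rw [← Polynomial.C_eq_natCast, Polynomial.coeff_C_mul]

private lemma cterm {S : Type*} [CommSemiring S] (a b : S) (k m : ℕ) :
    (Polynomial.X * (Polynomial.X + Polynomial.C a) ^ k *
        ((m : Polynomial S) * Polynomial.C b)).coeff 1
      = a ^ k * ((m : S) * b) := by
  rw [← Polynomial.C_eq_natCast, ← Polynomial.C_mul, Polynomial.coeff_mul_C]
  have h0 : (Polynomial.X * (Polynomial.X + Polynomial.C a) ^ k).coeff 1
      = ((Polynomial.X + Polynomial.C a) ^ k).coeff 0 :=
    Polynomial.coeff_X_mul ((Polynomial.X + Polynomial.C a) ^ k) 0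
  rw [h0, Polynomial.coeff_X_add_C_pow]
  simp [mul_comm]

open MvPolynomial in
private lemma lqA (n : ℕ) :
    ∑ I ∈ Finset.univ.filter (fun I : Finset (Fin n) => ¬ I = ∅),
        (∑ j ∈ I, (X j : MvPolynomial (Fin n) ℚ)) ^ (I.card - 1) *
          (((n - I.card : ℕ) : MvPolynomial (Fin n) ℚ) *
            ((∑ j, X j) - ∑ j ∈ I, X j) ^ (n - I.card - 1))
      = (n : MvPolynomial (Fin n) ℚ) * (((n - 1 : ℕ) : MvPolynomial (Fin n) ℚ) *
          (∑ j, X j) ^ (n - 2)) := by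
  classical
  have hh := hurwitz (R := Polynomial (MvPolynomial (Fin n) ℚ))
      (fun i => Polynomial.C (X i)) Finset.univ Polynomial.X
  have hcard : (Finset.univ : Finset (Fin n)).card = n := by simp
  rw [hcard] at hh
  have hCsum : ∀ t : Finset (Fin n),
      (∑ i ∈ t, Polynomial.C (X i : MvPolynomial (Fin n) ℚ)) = Polynomial.C (∑ i ∈ t, X i) :=
    fun t => (map_sum Polynomial.C (fun i => X i) t).symm
  simp only [hCsum] at hh
  have h1 := congrArg (fun p => (p.coeff 1).coeff 1) hh
  simp only [Polynomial.coeff_add, Polynomial.finset_sum_coeff, Polynomial.coeff_C_mul,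
    c1, cnat, cterm, ← Polynomial.C_pow, Polynomial.coeff_C] at h1
  norm_num at h1
  rw [show n - 1 - 1 = n - 2 by omega] at h1
  exact h1.symm


end lqppAux

open Finset MvPolynomial

/-- The `i = 1` case of equation (lqpp) of Getzler–Okounkov–Pandharipande: for `n ≥ 1`,
`∑_{∅ ≠ I ⊊ {1,…,n}} Z_I^{|I|-1} (Z-Z_I)^{n-|I|-1} = 2(n-1) Z^{n-2}`
as polynomials in `z_1, …, z_n` over `ℚ`. -/
theorem lqpp_i_eq_one (n : ℕ) (hn : 1 ≤ n) :
    ∑ I ∈ Finset.univ.powerset.filter (fun I : Finset (Fin n) => I ≠ ∅ ∧ I ≠ Finset.univ),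
        (∑ j ∈ I, X j) ^ (I.card - 1) *
          ((∑ j, X j) - ∑ j ∈ I, X j) ^ (n - I.card - 1) =
      ((2 * (n - 1) : ℕ) : MvPolynomial (Fin n) ℚ) * (∑ j, X j) ^ (n - 2) := by
  classical
  set A := MvPolynomial (Fin n) ℚ with hA
  set F2 := Finset.univ.powerset.filter
      (fun I : Finset (Fin n) => I ≠ ∅ ∧ I ≠ Finset.univ) with hF2
  have hcu : (Finset.univ : Finset (Fin n)).card = n := by simp
  have hmem : ∀ I, I ∈ F2 ↔ (I ≠ ∅ ∧ I ≠ Finset.univ) := by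
    intro I
    simp [hF2, Finset.mem_filter, Finset.mem_powerset]
  -- A-identity restricted to F2
  have hApre := lqA n
  have hAeq : ∑ I ∈ F2,
      (∑ j ∈ I, (X j : A)) ^ (I.card - 1) *
        (((n - I.card : ℕ) : A) * ((∑ j, X j) - ∑ j ∈ I, X j) ^ (n - I.card - 1))
      = (n : A) * (((n - 1 : ℕ) : A) * (∑ j, X j) ^ (n - 2)) := by
    rw [← hApre]
    apply Finset.sum_subset
    · intro I hI
      rw [hmem] at hI
      simp [hI.1]
    · intro I hI1 hI2
      have : I = Finset.univ := by
        by_contra hne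
        exact hI2 ((hmem I).mpr ⟨by simpa using hI1, hne⟩)
      subst this
      rw [hcu]
      simp
  -- B-identity via complementation
  have hBeq : ∑ I ∈ F2,
      ((∑ j, X j) - ∑ j ∈ I, (X j : A)) ^ (n - I.card - 1) *
        ((I.card : A) * (∑ j ∈ I, X j) ^ (I.card - 1))
      = (n : A) * (((n - 1 : ℕ) : A) * (∑ j, X j) ^ (n - 2)) := by
    rw [← hAeq]
    refine Finset.sum_nbij' (fun I => Finset.univ \ I) (fun I => Finset.univ \ I) ?_ ?_ ?_ ?_ ?_
    · intro I hI
      rw [hmem] at hI ⊢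
      constructor
      · intro h
        rw [Finset.sdiff_eq_empty_iff_subset] at h
        exact hI.2 (Finset.univ_subset_iff.mp h)
      · intro h
        apply hI.1
        have := congrArg (fun s => Finset.univ \ s) h
        simpa using this
    · intro I hI
      rw [hmem] at hI ⊢
      constructor
      · intro h
        rw [Finset.sdiff_eq_empty_iff_subset] at h
        exact hI.2 (Finset.univ_subset_iff.mp h)
      · intro h
        apply hI.1
        have := congrArg (fun s => Finset.univ \ s) h
        simpa using this
    · intro I _; simp
    · intro I _; simp
    · intro I hI
      rw [hmem] at hI
      have hle : I.card ≤ n := le_trans (Finset.card_le_univ I) (le_of_eq hcu)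
      have h1 : 1 ≤ I.card := Finset.card_pos.mpr (Finset.nonempty_iff_ne_empty.mpr hI.1)
      have hcs : (Finset.univ \ I).card = n - I.card := by
        rw [Finset.card_sdiff_of_subset (Finset.subset_univ I), hcu]
      have hzs : ∑ j ∈ Finset.univ \ I, (X j : A) = (∑ j, X j) - ∑ j ∈ I, X j := by
        rw [Finset.sum_sdiff_eq_sub (Finset.subset_univ I)]
      rw [hzs, hcs, show n - (n - I.card) = I.card by omega, sub_sub_cancel]
  -- add the two identities
  have hsum : ∑ I ∈ F2, (n : A) *
      ((∑ j ∈ I, X j) ^ (I.card - 1) * ((∑ j, X j) - ∑ j ∈ I, X j) ^ (n - I.card - 1))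
      = (n : A) * (((2 * (n - 1) : ℕ) : A) * (∑ j, X j) ^ (n - 2)) := by
    have hcomb : ∀ I ∈ F2,
        (n : A) * ((∑ j ∈ I, X j) ^ (I.card - 1) *
            ((∑ j, X j) - ∑ j ∈ I, X j) ^ (n - I.card - 1))
        = (∑ j ∈ I, (X j : A)) ^ (I.card - 1) *
            (((n - I.card : ℕ) : A) * ((∑ j, X j) - ∑ j ∈ I, X j) ^ (n - I.card - 1))
          + ((∑ j, X j) - ∑ j ∈ I, (X j : A)) ^ (n - I.card - 1) *
            ((I.card : A) * (∑ j ∈ I, X j) ^ (I.card - 1)) := by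
      intro I hI
      have hle : I.card ≤ n := le_trans (Finset.card_le_univ I) (le_of_eq hcu)
      have : ((n - I.card : ℕ) : A) = (n : A) - (I.card : A) := by
        push_cast [Nat.cast_sub hle]
        ring
      rw [this]
      ring
    rw [Finset.sum_congr rfl hcomb, Finset.sum_add_distrib, hAeq, hBeq]
    push_cast
    ring
  rw [← Finset.mul_sum] at hsum
  have hn0 : (n : A) ≠ 0 := by
    simp only [ne_eq, Nat.cast_eq_zero]
    omega
  exact mul_left_cancel₀ hn0 hsum
end

section
/- If a sequence of formal power series \phi_n(z_1,...,z_n) \in \mathbb{Q}[[\varepsilon]][[z_1,...,z_n]] satisfies \phi_1(z) = \log\left(\frac{\varepsilon z/2}{\sinh(\varepsilon z/2)}\right) and the differential recursion \frac{\partial}{\partial z_i} \phi_n(z_1,...,z_n) = \sum_{I \ni i, I \ne \{1,...,n\}} (Z - Z_I)^{n-|I|-1} \phi_{|I|}(z_I) + Z^{n-2}\left(1 - \frac{\varepsilon Z/2}{\tanh(\varepsilon Z/2)}\right) for all i and n \ge 2, together with \phi_n(0,...,0) = 0, then \phi_2(z_1, z_2) = -\sum_{k=2}^\infty \frac{\varepsilon^k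 B_k}{k!}\left(\frac{(z_1+z_2)^{k+1}}{k+1} + \frac{z_1^{k+1} + z_2^{k+1}}{k(k+1)}\right). -/
open Nat Finset PowerSeries

noncomputable section


/-- The coefficient ring `ℚ[[ε]]`. -/
abbrev Rε : Type := PowerSeries ℚ

/-- Formal partial derivative `∂/∂z_i` of a power series in `z_1, z_2`. -/
def pderiv2 (i : Fin 2) (F : MvPowerSeries (Fin 2) Rε) : MvPowerSeries (Fin 2) Rε :=
  fun d => ((d i + 1 : ℕ) : Rε) * F (d + Finsupp.single i 1)

/-- The one-variable series `sinh(εz/2)/(εz/2) ∈ ℚ[[ε]][[z]]`: the coefficient of `z^k`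
(for even `k`) is `ε^k/(2^k (k+1)!)`. -/
def shEps : PowerSeries Rε :=
  PowerSeries.mk fun k =>
    if k % 2 = 0 then (PowerSeries.X : Rε) ^ k *
      PowerSeries.C (R := ℚ) (((2 ^ k * Nat.factorial (k + 1) : ℕ) : ℚ)⁻¹) else 0

/-- `ε` as a constant of `ℚ[[ε]][[z_1,z_2]]`. -/
def eps2 : MvPowerSeries (Fin 2) Rε := MvPowerSeries.C (σ := Fin 2) (R := Rε) PowerSeries.X

/-- `Z = z_1 + z_2`. -/
def Z2 : MvPowerSeries (Fin 2) Rε := MvPowerSeries.X 0 + MvPowerSeries.X 1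

/-- `sinh(εZ/2)/(εZ/2) ∈ ℚ[[ε]][[z_1,z_2]]` (truncated sum = full sum coefficientwise). -/
def shZ2 : MvPowerSeries (Fin 2) Rε := fun d =>
  ∑ m ∈ Finset.range (d 0 + d 1 + 1),
    MvPowerSeries.coeff (R := Rε) d
      (eps2 ^ (2 * m) * Z2 ^ (2 * m) *
        MvPowerSeries.C (σ := Fin 2) (R := Rε)
          (PowerSeries.C (R := ℚ) (((2 ^ (2 * m) * Nat.factorial (2 * m + 1) : ℕ) : ℚ)⁻¹)))

/-- `cosh(εZ/2) ∈ ℚ[[ε]][[z_1,z_2]]` (truncated sum = full sum coefficientwise). -/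
def chZ2 : MvPowerSeries (Fin 2) Rε := fun d =>
  ∑ m ∈ Finset.range (d 0 + d 1 + 1),
    MvPowerSeries.coeff (R := Rε) d
      (eps2 ^ (2 * m) * Z2 ^ (2 * m) *
        MvPowerSeries.C (σ := Fin 2) (R := Rε)
          (PowerSeries.C (R := ℚ) (((2 ^ (2 * m) * Nat.factorial (2 * m) : ℕ) : ℚ)⁻¹)))

/-- The inclusion `ℚ[[ε]][[z]] → ℚ[[ε]][[z_1,z_2]]` sending `z` to `z_i`. -/
def emb2 (i : Fin 2) (p : PowerSeries Rε) : MvPowerSeries (Fin 2) Rε :=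
  fun d => if d = Finsupp.single i (d i) then PowerSeries.coeff (R := Rε) (d i) p else 0

/-- The claimed value of `f_1[z_1,z_2]`:
`-∑_{k≥2} (ε^k B_k/k!)((z_1+z_2)^{k+1}/(k+1) + (z_1^{k+1}+z_2^{k+1})/(k(k+1)))`. -/
def f1TwoPoint : MvPowerSeries (Fin 2) Rε := fun d =>
  ∑ k ∈ Finset.Icc 2 (d 0 + d 1),
    MvPowerSeries.coeff (R := Rε) d
      (-(MvPowerSeries.C (σ := Fin 2) (R := Rε)
            ((PowerSeries.X : Rε) ^ k * PowerSeries.C (R := ℚ) (bernoulli k / (Nat.factorial k : ℚ)))) *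
        (Z2 ^ (k + 1) * MvPowerSeries.C (σ := Fin 2) (R := Rε) (PowerSeries.C (R := ℚ) (((k : ℚ) + 1)⁻¹)) +
          (MvPowerSeries.X 0 ^ (k + 1) + MvPowerSeries.X 1 ^ (k + 1)) *
            MvPowerSeries.C (σ := Fin 2) (R := Rε) (PowerSeries.C (R := ℚ) (((k : ℚ) * ((k : ℚ) + 1))⁻¹))))


namespace GOP

abbrev Q : Type := PowerSeries ℚ

def shQ : Q := PowerSeries.mk fun k =>
  if k % 2 = 0 then (((2:ℕ) ^ k * Nat.factorial (k + 1) : ℕ) : ℚ)⁻¹ else 0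

def chQ : Q := PowerSeries.mk fun k =>
  if k % 2 = 0 then (((2:ℕ) ^ k * Nat.factorial k : ℕ) : ℚ)⁻¹ else 0

def Bev : Q := PowerSeries.mk fun k =>
  if k = 1 then 0 else bernoulli k / (Nat.factorial k : ℚ)

def gQ : Q := PowerSeries.mk fun k =>
  if 2 ≤ k then -(bernoulli k / ((k : ℚ) * (Nat.factorial k : ℚ))) else 0

def E : Q := rescale (2⁻¹ : ℚ) (exp ℚ)
def E' : Q := rescale (-2⁻¹ : ℚ) (exp ℚ)

lemma coeff_E (n : ℕ) : PowerSeries.coeff (R := ℚ) n E = 2⁻¹ ^ n / (n ! : ℚ) := by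
  simp [E, coeff_rescale, coeff_exp, div_eq_mul_inv, one_div]

lemma coeff_E' (n : ℕ) : PowerSeries.coeff (R := ℚ) n E' = (-2⁻¹) ^ n / (n ! : ℚ) := by
  simp [E', coeff_rescale, coeff_exp, div_eq_mul_inv, one_div]

lemma EE' : E * E' = 1 := by
  rw [E, E', exp_mul_exp_eq_exp_add]
  norm_num [rescale_zero]

lemma EE : E * E = exp ℚ := by
  rw [E, exp_mul_exp_eq_exp_add]
  norm_num [rescale_one]

lemma E_ne : E ≠ 0 := by
  intro h
  have := coeff_E 0
  rw [h] at this
  simp at this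

lemma X_mul_shQ : X * shQ = E - E' := by
  ext n
  rw [map_sub, coeff_E, coeff_E']
  cases n with
  | zero => simp
  | succ m =>
    rw [PowerSeries.coeff_succ_X_mul]
    simp only [shQ, coeff_mk]
    rcases Nat.even_or_odd m with he | ho
    · rw [if_pos (Nat.even_iff.mp he)]
      rw [Odd.neg_pow (Even.add_one he)]
      push_cast
      rw [pow_succ]
      have h1 : ((2:ℚ)⁻¹) ^ m ≠ 0 := by positivity
      have h2 : ((m+1)! : ℚ) ≠ 0 := by positivity
      field_simp
      rw [← mul_pow]; norm_num
    · rw [if_neg (by rw [Nat.odd_iff] at ho; omega)]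
      rw [Even.neg_pow (Odd.add_one ho)]
      ring

lemma chQ_eq : chQ = PowerSeries.C (R := ℚ) 2⁻¹ * (E + E') := by
  ext n
  rw [PowerSeries.coeff_C_mul, map_add, coeff_E, coeff_E']
  simp only [chQ, coeff_mk]
  rcases Nat.even_or_odd n with he | ho
  · rw [if_pos (Nat.even_iff.mp he), he.neg_pow]
    push_cast
    have h1 : ((2:ℚ)⁻¹) ^ n ≠ 0 := by positivity
    have h2 : ((n)! : ℚ) ≠ 0 := by positivity
    field_simp
    rw [← mul_pow]; norm_num
  · rw [if_neg (by rw [Nat.odd_iff] at ho; omega), ho.neg_pow]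
    ring

lemma Bev_eq : Bev = bernoulliPowerSeries ℚ + PowerSeries.C (R := ℚ) 2⁻¹ * X := by
  ext n
  rw [map_add, PowerSeries.coeff_C_mul, PowerSeries.coeff_X]
  simp only [Bev, coeff_mk, bernoulliPowerSeries, coeff_mk]
  rcases n with _ | _ | n
  · norm_num [bernoulli_zero]
  · norm_num [bernoulli_one]
  · norm_num

lemma deriv_rescale_exp (a : ℚ) :
    d⁄dX ℚ (rescale a (exp ℚ)) = PowerSeries.C (R := ℚ) a * rescale a (exp ℚ) := by
  ext n
  rw [PowerSeries.coeff_derivative, PowerSeries.coeff_C_mul, coeff_rescale, coeff_rescale,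
    coeff_exp, coeff_exp]
  simp only [Algebra.algebraMap_self_apply, one_div]
  rw [factorial_succ, pow_succ]
  have h2 : ((n)! : ℚ) ≠ 0 := by positivity
  push_cast
  field_simp

lemma X_mul_DgQ : X * d⁄dX ℚ gQ = 1 - PowerSeries.C (R := ℚ) 2⁻¹ * X - bernoulliPowerSeries ℚ := by
  ext n
  rw [map_sub, map_sub, PowerSeries.coeff_C_mul, PowerSeries.coeff_X, PowerSeries.coeff_one]
  simp only [bernoulliPowerSeries, coeff_mk, Algebra.algebraMap_self_apply]
  rcases n with _ | _ | n
  · simp [bernoulli_zero]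
  · rw [PowerSeries.coeff_succ_X_mul, PowerSeries.coeff_derivative]
    simp [gQ, bernoulli_one]
    norm_num
  · rw [PowerSeries.coeff_succ_X_mul, PowerSeries.coeff_derivative]
    simp only [gQ, coeff_mk]
    rw [if_pos (by omega : 2 ≤ n + 2)]
    have h2 : ((n+2)! : ℚ) ≠ 0 := by positivity
    have h3 : ((n:ℚ) + 2) ≠ 0 := by positivity
    push_cast
    field_simp
    ring

lemma keyK : bernoulliPowerSeries ℚ * (E - E') = X * E' := by
  apply mul_right_cancel₀ E_ne
  calc bernoulliPowerSeries ℚ * (E - E') * E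
      = bernoulliPowerSeries ℚ * (exp ℚ - 1) := by rw [← EE]; rw [← EE']; ring
    _ = X := bernoulliPowerSeries_mul_exp_sub_one ℚ
    _ = X * E' * E := by rw [mul_assoc, mul_comm E' E, EE', mul_one]

lemma X_ne : (X : Q) ≠ 0 := X_ne_zero

lemma I2 : shQ * Bev = chQ := by
  apply mul_left_cancel₀ X_ne
  rw [chQ_eq, Bev_eq, ← mul_assoc, X_mul_shQ]
  have h2 : (PowerSeries.C (R := ℚ) 2⁻¹ : Q) * 2 = 1 := by
    rw [← map_ofNat (PowerSeries.C (R := ℚ)) 2, ← map_mul]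
    norm_num
  linear_combination keyK - X * E' * h2

lemma I1 : shQ * d⁄dX ℚ gQ = -(d⁄dX ℚ shQ) := by
  apply mul_left_cancel₀ X_ne
  apply mul_left_cancel₀ X_ne
  have hD : X * (X * -(d⁄dX ℚ shQ)) = X * shQ - X * (d⁄dX ℚ (X * shQ)) := by
    rw [Derivation.leibniz, derivative_X, smul_eq_mul, smul_eq_mul]
    ring
  rw [hD, show X * (X * (shQ * d⁄dX ℚ gQ)) = (X * shQ) * (X * d⁄dX ℚ gQ) by ring,
    X_mul_shQ, X_mul_DgQ]
  have hDE : d⁄dX ℚ (E - E') = PowerSeries.C (R := ℚ) 2⁻¹ * E + PowerSeries.C (R := ℚ) 2⁻¹ * E' := by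
    rw [map_sub, E, E', deriv_rescale_exp, deriv_rescale_exp]
    rw [map_neg]
    ring
  rw [hDE]
  have h2 : (PowerSeries.C (R := ℚ) 2⁻¹ : Q) * 2 = 1 := by
    rw [← map_ofNat (PowerSeries.C (R := ℚ)) 2, ← map_mul]
    norm_num
  linear_combination (-1 : Q) * keyK + (X * E') * h2



instance : CharZero Rε := by
  refine ⟨fun m n h => ?_⟩
  have := congrArg (PowerSeries.constantCoeff (R := ℚ)) h
  simpa using this
example : NoZeroSMulDivisors ℕ Rε := inferInstance
example : NoZeroDivisors (PowerSeries Rε) := inferInstance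
example : NoZeroDivisors (MvPowerSeries (Fin 2) Rε) := inferInstance

def Phi : Q →+* PowerSeries Rε :=
  (rescale (X : Rε)).comp (PowerSeries.map (PowerSeries.C (R := ℚ)))

lemma coeff_Phi (f : Q) (n : ℕ) :
    PowerSeries.coeff (R := Rε) n (Phi f) = X ^ n * PowerSeries.C (R := ℚ) (PowerSeries.coeff (R := ℚ) n f) := by
  simp [Phi, coeff_rescale, PowerSeries.coeff_map, mul_comm]

lemma shEps_eq : shEps = Phi shQ := by
  ext n
  rw [coeff_Phi]
  simp only [shEps, shQ, coeff_mk]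
  split_ifs <;> simp

lemma derivative_Phi (f : Q) :
    d⁄dX Rε (Phi f) = PowerSeries.C (R := Rε) X * Phi (d⁄dX ℚ f) := by
  ext n : 1
  rw [PowerSeries.coeff_derivative, PowerSeries.coeff_C_mul, coeff_Phi, coeff_Phi,
    PowerSeries.coeff_derivative]
  rw [map_mul]
  have : (PowerSeries.C (R := ℚ)) ((n : ℚ) + 1) = ((n : Rε) + 1) := by
    rw [map_add, map_natCast, map_one]
  rw [this, pow_succ]
  ring

def q1 : PowerSeries Rε := Phi gQ

lemma coeff_zero_gQ : PowerSeries.constantCoeff (R := ℚ) gQ = 0 := by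
  rw [← coeff_zero_eq_constantCoeff]
  simp [gQ]

lemma hq10 : PowerSeries.constantCoeff (R := Rε) q1 = 0 := by
  rw [← coeff_zero_eq_constantCoeff_apply, q1, coeff_Phi]
  simp [gQ]

lemma hq1 : shEps * d⁄dX Rε q1 = -(d⁄dX Rε shEps) := by
  rw [shEps_eq, q1, derivative_Phi, derivative_Phi]
  rw [show Phi shQ * (PowerSeries.C (R := Rε) X * Phi (d⁄dX ℚ gQ))
      = PowerSeries.C (R := Rε) X * (Phi shQ * Phi (d⁄dX ℚ gQ)) by ring, ← map_mul, I1, map_neg]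
  ring

lemma shEps_ne : shEps ≠ 0 := by
  intro h
  have : PowerSeries.coeff (R := Rε) 0 shEps = 1 := by
    simp [shEps]
  rw [h] at this
  simp at this

lemma p1_unique (p1 : PowerSeries Rε) (hp10 : PowerSeries.constantCoeff (R := Rε) p1 = 0)
    (hp1 : shEps * d⁄dX Rε p1 = -(d⁄dX Rε shEps)) : p1 = q1 := by
  have hD : d⁄dX Rε p1 = d⁄dX Rε q1 := mul_left_cancel₀ shEps_ne (hp1.trans hq1.symm)
  exact derivative.ext hD (by rw [hp10, hq10])


lemma fin2_ext {e e' : Fin 2 →₀ ℕ} (h0 : e 0 = e' 0) (h1 : e 1 = e' 1) : e = e' := by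
  ext i
  fin_cases i
  · exact h0
  · exact h1

lemma sa_apply0 (x y : ℕ) : ((Finsupp.single (0 : Fin 2) x + Finsupp.single 1 y : Fin 2 →₀ ℕ)) 0 = x := by
  simp [Finsupp.single_apply]

lemma sa_apply1 (x y : ℕ) : ((Finsupp.single (0 : Fin 2) x + Finsupp.single 1 y : Fin 2 →₀ ℕ)) 1 = y := by
  simp [Finsupp.single_apply]

lemma eq_single_add (d : Fin 2 →₀ ℕ) :
    d = Finsupp.single 0 (d 0) + Finsupp.single 1 (d 1) :=
  fin2_ext (by rw [sa_apply0]) (by rw [sa_apply1])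

lemma coeff_Z2_pow (d : Fin 2 →₀ ℕ) (k : ℕ) :
    MvPowerSeries.coeff (R := Rε) d (Z2 ^ k) =
      if d 0 + d 1 = k then ((k.choose (d 0) : ℕ) : Rε) else 0 := by
  rw [Z2, add_pow, map_sum]
  have hterm : ∀ i, MvPowerSeries.X (0 : Fin 2) ^ i * MvPowerSeries.X 1 ^ (k - i) *
      ((k.choose i : ℕ) : MvPowerSeries (Fin 2) Rε) =
      MvPowerSeries.monomial (R := Rε) (Finsupp.single 0 i + Finsupp.single 1 (k - i))
        ((k.choose i : ℕ) : Rε) := by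
    intro i
    rw [MvPowerSeries.X_pow_eq, MvPowerSeries.X_pow_eq, MvPowerSeries.monomial_mul_monomial,
      ← map_natCast (MvPowerSeries.C (σ := Fin 2) (R := Rε)) (k.choose i)]
    rw [show (MvPowerSeries.C (σ := Fin 2) (R := Rε)) ((k.choose i : ℕ) : Rε)
        = MvPowerSeries.monomial (R := Rε) 0 ((k.choose i : ℕ) : Rε) from rfl,
      MvPowerSeries.monomial_mul_monomial]
    simp
  by_cases h : d 0 + d 1 = k
  · rw [if_pos h]
    rw [Finset.sum_eq_single (d 0)]
    · rw [hterm, show k - d 0 = d 1 by omega, MvPowerSeries.coeff_monomial,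
        if_pos (eq_single_add d)]
    · intro i _ hne
      rw [hterm, MvPowerSeries.coeff_monomial, if_neg, ]
      intro he
      exact hne (by rw [he, sa_apply0])
    · intro hmem
      exact absurd (Finset.mem_range.mpr (by omega)) hmem
  · rw [if_neg h]
    apply Finset.sum_eq_zero
    intro i hi
    rw [Finset.mem_range] at hi
    rw [hterm, MvPowerSeries.coeff_monomial, if_neg]
    intro he
    apply h
    have e0 : d 0 = i := by rw [he, sa_apply0]
    have e1 : d 1 = k - i := by rw [he, sa_apply1]
    omega

lemma coeff_term (k : ℕ) (c : Rε) (d : Fin 2 →₀ ℕ) :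
    MvPowerSeries.coeff (R := Rε) d (eps2 ^ k * Z2 ^ k * MvPowerSeries.C (σ := Fin 2) (R := Rε) c) =
      X ^ k * c * MvPowerSeries.coeff (R := Rε) d (Z2 ^ k) := by
  rw [show eps2 ^ k * Z2 ^ k * MvPowerSeries.C (σ := Fin 2) (R := Rε) c
      = MvPowerSeries.C (σ := Fin 2) (R := Rε) (X ^ k * c) * Z2 ^ k by
    rw [eps2, ← map_pow, map_mul]; ring]
  rw [MvPowerSeries.coeff_C_mul]

def diag (f : Q) : MvPowerSeries (Fin 2) Rε := fun d =>
  (X : Rε) ^ (d 0 + d 1) *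
    PowerSeries.C (R := ℚ) (PowerSeries.coeff (R := ℚ) (d 0 + d 1) f * (((d 0 + d 1).choose (d 0) : ℕ) : ℚ))

lemma sum_even_eq_diag (γ : ℕ → ℚ) (d : Fin 2 →₀ ℕ) :
    ∑ m ∈ Finset.range (d 0 + d 1 + 1),
      MvPowerSeries.coeff (R := Rε) d (eps2 ^ (2 * m) * Z2 ^ (2 * m) *
        MvPowerSeries.C (σ := Fin 2) (R := Rε) (PowerSeries.C (R := ℚ) (γ (2 * m)))) =
    diag (PowerSeries.mk fun k => if k % 2 = 0 then γ k else 0) d := by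
  set n := d 0 + d 1 with hn
  have hco : ∀ m, MvPowerSeries.coeff (R := Rε) d (eps2 ^ (2 * m) * Z2 ^ (2 * m) *
      MvPowerSeries.C (σ := Fin 2) (R := Rε) (PowerSeries.C (R := ℚ) (γ (2 * m)))) =
      if n = 2 * m then X ^ (2 * m) * PowerSeries.C (R := ℚ) (γ (2 * m) * ((n.choose (d 0) : ℕ) : ℚ))
      else 0 := by
    intro m
    rw [coeff_term, coeff_Z2_pow, ← hn]
    split_ifs with h
    · rw [← h, map_mul, map_natCast]
      ring
    · rw [mul_zero]
  simp only [hco]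
  rcases Nat.even_or_odd n with ⟨m₀, hm₀⟩ | ho
  · have hnm : n = 2 * m₀ := by omega
    rw [Finset.sum_eq_single m₀]
    · rw [if_pos hnm, diag, coeff_mk, ← hn, ← hnm, if_pos (by omega : n % 2 = 0)]
    · intro i _ hne
      rw [if_neg (by omega)]
    · intro hmem
      exact absurd (Finset.mem_range.mpr (by omega)) hmem
  · rw [Finset.sum_eq_zero]
    · rw [diag, coeff_mk, ← hn, if_neg (by rw [Nat.odd_iff] at ho; omega)]
      rw [zero_mul, map_zero, mul_zero]
    · intro i _
      rw [if_neg (by rw [Nat.odd_iff] at ho; omega)]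

lemma key2 (f g : ℕ → ℚ) (d : Fin 2 →₀ ℕ) :
    ∑ p ∈ Finset.HasAntidiagonal.antidiagonal d,
      (f (p.1 0 + p.1 1) * (((p.1 0 + p.1 1).choose (p.1 0) : ℕ) : ℚ)) *
      (g (p.2 0 + p.2 1) * (((p.2 0 + p.2 1).choose (p.2 0) : ℕ) : ℚ)) =
    (∑ q ∈ Finset.HasAntidiagonal.antidiagonal (d 0 + d 1), f q.1 * g q.2) *
      (((d 0 + d 1).choose (d 0) : ℕ) : ℚ) := by
  have step1 : ∑ p ∈ Finset.HasAntidiagonal.antidiagonal d,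
      (f (p.1 0 + p.1 1) * (((p.1 0 + p.1 1).choose (p.1 0) : ℕ) : ℚ)) *
      (g (p.2 0 + p.2 1) * (((p.2 0 + p.2 1).choose (p.2 0) : ℕ) : ℚ)) =
      ∑ z ∈ (Finset.HasAntidiagonal.antidiagonal (d 0)) ×ˢ (Finset.HasAntidiagonal.antidiagonal (d 1)),
      (f (z.1.1 + z.2.1) * (((z.1.1 + z.2.1).choose z.1.1 : ℕ) : ℚ)) *
      (g (z.1.2 + z.2.2) * (((z.1.2 + z.2.2).choose z.1.2 : ℕ) : ℚ)) := by
    apply Finset.sum_nbij' (i := fun (p : (Fin 2 →₀ ℕ) × (Fin 2 →₀ ℕ)) => ((p.1 0, p.2 0), (p.1 1, p.2 1)))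
      (j := fun z => (Finsupp.single 0 z.1.1 + Finsupp.single 1 z.2.1,
                      Finsupp.single 0 z.1.2 + Finsupp.single 1 z.2.2))
    · intro p hp
      rw [Finset.HasAntidiagonal.mem_antidiagonal] at hp
      simp only [Finset.mem_product, Finset.HasAntidiagonal.mem_antidiagonal]
      constructor
      · rw [← Finsupp.add_apply, hp]
      · rw [← Finsupp.add_apply, hp]
    · intro z hz
      simp only [Finset.mem_product, Finset.HasAntidiagonal.mem_antidiagonal] at hz
      rw [Finset.HasAntidiagonal.mem_antidiagonal]
      apply fin2_ext
      · rw [Finsupp.add_apply, sa_apply0, sa_apply0]; exact hz.1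
      · rw [Finsupp.add_apply, sa_apply1, sa_apply1]; exact hz.2
    · intro p _
      exact Prod.ext (eq_single_add p.1).symm (eq_single_add p.2).symm
    · intro z _
      simp [Prod.ext_iff, sa_apply0, sa_apply1]
    · intro p _
      rfl
  have step2 : ∀ q ∈ Finset.HasAntidiagonal.antidiagonal (d 0 + d 1),
      f q.1 * g q.2 * (((d 0 + d 1).choose (d 0) : ℕ) : ℚ) =
      ∑ x ∈ Finset.HasAntidiagonal.antidiagonal (d 0),
        f q.1 * g q.2 * ((q.1.choose x.1 * q.2.choose x.2 : ℕ) : ℚ) := by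
    intro q hq
    rw [Finset.HasAntidiagonal.mem_antidiagonal] at hq
    rw [← Finset.mul_sum, ← Nat.cast_sum]
    rw [show ∑ x ∈ Finset.HasAntidiagonal.antidiagonal (d 0), q.1.choose x.1 * q.2.choose x.2
        = (q.1 + q.2).choose (d 0) from (Nat.add_choose_eq q.1 q.2 (d 0)).symm, hq]
  have rhs_eq : (∑ q ∈ Finset.HasAntidiagonal.antidiagonal (d 0 + d 1), f q.1 * g q.2) *
      (((d 0 + d 1).choose (d 0) : ℕ) : ℚ) =
      ∑ x ∈ Finset.HasAntidiagonal.antidiagonal (d 0), ∑ q ∈ Finset.HasAntidiagonal.antidiagonal (d 0 + d 1),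
        f q.1 * g q.2 * ((q.1.choose x.1 * q.2.choose x.2 : ℕ) : ℚ) := by
    rw [Finset.sum_mul, Finset.sum_congr rfl step2, Finset.sum_comm]
  rw [step1, Finset.sum_product, rhs_eq]
  apply Finset.sum_congr rfl
  intro x hx
  rw [Finset.HasAntidiagonal.mem_antidiagonal] at hx
  apply Finset.sum_of_injOn (e := fun y => (x.1 + y.1, x.2 + y.2))
  · intro y _ y' _ hee
    simp only [Prod.ext_iff] at hee
    exact Prod.ext (by omega) (by omega)
  · intro y hy
    simp only [Finset.coe_sort_coe, Finset.mem_coe, Finset.HasAntidiagonal.mem_antidiagonal] at hy ⊢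
    omega
  · intro q hq hqim
    simp only [Finset.mem_coe, Finset.HasAntidiagonal.mem_antidiagonal] at hq
    by_cases h1 : x.1 ≤ q.1 ∧ x.2 ≤ q.2
    · exfalso
      apply hqim
      refine ⟨(q.1 - x.1, q.2 - x.2), ?_, ?_⟩
      · simp only [Finset.coe_sort_coe, Finset.mem_coe, Finset.HasAntidiagonal.mem_antidiagonal]
        omega
      · simp only [Prod.ext_iff]
        constructor <;> omega
    · rcases Nat.lt_or_ge q.1 x.1 with h | h
      · rw [Nat.choose_eq_zero_of_lt h]
        push_cast
        ring
      · have h2 : q.2 < x.2 := by omega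
        rw [Nat.choose_eq_zero_of_lt h2]
        push_cast
        ring
  · intro y hy
    simp only [Finset.mem_coe, Finset.HasAntidiagonal.mem_antidiagonal] at hy
    push_cast
    ring


lemma diag_mul (f g : Q) : diag f * diag g = diag (f * g) := by
  funext d
  have h1 : (diag f * diag g) d = ∑ p ∈ Finset.HasAntidiagonal.antidiagonal d,
      diag f p.1 * diag g p.2 := by
    rw [show (diag f * diag g) d = MvPowerSeries.coeff (R := Rε) d (diag f * diag g) from rfl,
      MvPowerSeries.coeff_mul]
    rfl
  rw [h1]
  have h2 : ∀ p ∈ Finset.HasAntidiagonal.antidiagonal d, diag f p.1 * diag g p.2 =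
      X ^ (d 0 + d 1) * PowerSeries.C (R := ℚ)
        ((PowerSeries.coeff (R := ℚ) (p.1 0 + p.1 1) f * (((p.1 0 + p.1 1).choose (p.1 0) : ℕ) : ℚ)) *
         (PowerSeries.coeff (R := ℚ) (p.2 0 + p.2 1) g * (((p.2 0 + p.2 1).choose (p.2 0) : ℕ) : ℚ))) := by
    intro p hp
    rw [Finset.HasAntidiagonal.mem_antidiagonal] at hp
    have hs : p.1 0 + p.1 1 + (p.2 0 + p.2 1) = d 0 + d 1 := by
      have e0 : p.1 0 + p.2 0 = d 0 := by rw [← Finsupp.add_apply, hp]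
      have e1 : p.1 1 + p.2 1 = d 1 := by rw [← Finsupp.add_apply, hp]
      omega
    simp only [diag]
    rw [← hs, pow_add]
    simp only [map_mul]
    ring
  rw [Finset.sum_congr rfl h2, ← Finset.mul_sum, ← map_sum,
    key2 (fun k => PowerSeries.coeff (R := ℚ) k f) (fun k => PowerSeries.coeff (R := ℚ) k g) d]
  simp only [diag]
  rw [PowerSeries.coeff_mul]


lemma shZ2_eq : shZ2 = diag shQ := by
  funext d
  exact sum_even_eq_diag (fun k => (((2 : ℕ) ^ k * Nat.factorial (k + 1) : ℕ) : ℚ)⁻¹) d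

lemma chZ2_eq : chZ2 = diag chQ := by
  funext d
  exact sum_even_eq_diag (fun k => (((2 : ℕ) ^ k * Nat.factorial k : ℕ) : ℚ)⁻¹) d

def qW : MvPowerSeries (Fin 2) Rε := diag Bev

lemma hqW : shZ2 * qW = chZ2 := by
  rw [shZ2_eq, chZ2_eq, qW, diag_mul, I2]

lemma shZ2_ne : shZ2 ≠ 0 := by
  rw [shZ2_eq]
  intro h
  have h0 : diag shQ 0 = 0 := by rw [h]; rfl
  rw [diag] at h0
  simp [shQ] at h0

lemma W_unique (W : MvPowerSeries (Fin 2) Rε) (hW : shZ2 * W = chZ2) : W = qW :=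
  mul_left_cancel₀ shZ2_ne (by rw [hW, hqW])


-- Part 4
lemma coeff_one2 (d : Fin 2 →₀ ℕ) : (1 : MvPowerSeries (Fin 2) Rε) d = if d = 0 then 1 else 0 := by
  rw [show (1 : MvPowerSeries (Fin 2) Rε) d = MvPowerSeries.coeff (R := Rε) d 1 from rfl,
    MvPowerSeries.coeff_one]

lemma coeff_Xpow (i : Fin 2) (m : ℕ) (d : Fin 2 →₀ ℕ) :
    MvPowerSeries.coeff (R := Rε) d ((MvPowerSeries.X i : MvPowerSeries (Fin 2) Rε) ^ m) =
      if d = Finsupp.single i m then 1 else 0 := by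
  rw [MvPowerSeries.X_pow_eq, MvPowerSeries.coeff_monomial]

lemma pderiv2_ext (F G : MvPowerSeries (Fin 2) Rε)
    (h : ∀ i, pderiv2 i F = pderiv2 i G) (h0 : F 0 = G 0) : F = G := by
  funext d
  by_cases hd : d = 0
  · rw [hd]; exact h0
  have key : ∀ i : Fin 2, d i ≠ 0 → F d = G d := by
    intro i hi
    set d' := d - Finsupp.single i 1 with hd'
    have hadd : d' + Finsupp.single i 1 = d := by
      ext j
      rw [Finsupp.add_apply, hd', Finsupp.tsub_apply]
      rcases eq_or_ne j i with rfl | hne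
      · rw [Finsupp.single_apply, if_pos rfl]
        omega
      · rw [Finsupp.single_apply, if_neg (by exact fun hh => hne hh.symm)]
        omega
    have hFG := congrFun (h i) d'
    simp only [pderiv2, hadd] at hFG
    exact mul_left_cancel₀ (by
      have : ((d' i : Rε) + 1) ≠ 0 := Nat.cast_add_one_ne_zero (d' i)
      push_cast
      exact this) hFG
  have : d 0 ≠ 0 ∨ d 1 ≠ 0 := by
    by_contra hc
    push_neg at hc
    exact hd (fin2_ext (by simpa using hc.1) (by simpa using hc.2))
  rcases this with h' | h'
  · exact key 0 h'
  · exact key 1 h'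

lemma Cmul (q : ℚ) (f : Rε) : PowerSeries.C (R := ℚ) q * f = q • f := (smul_eq_C_mul f q).symm

lemma mulC (f : Rε) (q : ℚ) : f * PowerSeries.C (R := ℚ) q = q • f := by
  rw [mul_comm]; exact Cmul q f

lemma natmul (m : ℕ) (f : Rε) : ((m : ℕ) : Rε) * f = (m : ℚ) • f := by
  rw [← map_natCast (PowerSeries.C (R := ℚ)) m, Cmul]

def Tk (k : ℕ) : MvPowerSeries (Fin 2) Rε :=
  -(MvPowerSeries.C (σ := Fin 2) (R := Rε)
        ((PowerSeries.X : Rε) ^ k * PowerSeries.C (R := ℚ) (bernoulli k / (Nat.factorial k : ℚ)))) *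
    (Z2 ^ (k + 1) * MvPowerSeries.C (σ := Fin 2) (R := Rε) (PowerSeries.C (R := ℚ) (((k : ℚ) + 1)⁻¹)) +
      (MvPowerSeries.X 0 ^ (k + 1) + MvPowerSeries.X 1 ^ (k + 1)) *
        MvPowerSeries.C (σ := Fin 2) (R := Rε) (PowerSeries.C (R := ℚ) (((k : ℚ) * ((k : ℚ) + 1))⁻¹)))

lemma f1_apply (d : Fin 2 →₀ ℕ) :
    f1TwoPoint d = ∑ k ∈ Finset.Icc 2 (d 0 + d 1), MvPowerSeries.coeff (R := Rε) d (Tk k) := rfl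

lemma coeff_Tk (k : ℕ) (e : Fin 2 →₀ ℕ) :
    MvPowerSeries.coeff (R := Rε) e (Tk k) =
      -((if e 0 + e 1 = k + 1 then (((k + 1).choose (e 0) : ℕ) : Rε) else 0) *
          (X ^ k * PowerSeries.C (R := ℚ) (bernoulli k / (k ! : ℚ) * ((k : ℚ) + 1)⁻¹)) +
        ((if e = Finsupp.single 0 (k + 1) then (1 : Rε) else 0) +
            (if e = Finsupp.single 1 (k + 1) then (1 : Rε) else 0)) *
          (X ^ k * PowerSeries.C (R := ℚ) (bernoulli k / (k ! : ℚ) * ((k : ℚ) * ((k : ℚ) + 1))⁻¹))) := by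
  have expand : Tk k =
      -(Z2 ^ (k + 1) * MvPowerSeries.C (σ := Fin 2) (R := Rε)
          (X ^ k * PowerSeries.C (R := ℚ) (bernoulli k / (k ! : ℚ) * ((k : ℚ) + 1)⁻¹)) +
        (MvPowerSeries.X 0 ^ (k + 1) * MvPowerSeries.C (σ := Fin 2) (R := Rε)
          (X ^ k * PowerSeries.C (R := ℚ) (bernoulli k / (k ! : ℚ) * ((k : ℚ) * ((k : ℚ) + 1))⁻¹)) +
         MvPowerSeries.X 1 ^ (k + 1) * MvPowerSeries.C (σ := Fin 2) (R := Rε)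
          (X ^ k * PowerSeries.C (R := ℚ) (bernoulli k / (k ! : ℚ) * ((k : ℚ) * ((k : ℚ) + 1))⁻¹)))) := by
    rw [Tk]
    simp only [map_mul]
    ring
  rw [expand, map_neg, map_add, map_add, MvPowerSeries.coeff_mul_C, MvPowerSeries.coeff_mul_C,
    MvPowerSeries.coeff_mul_C, coeff_Z2_pow, coeff_Xpow, coeff_Xpow]
  ring

lemma sum_single (i : Fin 2) (m : ℕ) :
    (Finsupp.single i m) 0 + (Finsupp.single i m) 1 = m := by
  fin_cases i <;> simp [Finsupp.single_apply]

lemma coeff_Tk_zero (k : ℕ) (e : Fin 2 →₀ ℕ) (hne : e 0 + e 1 ≠ k + 1) :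
    MvPowerSeries.coeff (R := Rε) e (Tk k) = 0 := by
  rw [coeff_Tk, if_neg hne,
    if_neg (fun h => hne (by rw [h, sum_single])),
    if_neg (fun h => hne (by rw [h, sum_single]))]
  simp

lemma f1_small (e : Fin 2 →₀ ℕ) (h : e 0 + e 1 ≤ 2) : f1TwoPoint e = 0 := by
  rw [f1_apply]
  apply Finset.sum_eq_zero
  intro k hk
  rw [Finset.mem_Icc] at hk
  exact coeff_Tk_zero k e (by omega)

lemma f1_eval (e : Fin 2 →₀ ℕ) (n : ℕ) (hn : e 0 + e 1 = n + 1) (h2 : 2 ≤ n) :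
    f1TwoPoint e = MvPowerSeries.coeff (R := Rε) e (Tk n) := by
  rw [f1_apply, hn]
  rw [Finset.sum_eq_single n]
  · intro k hk hne
    rw [Finset.mem_Icc] at hk
    exact coeff_Tk_zero k e (by omega)
  · intro hmem
    exact absurd (Finset.mem_Icc.mpr ⟨h2, by omega⟩) hmem

lemma pd_f1_aux0 (d : Fin 2 →₀ ℕ) :
    ((d 0 + 1 : ℕ) : Rε) * f1TwoPoint (d + Finsupp.single 0 1) =
      (if d = Finsupp.single 0 (d 0) then PowerSeries.coeff (R := Rε) (d 0) q1 else 0) +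
        ((if d = 0 then (1 : Rε) else 0) - qW d) := by
  have he0 : ((d + Finsupp.single 0 1 : Fin 2 →₀ ℕ)) 0 = d 0 + 1 := by
    rw [Finsupp.add_apply, Finsupp.single_eq_same]
  have he1 : ((d + Finsupp.single 0 1 : Fin 2 →₀ ℕ)) 1 = d 1 := by
    rw [Finsupp.add_apply, Finsupp.single_eq_of_ne' (by decide : (0 : Fin 2) ≠ 1), add_zero]
  rw [q1, coeff_Phi]
  have hqWd : qW d = X ^ (d 0 + d 1) *
      PowerSeries.C (R := ℚ) (PowerSeries.coeff (R := ℚ) (d 0 + d 1) Bev *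
        (((d 0 + d 1).choose (d 0) : ℕ) : ℚ)) := rfl
  rw [hqWd]
  by_cases h2 : 2 ≤ d 0 + d 1
  · rw [f1_eval _ (d 0 + d 1) (by omega) h2, coeff_Tk, he0, he1,
      if_pos (by omega : d 0 + 1 + d 1 = d 0 + d 1 + 1),
      if_neg (show ¬(d + Finsupp.single 0 1) = Finsupp.single 1 (d 0 + d 1 + 1) by
        intro h
        have h0 := DFunLike.congr_fun h 0
        rw [he0, Finsupp.single_eq_of_ne' (by decide : (1 : Fin 2) ≠ 0)] at h0
        simp at h0),
      if_neg (show ¬d = 0 by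
        intro h
        rw [h] at h2
        simp at h2)]
    rw [show PowerSeries.coeff (R := ℚ) (d 0 + d 1) Bev = bernoulli (d 0 + d 1) / ((d 0 + d 1)! : ℚ)
      from by rw [Bev, coeff_mk, if_neg (by omega)]]
    by_cases hb : d 1 = 0
    · rw [if_pos (fin2_ext
          (by rw [he0, Finsupp.single_eq_same]; omega)
          (by rw [he1, Finsupp.single_eq_of_ne' (by decide : (0 : Fin 2) ≠ 1)]; omega)),
        if_pos (fin2_ext (by rw [Finsupp.single_eq_same])
          (by rw [Finsupp.single_eq_of_ne' (by decide : (0 : Fin 2) ≠ 1)]; omega))]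
      rw [show PowerSeries.coeff (R := ℚ) (d 0) gQ
          = -(bernoulli (d 0) / ((d 0 : ℚ) * ((d 0)! : ℚ)))
        from by rw [gQ, coeff_mk, if_pos (by omega)]]
      simp only [hb, add_zero, Nat.choose_self, Nat.cast_one]
      simp only [natmul, Cmul, mulC, one_mul, add_zero]
      match_scalars
      have hd0 : (2:ℚ) ≤ (d 0 : ℚ) := by exact_mod_cast (by omega : 2 ≤ d 0)
      have h1 : ((d 0 : ℚ)) ≠ 0 := by linarith
      have h3 : ((d 0 : ℚ) + 1) ≠ 0 := by linarith
      have h4 : (((d 0)! : ℚ)) ≠ 0 := by positivity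
      field_simp
      ring
    · rw [if_neg (show ¬(d + Finsupp.single 0 1) = Finsupp.single 0 (d 0 + d 1 + 1) by
          intro h
          have h1' := DFunLike.congr_fun h 1
          rw [he1, Finsupp.single_eq_of_ne' (by decide : (0 : Fin 2) ≠ 1)] at h1'
          exact hb h1'),
        if_neg (show ¬d = Finsupp.single 0 (d 0) by
          intro h
          have h1' := DFunLike.congr_fun h 1
          rw [Finsupp.single_eq_of_ne' (by decide : (0 : Fin 2) ≠ 1)] at h1'
          exact hb h1')]
      simp only [natmul, Cmul, mulC, one_mul, add_zero, zero_add, zero_mul, mul_zero, zero_sub]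
      match_scalars
      have hch : ((d 0 : ℚ) + 1) * (((d 0 + d 1 + 1).choose (d 0 + 1) : ℕ) : ℚ)
          = ((d 0 : ℚ) + (d 1 : ℚ) + 1) * (((d 0 + d 1).choose (d 0) : ℕ) : ℚ) := by
        have h : ((d 0 : ℚ) + (d 1 : ℚ) + 1) * (((d 0 + d 1).choose (d 0) : ℕ) : ℚ)
            = (((d 0 + d 1 + 1).choose (d 0 + 1) : ℕ) : ℚ) * ((d 0 : ℚ) + 1) := by
          exact_mod_cast Nat.add_one_mul_choose_eq (d 0 + d 1) (d 0)
        linear_combination -h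
      have h3 : ((d 0 : ℚ) + (d 1 : ℚ) + 1) ≠ 0 := by positivity
      have h4 : (((d 0 + d 1)! : ℚ)) ≠ 0 := by positivity
      field_simp
      first
      | linear_combination (bernoulli (d 0 + d 1)) * hch
      | linear_combination (-(bernoulli (d 0 + d 1))) * hch
      | linear_combination (bernoulli (d 0 + d 1) * (((d 0 + d 1)! : ℚ))) * hch
      | linear_combination (-(bernoulli (d 0 + d 1) * (((d 0 + d 1)! : ℚ)))) * hch
  · have hsmall : f1TwoPoint (d + Finsupp.single 0 1) = 0 :=
      f1_small _ (by omega)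
    rw [hsmall, mul_zero]
    rcases (by omega : d 0 + d 1 = 0 ∨ d 0 + d 1 = 1) with h | h
    · have hd0 : d 0 = 0 := by omega
      have hd1 : d 1 = 0 := by omega
      have hd : d = 0 := fin2_ext (by rw [hd0]; rfl) (by rw [hd1]; rfl)
      subst hd
      simp [gQ, Bev, bernoulli_zero]
    · have hBev : PowerSeries.coeff (R := ℚ) (d 0 + d 1) Bev = 0 := by
        rw [Bev, coeff_mk, if_pos h]
      rw [hBev, zero_mul, map_zero (PowerSeries.C (R := ℚ)), mul_zero,
        if_neg (show ¬d = 0 by intro hh; rw [hh] at h; simp at h)]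
      by_cases hc : d = Finsupp.single 0 (d 0)
      · rw [if_pos hc]
        have hd1 : d 1 = 0 := by
          have h1' := DFunLike.congr_fun hc 1
          rwa [Finsupp.single_eq_of_ne' (by decide : (0 : Fin 2) ≠ 1)] at h1'
        have hg : PowerSeries.coeff (R := ℚ) (d 0) gQ = 0 := by
          rw [gQ, coeff_mk, if_neg (by omega)]
        rw [hg, map_zero (PowerSeries.C (R := ℚ)), mul_zero]
        simp
      · rw [if_neg hc]
        simp

lemma pd_f1_aux1 (d : Fin 2 →₀ ℕ) :
    ((d 1 + 1 : ℕ) : Rε) * f1TwoPoint (d + Finsupp.single 1 1) =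
      (if d = Finsupp.single 1 (d 1) then PowerSeries.coeff (R := Rε) (d 1) q1 else 0) +
        ((if d = 0 then (1 : Rε) else 0) - qW d) := by
  have he0 : ((d + Finsupp.single 1 1 : Fin 2 →₀ ℕ)) 0 = d 0 := by
    rw [Finsupp.add_apply, Finsupp.single_eq_of_ne' (by decide : (1 : Fin 2) ≠ 0), add_zero]
  have he1 : ((d + Finsupp.single 1 1 : Fin 2 →₀ ℕ)) 1 = d 1 + 1 := by
    rw [Finsupp.add_apply, Finsupp.single_eq_same]
  rw [q1, coeff_Phi]
  have hqWd : qW d = X ^ (d 0 + d 1) *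
      PowerSeries.C (R := ℚ) (PowerSeries.coeff (R := ℚ) (d 0 + d 1) Bev *
        (((d 0 + d 1).choose (d 0) : ℕ) : ℚ)) := rfl
  rw [hqWd]
  by_cases h2 : 2 ≤ d 0 + d 1
  · rw [f1_eval _ (d 0 + d 1) (by omega) h2, coeff_Tk, he0, he1,
      if_pos (by omega : d 0 + (d 1 + 1) = d 0 + d 1 + 1),
      if_neg (show ¬(d + Finsupp.single 1 1) = Finsupp.single 0 (d 0 + d 1 + 1) by
        intro h
        have h1' := DFunLike.congr_fun h 1
        rw [he1, Finsupp.single_eq_of_ne' (by decide : (0 : Fin 2) ≠ 1)] at h1'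
        simp at h1'),
      if_neg (show ¬d = 0 by
        intro h
        rw [h] at h2
        simp at h2)]
    rw [show PowerSeries.coeff (R := ℚ) (d 0 + d 1) Bev = bernoulli (d 0 + d 1) / ((d 0 + d 1)! : ℚ)
      from by rw [Bev, coeff_mk, if_neg (by omega)]]
    by_cases hb : d 0 = 0
    · rw [if_pos (fin2_ext
          (by rw [he0, Finsupp.single_eq_of_ne' (by decide : (1 : Fin 2) ≠ 0)]; omega)
          (by rw [he1, Finsupp.single_eq_same]; omega)),
        if_pos (fin2_ext (by rw [Finsupp.single_eq_of_ne' (by decide : (1 : Fin 2) ≠ 0)]; omega)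
          (by rw [Finsupp.single_eq_same]))]
      rw [show PowerSeries.coeff (R := ℚ) (d 1) gQ
          = -(bernoulli (d 1) / ((d 1 : ℚ) * ((d 1)! : ℚ)))
        from by rw [gQ, coeff_mk, if_pos (by omega)]]
      simp only [hb, zero_add, Nat.choose_zero_right, Nat.cast_one]
      simp only [natmul, Cmul, mulC, one_mul, zero_add]
      match_scalars
      have hd1 : (2:ℚ) ≤ (d 1 : ℚ) := by exact_mod_cast (by omega : 2 ≤ d 1)
      have h1 : ((d 1 : ℚ)) ≠ 0 := by linarith
      have h3 : ((d 1 : ℚ) + 1) ≠ 0 := by linarith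
      have h4 : (((d 1)! : ℚ)) ≠ 0 := by positivity
      field_simp
      ring
    · rw [if_neg (show ¬(d + Finsupp.single 1 1) = Finsupp.single 1 (d 0 + d 1 + 1) by
          intro h
          have h0' := DFunLike.congr_fun h 0
          rw [he0, Finsupp.single_eq_of_ne' (by decide : (1 : Fin 2) ≠ 0)] at h0'
          exact hb h0'),
        if_neg (show ¬d = Finsupp.single 1 (d 1) by
          intro h
          have h0' := DFunLike.congr_fun h 0
          rw [Finsupp.single_eq_of_ne' (by decide : (1 : Fin 2) ≠ 0)] at h0'
          exact hb h0')]
      simp only [natmul, Cmul, mulC, one_mul, add_zero, zero_add, zero_mul, mul_zero, zero_sub]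
      match_scalars
      have hch : (((d 0 + d 1).choose (d 0) : ℕ) : ℚ) * ((d 0 : ℚ) + (d 1 : ℚ) + 1)
          = (((d 0 + d 1 + 1).choose (d 0) : ℕ) : ℚ) * ((d 1 : ℚ) + 1) := by
        have h := Nat.choose_mul_succ_eq (d 0 + d 1) (d 0)
        rw [show d 0 + d 1 + 1 - d 0 = d 1 + 1 from by omega] at h
        exact_mod_cast h
      have h3 : ((d 0 : ℚ) + (d 1 : ℚ) + 1) ≠ 0 := by positivity
      have h4 : (((d 0 + d 1)! : ℚ)) ≠ 0 := by positivity
      field_simp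
      first
      | linear_combination (bernoulli (d 0 + d 1)) * hch
      | linear_combination (-(bernoulli (d 0 + d 1))) * hch
      | linear_combination (bernoulli (d 0 + d 1) * (((d 0 + d 1)! : ℚ))) * hch
      | linear_combination (-(bernoulli (d 0 + d 1) * (((d 0 + d 1)! : ℚ)))) * hch
  · have hsmall : f1TwoPoint (d + Finsupp.single 1 1) = 0 :=
      f1_small _ (by omega)
    rw [hsmall, mul_zero]
    rcases (by omega : d 0 + d 1 = 0 ∨ d 0 + d 1 = 1) with h | h
    · have hd0 : d 0 = 0 := by omega
      have hd1 : d 1 = 0 := by omega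
      have hd : d = 0 := fin2_ext (by rw [hd0]; rfl) (by rw [hd1]; rfl)
      subst hd
      simp [gQ, Bev, bernoulli_zero]
    · have hBev : PowerSeries.coeff (R := ℚ) (d 0 + d 1) Bev = 0 := by
        rw [Bev, coeff_mk, if_pos h]
      rw [hBev, zero_mul, map_zero (PowerSeries.C (R := ℚ)), mul_zero,
        if_neg (show ¬d = 0 by intro hh; rw [hh] at h; simp at h)]
      by_cases hc : d = Finsupp.single 1 (d 1)
      · rw [if_pos hc]
        have hd0 : d 0 = 0 := by
          have h0' := DFunLike.congr_fun hc 0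
          rwa [Finsupp.single_eq_of_ne' (by decide : (1 : Fin 2) ≠ 0)] at h0'
        have hg : PowerSeries.coeff (R := ℚ) (d 1) gQ = 0 := by
          rw [gQ, coeff_mk, if_neg (by omega)]
        rw [hg, map_zero (PowerSeries.C (R := ℚ)), mul_zero]
        simp
      · rw [if_neg hc]
        simp

lemma pd_f1 (i : Fin 2) : pderiv2 i f1TwoPoint = emb2 i q1 + (1 - qW) := by
  funext d
  have hR : (emb2 i q1 + (1 - qW)) d
      = (if d = Finsupp.single i (d i) then PowerSeries.coeff (R := Rε) (d i) q1 else 0)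
        + ((if d = 0 then (1 : Rε) else 0) - qW d) := by
    show emb2 i q1 d + ((1 : MvPowerSeries (Fin 2) Rε) d - qW d) = _
    rw [coeff_one2]
    rfl
  rw [show pderiv2 i f1TwoPoint d
      = ((d i + 1 : ℕ) : Rε) * f1TwoPoint (d + Finsupp.single i 1) from rfl, hR]
  fin_cases i
  · exact pd_f1_aux0 d
  · exact pd_f1_aux1 d

end GOP

/-- Computation of `f_1[z_1,z_2]` from the recursion of Theorem 4.1 of
Getzler–Okounkov–Pandharipande.  Suppose `p1(z) = log((εz/2)/sinh(εz/2))`, characterized as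
the series with zero constant term satisfying `Sh·p1' = -Sh'` for `Sh = sinh(εz/2)/(εz/2)`;
let `W = (εZ/2)/tanh(εZ/2)`, characterized by `sinh(εZ/2)/(εZ/2) · W = cosh(εZ/2)`; and
suppose `p2` satisfies `p2(0,0) = 0` and the `n = 2` differential recursion
`∂p2/∂z_i = p1(z_i) + Z⁰(1 - (εZ/2)/tanh(εZ/2))` for `i = 1, 2` (the sum over `I ∋ i`,
`I ≠ {1,2}` has the single term `I = {i}`, contributing `(Z-Z_I)⁰ p1(z_i)`).  Then
`p2 = -∑_{k≥2} (ε^k B_k/k!)((z_1+z_2)^{k+1}/(k+1) + (z_1^{k+1}+z_2^{k+1})/(k(k+1)))`. -/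
theorem f1_two_point (p1 : PowerSeries Rε) (p2 W : MvPowerSeries (Fin 2) Rε)
    (hp10 : PowerSeries.constantCoeff (R := Rε) p1 = 0)
    (hp1 : shEps * (d⁄dX Rε) p1 = -(d⁄dX Rε) shEps)
    (hW : shZ2 * W = chZ2)
    (hrec : ∀ i : Fin 2, pderiv2 i p2 = emb2 i p1 + (1 - W))
    (h0 : MvPowerSeries.constantCoeff (σ := Fin 2) (R := Rε) p2 = 0) :
    p2 = f1TwoPoint := by
  have hW' : W = GOP.qW := GOP.W_unique W hW
  have hp1' : p1 = GOP.q1 := GOP.p1_unique p1 hp10 hp1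
  apply GOP.pderiv2_ext
  · intro i
    rw [hrec i, hp1', hW', GOP.pd_f1 i]
  · have h1 : p2 0 = 0 := h0
    rw [h1, GOP.f1_small 0 (by simp)]

end
end
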